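/- arXiv:1610.09065 — 5 statements merged into one kernel-verified Lean document; each statement's English description precedes it below -/
import Mathlib

section
/- Let d ≥ 3 and let f(x,y) = ℓ_0(x,y)^{d−2} ℓ_1(x,y) ℓ_2(x,y), where ℓ_0, ℓ_1, ℓ_2 are pairwise nonproportional linear forms over ℂ. Then L_ℂ(f) = d − 1. -/
open MvPolynomial Finset

/-- The linear form `a*x + b*y` as a binary polynomial over `ℂ`. -/
noncomputable def lform (a b : ℂ) : MvPolynomial (Fin 2) ℂ := C a * X 0 + C b * X 1

/-- The `K`-rank of a binary form `p`: the least `r` such that `p` is a `K`-linear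
combination of `r` d-th powers of linear forms with coefficients in `K`. -/
noncomputable def rankIn (K : Subfield ℂ) (d : ℕ) (p : MvPolynomial (Fin 2) ℂ) : ℕ :=
  sInf {r : ℕ | ∃ lam a b : Fin r → ℂ, (∀ j, lam j ∈ K ∧ a j ∈ K ∧ b j ∈ K) ∧
    p = ∑ j, C (lam j) * lform (a j) (b j) ^ d}

/-- The Waring rank `L_ℂ` of a binary form. -/
noncomputable def rankC (d : ℕ) (p : MvPolynomial (Fin 2) ℂ) : ℕ :=
  sInf {r : ℕ | ∃ lam a b : Fin r → ℂ, p = ∑ j, C (lam j) * lform (a j) (b j) ^ d}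

/-- Single partial derivative as a plain function. -/
noncomputable def pd (i : Fin 2) (p : MvPolynomial (Fin 2) ℂ) : MvPolynomial (Fin 2) ℂ :=
  pderiv i p

/-- `apolar h p = h(D) p`, the differential operator of `h` applied to `p`. -/
noncomputable def apolar (h p : MvPolynomial (Fin 2) ℂ) : MvPolynomial (Fin 2) ℂ :=
  ∑ m ∈ h.support, h.coeff m • ((pd 0)^[m 0] ((pd 1)^[m 1] p))

/-- The subfield of `ℂ` generated by a subfield `K` and a set `S`. -/
noncomputable def adj (K : Subfield ℂ) (S : Set ℂ) : Subfield ℂ := Subfield.closure (↑K ∪ S)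

/-- `z` and `w` are conjugate over `K` in `K(s)`: `z = a + b s`, `w = a - b s` with `a, b ∈ K`. -/
def conjPair (K : Subfield ℂ) (s z w : ℂ) : Prop :=
  ∃ a b : ℂ, a ∈ K ∧ b ∈ K ∧ z = a + b * s ∧ w = a - b * s

noncomputable def lformR (a b : ℝ) : MvPolynomial (Fin 2) ℝ := C a * X 0 + C b * X 1

noncomputable def rankR (d : ℕ) (p : MvPolynomial (Fin 2) ℝ) : ℕ :=
  sInf {r : ℕ | ∃ lam a b : Fin r → ℝ, p = ∑ j, C (lam j) * lformR (a j) (b j) ^ d}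

namespace RankAux

noncomputable def Dd (α β : ℂ) (p : MvPolynomial (Fin 2) ℂ) : MvPolynomial (Fin 2) ℂ :=
  C β * pderiv 0 p - C α * pderiv 1 p

lemma Dd_add (α β : ℂ) (p q : MvPolynomial (Fin 2) ℂ) :
    Dd α β (p + q) = Dd α β p + Dd α β q := by
  simp [Dd]; ring

lemma Dd_sum {ι : Type*} (α β : ℂ) (s : Finset ι) (f : ι → MvPolynomial (Fin 2) ℂ) :
    Dd α β (∑ i ∈ s, f i) = ∑ i ∈ s, Dd α β (f i) := by
  classical
  induction s using Finset.induction with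
  | empty => simp [Dd]
  | insert _ _ h ih => simp [Finset.sum_insert h, Dd_add, ih]

lemma Dd_C_mul (α β c : ℂ) (p : MvPolynomial (Fin 2) ℂ) :
    Dd α β (C c * p) = C c * Dd α β p := by
  simp [Dd, pderiv_C_mul]; ring

lemma Dd_lform (α β α' β' : ℂ) :
    Dd α β (lform α' β') = C (β * α' - α * β') := by
  simp [Dd, lform, pderiv_X, Pi.single_apply]

lemma Dd_mul (α β : ℂ) (p q : MvPolynomial (Fin 2) ℂ) :
    Dd α β (p * q) = Dd α β p * q + p * Dd α β q := by
  simp [Dd, pderiv_mul]; ring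

lemma Dd_pow (α β : ℂ) (p : MvPolynomial (Fin 2) ℂ) (n : ℕ) :
    Dd α β (p ^ (n+1)) = C ((n:ℂ)+1) * p ^ n * Dd α β p := by
  induction n with
  | zero => simp [Dd_mul, Dd]
  | succ n ih =>
    rw [pow_succ, Dd_mul, ih]
    push_cast
    simp only [map_add, map_one, map_ofNat]
    ring

lemma Dd_lform_pow (α β α' β' : ℂ) (n : ℕ) :
    Dd α β (lform α' β' ^ (n+1)) = C (((n:ℂ)+1) * (β * α' - α * β')) * lform α' β' ^ n := by
  rw [Dd_pow, Dd_lform, map_mul]; ring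

lemma lform_ne_zero {α β : ℂ} (h : ¬(α = 0 ∧ β = 0)) : lform α β ≠ 0 := by
  intro h0
  have h1 := congrArg (MvPolynomial.eval ![(1:ℂ), 0]) h0
  have h2 := congrArg (MvPolynomial.eval ![(0:ℂ), 1]) h0
  simp [lform] at h1 h2
  exact h ⟨h1, h2⟩

lemma lform_inj {α β α' β' : ℂ} (h : lform α β = lform α' β') : α = α' ∧ β = β' := by
  have h1 := congrArg (MvPolynomial.eval ![(1:ℂ), 0]) h
  have h2 := congrArg (MvPolynomial.eval ![(0:ℂ), 1]) h
  simp [lform] at h1 h2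
  exact ⟨h1, h2⟩

lemma indep : ∀ (n : ℕ) (s : Finset (ℂ × ℂ)) (μ : ℂ × ℂ → ℂ),
    s.card ≤ n + 1 →
    (∀ p ∈ s, ¬(p.1 = 0 ∧ p.2 = 0)) →
    (∀ p ∈ s, ∀ q ∈ s, p ≠ q → p.1 * q.2 - q.1 * p.2 ≠ 0) →
    (∑ p ∈ s, C (μ p) * lform p.1 p.2 ^ n) = 0 →
    ∀ p ∈ s, μ p = 0 := by
  intro n
  induction n with
  | zero =>
    intro s μ hcard hnz hpair hsum p hp
    have hs : s = {p} := Finset.eq_singleton_iff_unique_mem.2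
      ⟨hp, fun q hq => Finset.card_le_one.1 hcard q hq p hp⟩
    rw [hs] at hsum
    simpa using hsum
  | succ n ih =>
    intro s μ hcard hnz hpair hsum p hp
    by_cases hc1 : s.card ≤ 1
    · have hs : s = {p} := Finset.eq_singleton_iff_unique_mem.2
        ⟨hp, fun q hq => Finset.card_le_one.1 hc1 q hq p hp⟩
      rw [hs] at hsum
      simp only [Finset.sum_singleton] at hsum
      rcases mul_eq_zero.1 hsum with h | h
      · exact (C_eq_zero).1 h
      · exact absurd (pow_eq_zero_iff (by omega)|>.1 h) (lform_ne_zero (hnz p hp))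
    · classical
      have hD := congrArg (Dd p.1 p.2) hsum
      rw [Dd_sum] at hD
      simp only [Dd_C_mul, Dd_lform_pow] at hD
      have hD0 : Dd p.1 p.2 (0 : MvPolynomial (Fin 2) ℂ) = 0 := by simp [Dd]
      rw [hD0] at hD
      set ν : ℂ × ℂ → ℂ := fun q => μ q * (((n:ℂ)+1) * (p.2 * q.1 - p.1 * q.2)) with hν
      have hps : ∑ q ∈ s, C (μ q) * (C (((n:ℂ)+1) * (p.2 * q.1 - p.1 * q.2)) * lform q.1 q.2 ^ n)
          = ∑ q ∈ s.erase p, C (ν q) * lform q.1 q.2 ^ n := by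
        have hz : C (ν p) * lform p.1 p.2 ^ n = 0 := by
          have : ν p = 0 := by rw [hν]; ring
          rw [this]; simp
        rw [Finset.sum_erase (f := fun q => C (ν q) * lform q.1 q.2 ^ n) _ hz]
        apply Finset.sum_congr rfl
        intro q hq
        rw [hν]
        simp only [map_mul, map_add, map_sub, map_one]
        ring
      rw [hps] at hD
      -- coefficients on erase vanish
      have herase : ∀ q ∈ s.erase p, ν q = 0 := by
        apply ih (s.erase p) ν
        · have := Finset.card_erase_of_mem hp; omega
        · exact fun q hq => hnz q (Finset.mem_of_mem_erase hq)
        · exact fun q hq r hr hne => hpair q (Finset.mem_of_mem_erase hq) r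
            (Finset.mem_of_mem_erase hr) hne
        · exact hD
      have hμq : ∀ q ∈ s.erase p, μ q = 0 := by
        intro q hq
        have h0 := herase q hq
        rw [hν] at h0
        rcases mul_eq_zero.1 h0 with h | h
        · exact h
        · exfalso
          rcases mul_eq_zero.1 h with h | h
          · exact Nat.cast_add_one_ne_zero n h
          · have hne : p ≠ q := fun he => (Finset.mem_erase.1 hq).1 he.symm
            have := hpair q (Finset.mem_of_mem_erase hq) p hp
              (fun he => hne he.symm)
            exact this (by linear_combination h)
      -- now the original sum collapses
      have : ∑ q ∈ s, C (μ q) * lform q.1 q.2 ^ (n+1)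
          = C (μ p) * lform p.1 p.2 ^ (n+1) := by
        rw [← Finset.add_sum_erase _ _ hp]
        rw [Finset.sum_eq_zero, add_zero]
        intro q hq
        rw [hμq q hq]; simp
      rw [this] at hsum
      rcases mul_eq_zero.1 hsum with h | h
      · exact (C_eq_zero).1 h
      · exact absurd (pow_eq_zero_iff (by omega)|>.1 h) (lform_ne_zero (hnz p hp))

lemma Dd3_pow (α β α' β' : ℂ) (m : ℕ) :
    Dd α β (Dd α β (Dd α β (lform α' β' ^ (m+3)))) =
      C (((m:ℂ)+1)*((m:ℂ)+2)*((m:ℂ)+3) * (β * α' - α * β')^3) * lform α' β' ^ m := by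
  rw [show m+3 = m+2+1 from rfl, Dd_lform_pow, Dd_C_mul,
    show m+2 = m+1+1 from rfl, Dd_lform_pow, Dd_C_mul, Dd_C_mul, Dd_lform_pow]
  push_cast
  simp only [map_mul, map_add, map_one, map_sub, map_pow, map_ofNat]
  ring

lemma Dd_lform_self (α β : ℂ) : Dd α β (lform α β) = 0 := by
  rw [Dd_lform]
  have : β * α - α * β = 0 := by ring
  rw [this, map_zero]

lemma Dd_upow (α β : ℂ) (k : ℕ) : Dd α β (lform α β ^ (k+1)) = 0 := by
  rw [Dd_pow, Dd_lform_self, mul_zero]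

/-- scaling of lform -/
lemma lform_scale {e : ℂ} (he : e ≠ 0) (α β : ℂ) :
    lform α β = C e * lform (α / e) (β / e) := by
  unfold lform
  rw [mul_add, ← mul_assoc, ← mul_assoc, ← map_mul, ← map_mul,
    mul_div_cancel₀ _ he, mul_div_cancel₀ _ he]

lemma lower_bound (m r : ℕ) (a b : Fin 3 → ℂ)
    (hdist : ∀ i j, i ≠ j → a i * b j - a j * b i ≠ 0)
    (lam α β : Fin r → ℂ) (hr : r ≤ m + 1)
    (heq : lform (a 0) (b 0) ^ (m+1) * lform (a 1) (b 1) * lform (a 2) (b 2)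
        = ∑ j, C (lam j) * lform (α j) (β j) ^ (m+3)) : False := by
  classical
  set u := lform (a 0) (b 0) with hu
  set l1 := lform (a 1) (b 1) with hl1
  set l2 := lform (a 2) (b 2) with hl2
  -- nonzero lines
  have h01 := hdist 0 1 (by decide)
  have h02 := hdist 0 2 (by decide)
  have h12 := hdist 1 2 (by decide)
  have hab0 : ¬(a 0 = 0 ∧ b 0 = 0) := by
    rintro ⟨h1, h2⟩; apply h01; rw [h1, h2]; ring
  have hab1 : ¬(a 1 = 0 ∧ b 1 = 0) := by
    rintro ⟨h1, h2⟩; apply h12; rw [h1, h2]; ring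
  have hab2 : ¬(a 2 = 0 ∧ b 2 = 0) := by
    rintro ⟨h1, h2⟩; apply h02; rw [h1, h2]; ring
  -- apply Dd (a 0) (b 0) three times to the LHS
  have hL1 : Dd (a 0) (b 0) (u ^ (m+1) * l1 * l2)
      = u^(m+1) * (C (b 0 * a 1 - a 0 * b 1) * l2 + C (b 0 * a 2 - a 0 * b 2) * l1) := by
    rw [Dd_mul, Dd_mul, Dd_upow, hl1, hl2, Dd_lform, Dd_lform]
    ring
  have hL2 : Dd (a 0) (b 0) (u^(m+1) * (C (b 0 * a 1 - a 0 * b 1) * l2 + C (b 0 * a 2 - a 0 * b 2) * l1))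
      = C (2 * ((b 0 * a 1 - a 0 * b 1) * (b 0 * a 2 - a 0 * b 2))) * u^(m+1) := by
    rw [Dd_mul, Dd_upow, Dd_add, Dd_C_mul, Dd_C_mul, hl1, hl2, Dd_lform, Dd_lform]
    simp only [map_mul, map_ofNat]
    ring
  have hL3 : Dd (a 0) (b 0) (C (2 * ((b 0 * a 1 - a 0 * b 1) * (b 0 * a 2 - a 0 * b 2))) * u^(m+1))
      = 0 := by
    rw [Dd_C_mul, Dd_upow, mul_zero]
  -- the e and μ data
  set K : ℂ := ((m:ℂ)+1)*((m:ℂ)+2)*((m:ℂ)+3) with hK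
  have hKne : K ≠ 0 := by
    have h1 : ((m:ℂ)+1) ≠ 0 := Nat.cast_add_one_ne_zero m
    have h2 : ((m:ℂ)+2) ≠ 0 := by
      intro h; apply Nat.cast_add_one_ne_zero (R := ℂ) (m+1); push_cast; linear_combination h
    have h3 : ((m:ℂ)+3) ≠ 0 := by
      intro h; apply Nat.cast_add_one_ne_zero (R := ℂ) (m+2); push_cast; linear_combination h
    exact mul_ne_zero (mul_ne_zero h1 h2) h3
  set e : Fin r → ℂ := fun j => b 0 * α j - a 0 * β j with he
  set μ : Fin r → ℂ := fun j => lam j * (K * (e j)^3) with hμ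
  -- apply Dd three times to the RHS
  have hR : Dd (a 0) (b 0) (Dd (a 0) (b 0) (Dd (a 0) (b 0)
      (∑ j, C (lam j) * lform (α j) (β j) ^ (m+3))))
      = ∑ j, C (μ j) * lform (α j) (β j) ^ m := by
    rw [Dd_sum, Dd_sum, Dd_sum]
    apply Finset.sum_congr rfl
    intro j _
    rw [Dd_C_mul, Dd_C_mul, Dd_C_mul, Dd3_pow, ← mul_assoc, ← map_mul]
  have hmain : (∑ j, C (μ j) * lform (α j) (β j) ^ m) = 0 := by
    rw [← hR, ← heq, hL1, hL2, hL3]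
  set T : Finset (Fin r) := univ.filter (fun j => e j ≠ 0) with hT
  set g : Fin r → ℂ × ℂ := fun j => (α j / e j, β j / e j) with hg
  have hlf : ∀ j ∈ T, lform (α j) (β j) = C (e j) * lform (g j).1 (g j).2 := by
    intro j hj
    exact lform_scale (Finset.mem_filter.1 hj).2 _ _
  have hnorm : ∀ j ∈ T, b 0 * (g j).1 - a 0 * (g j).2 = 1 := by
    intro j hj
    have hej := (Finset.mem_filter.1 hj).2
    rw [hg]
    field_simp
    rfl
  have hTsum : ∑ j ∈ T, C (μ j) * lform (α j) (β j) ^ m = 0 := by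
    rw [← hmain]
    apply Finset.sum_subset (Finset.subset_univ T)
    intro j _ hj
    have hej : e j = 0 := by
      by_contra hne
      exact hj (Finset.mem_filter.2 ⟨Finset.mem_univ j, hne⟩)
    have : μ j = 0 := by rw [hμ]; simp only; rw [hej]; ring
    rw [this]; simp
  set S : Finset (ℂ × ℂ) := T.image g with hS
  set ν : ℂ × ℂ → ℂ := fun p => ∑ j ∈ T.filter (fun j => g j = p), μ j * (e j)^m with hν
  have hfib : ∑ p ∈ S, C (ν p) * lform p.1 p.2 ^ m = 0 := by
    rw [← hTsum, ← Finset.sum_fiberwise_of_maps_to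
      (fun j hj => Finset.mem_image_of_mem g hj)
      (fun j => C (μ j) * lform (α j) (β j) ^ m)]
    apply Finset.sum_congr rfl
    intro p hp
    rw [hν]; simp only
    rw [map_sum, Finset.sum_mul]
    apply Finset.sum_congr rfl
    intro j hj
    have hjT : j ∈ T := Finset.mem_of_mem_filter j hj
    have hgj : g j = p := (Finset.mem_filter.1 hj).2
    rw [← hgj, hlf j hjT, mul_pow, ← map_pow, map_mul]
    ring
  have hnz : ∀ p ∈ S, ¬(p.1 = 0 ∧ p.2 = 0) := by
    rintro p hp ⟨h1, h2⟩
    obtain ⟨j, hj, hgj⟩ := Finset.mem_image.1 hp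
    have := hnorm j hj
    rw [hgj, h1, h2] at this
    simp at this
  have hpairS : ∀ p ∈ S, ∀ q ∈ S, p ≠ q → p.1 * q.2 - q.1 * p.2 ≠ 0 := by
    intro p hp q hq hne hcross
    obtain ⟨j, hj, hgj⟩ := Finset.mem_image.1 hp
    obtain ⟨k, hk, hgk⟩ := Finset.mem_image.1 hq
    have hp1 := hnorm j hj; rw [hgj] at hp1
    have hq1 := hnorm k hk; rw [hgk] at hq1
    apply hne
    have e1 : p.1 = q.1 := by linear_combination q.1 * hp1 - p.1 * hq1 - a 0 * hcross
    have e2 : p.2 = q.2 := by linear_combination q.2 * hp1 - p.2 * hq1 - b 0 * hcross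
    exact Prod.ext e1 e2
  have hνzero : ∀ p ∈ S, ν p = 0 := by
    apply indep m S ν _ hnz hpairS hfib
    calc S.card ≤ T.card := Finset.card_image_le
      _ ≤ (univ : Finset (Fin r)).card := by rw [hT]; exact Finset.card_filter_le _ _
      _ = r := by simp
      _ ≤ m + 1 := hr
  have hν' : ∀ p ∈ S, (∑ j ∈ T.filter (fun j => g j = p), lam j * (e j)^(m+3)) = 0 := by
    intro p hp
    have h0 := hνzero p hp
    rw [hν] at h0; simp only at h0
    have h1 : K * (∑ j ∈ T.filter (fun j => g j = p), lam j * (e j)^(m+3))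
        = ∑ j ∈ T.filter (fun j => g j = p), μ j * (e j)^m := by
      rw [Finset.mul_sum]
      apply Finset.sum_congr rfl
      intro j hj
      rw [hμ]; simp only; ring
    rw [h0] at h1
    exact (mul_eq_zero.1 h1).resolve_left hKne
  have hTf : ∑ j ∈ T, C (lam j) * lform (α j) (β j) ^ (m+3) = 0 := by
    rw [← Finset.sum_fiberwise_of_maps_to
      (fun j hj => Finset.mem_image_of_mem g hj)
      (fun j => C (lam j) * lform (α j) (β j) ^ (m+3))]
    apply Finset.sum_eq_zero
    intro p hp
    have : ∑ j ∈ T.filter (fun j => g j = p), C (lam j) * lform (α j) (β j) ^ (m+3)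
        = C (∑ j ∈ T.filter (fun j => g j = p), lam j * (e j)^(m+3)) * lform p.1 p.2 ^ (m+3) := by
      rw [map_sum, Finset.sum_mul]
      apply Finset.sum_congr rfl
      intro j hj
      have hjT : j ∈ T := Finset.mem_of_mem_filter j hj
      have hgj : g j = p := (Finset.mem_filter.1 hj).2
      rw [← hgj, hlf j hjT, mul_pow, ← map_pow, map_mul]
      ring
    rw [this, hν' p hp, map_zero, zero_mul]
  -- the complement : lines proportional to u
  set t : Fin r → ℂ := fun j => if a 0 = 0 then β j / b 0 else α j / a 0 with ht
  set T' : Finset (Fin r) := univ.filter (fun j => ¬ (e j ≠ 0)) with hT'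
  have hcompl : ∀ j ∈ T', lform (α j) (β j) = C (t j) * u := by
    intro j hj
    have hej : e j = 0 := by
      have := (Finset.mem_filter.1 hj).2
      by_contra hne; exact this hne
    have hej' : b 0 * α j - a 0 * β j = 0 := by rw [← hej, he]
    rw [ht]; simp only
    by_cases ha : a 0 = 0
    · have hb : b 0 ≠ 0 := fun hb => hab0 ⟨ha, hb⟩
      have hαj : α j = 0 := by
        have : b 0 * α j = 0 := by rw [ha] at hej'; linear_combination hej'
        exact (mul_eq_zero.1 this).resolve_left hb
      rw [if_pos ha, hu]
      unfold lform
      rw [hαj, ha]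
      rw [mul_add, ← mul_assoc, ← mul_assoc, ← map_mul, ← map_mul]
      rw [mul_zero, div_mul_cancel₀ _ hb]
    · rw [if_neg ha, hu]
      unfold lform
      rw [mul_add, ← mul_assoc, ← mul_assoc, ← map_mul, ← map_mul,
        div_mul_cancel₀ _ ha]
      congr 3
      field_simp
      linear_combination -hej'
  have hsplit : (∑ j, C (lam j) * lform (α j) (β j) ^ (m+3))
      = ∑ j ∈ T, C (lam j) * lform (α j) (β j) ^ (m+3)
      + ∑ j ∈ T', C (lam j) * lform (α j) (β j) ^ (m+3) :=
    (Finset.sum_filter_add_sum_filter_not univ _ _).symm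
  set c : ℂ := ∑ j ∈ T', lam j * t j ^ (m+3) with hc
  have hfc : u^(m+1) * l1 * l2 = C c * u^(m+3) := by
    rw [heq, hsplit, hTf, zero_add, hc, map_sum, Finset.sum_mul]
    apply Finset.sum_congr rfl
    intro j hj
    rw [hcompl j hj, mul_pow, ← map_pow, map_mul]
    ring
  -- evaluate at the zero of l1
  have hev := congrArg (MvPolynomial.eval ![b 1, -(a 1)]) hfc
  rw [hu, hl1, hl2] at hev
  simp only [map_mul, map_pow, lform, map_add, eval_C, eval_X] at hev
  simp only [Matrix.cons_val_zero, Matrix.cons_val_one, Matrix.head_cons] at hev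
  have hl1z : a 1 * b 1 + b 1 * -(a 1) = 0 := by ring
  rw [hl1z] at hev
  simp only [mul_zero, zero_mul] at hev
  have huev : a 0 * b 1 + b 0 * -(a 1) ≠ 0 := by
    intro h; apply h01; linear_combination h
  have hc0 : c = 0 := by
    rcases mul_eq_zero.1 hev.symm with h | h
    · exact h
    · exact absurd (pow_eq_zero_iff (by omega) |>.1 h) huev
  rw [hc0, map_zero, zero_mul] at hfc
  have hu0 : u ≠ 0 := by rw [hu]; exact lform_ne_zero hab0
  have hl10 : l1 ≠ 0 := by rw [hl1]; exact lform_ne_zero hab1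
  have hl20 : l2 ≠ 0 := by rw [hl2]; exact lform_ne_zero hab2
  exact (mul_ne_zero (mul_ne_zero (pow_ne_zero _ hu0) hl10) hl20) hfc

noncomputable def wfun (w1 w2 : ℂ) : ℕ → ℂ := fun k => if k = 1 then w1 else if k = 2 then w2 else 0

lemma solve_moments (m : ℕ) (w1 w2 : ℂ) (t : Fin (m+2) → ℂ) (hinj : Function.Injective t)
    (h1 : (∏ i, (Polynomial.X - Polynomial.C (t i))).coeff 1 * w1
        + (∏ i, (Polynomial.X - Polynomial.C (t i))).coeff 2 * w2 = 0)
    (h2 : (∏ i, (Polynomial.X - Polynomial.C (t i))).coeff 0 * w1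
        + (∏ i, (Polynomial.X - Polynomial.C (t i))).coeff 1 * w2 = 0) :
    ∃ μ : Fin (m+2) → ℂ, ∀ k ≤ m + 3, (∑ i, μ i * t i ^ k) = wfun w1 w2 k := by
  classical
  set p : Polynomial ℂ := ∏ i, (Polynomial.X - Polynomial.C (t i)) with hp
  set w : ℕ → ℂ := wfun w1 w2 with hw
  -- the vandermonde matrix
  set M : Matrix (Fin (m+2)) (Fin (m+2)) ℂ := fun k i => t i ^ (k : ℕ) with hM
  have hMt : M = Matrix.transpose (Matrix.vandermonde t) := by
    ext k i; simp [hM, Matrix.vandermonde, Matrix.transpose_apply]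
  have hdet : M.det ≠ 0 := by
    rw [hMt, Matrix.det_transpose, Matrix.det_vandermonde]
    rw [Finset.prod_ne_zero_iff]
    intro i _
    rw [Finset.prod_ne_zero_iff]
    intro j hj
    have : i < j := Finset.mem_Ioi.1 hj
    exact sub_ne_zero.2 fun h => absurd (hinj h) (by omega)
  set μ : Fin (m+2) → ℂ := M⁻¹.mulVec (fun k : Fin (m+2) => w (k : ℕ)) with hμ
  have hMv : M.mulVec μ = fun k : Fin (m+2) => w (k : ℕ) := by
    rw [hμ, Matrix.mulVec_mulVec, Matrix.mul_nonsing_inv _ (isUnit_iff_ne_zero.2 hdet),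
      Matrix.one_mulVec]
  have hlow : ∀ k, k ≤ m + 1 → (∑ i, μ i * t i ^ k) = w k := by
    intro k hk
    have := congrFun hMv ⟨k, by omega⟩
    simp only [Matrix.mulVec, dotProduct, hM] at this
    rw [← this]
    apply Finset.sum_congr rfl
    intro i _
    ring
  -- polynomial facts
  have hmon : p.Monic := Polynomial.monic_prod_of_monic _ _ (fun i _ => Polynomial.monic_X_sub_C _)
  have hdeg : p.natDegree = m + 2 := by
    rw [hp, Polynomial.natDegree_prod _ _ (fun i _ => Polynomial.X_sub_C_ne_zero _)]
    simp [Polynomial.natDegree_X_sub_C]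
  have hc : p.coeff (m+2) = 1 := by
    have := hmon.coeff_natDegree; rwa [hdeg] at this
  have hrec : ∀ i, t i ^ (m+2) = -∑ k ∈ range (m+2), p.coeff k * t i ^ k := by
    intro i
    have hev : p.eval (t i) = 0 := by
      rw [hp, Polynomial.eval_prod]
      apply Finset.prod_eq_zero (Finset.mem_univ i)
      simp
    rw [Polynomial.eval_eq_sum_range, hdeg] at hev
    rw [Finset.sum_range_succ] at hev
    rw [hc, one_mul] at hev
    linear_combination hev
  -- the two recurrence identities on w
  have hw1 : ∑ k ∈ range (m+3), p.coeff k * w k = 0 := by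
    have hsub : ({1, 2} : Finset ℕ) ⊆ range (m+3) := by
      intro x hx; simp at hx; rcases hx with h | h <;> simp [h]
    rw [← Finset.sum_subset hsub]
    · rw [Finset.sum_pair (by norm_num : (1:ℕ) ≠ 2)]
      exact h1
    · intro x _ hx
      simp only [Finset.mem_insert, Finset.mem_singleton, not_or] at hx
      have : w x = 0 := by simp [hw, wfun, hx.1, hx.2]
      rw [this, mul_zero]
  have hw2 : ∑ k ∈ range (m+2), p.coeff k * w (k+1) = 0 := by
    have hsub : ({0, 1} : Finset ℕ) ⊆ range (m+2) := by
      intro x hx; simp at hx; rcases hx with h | h <;> simp [h]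
    rw [← Finset.sum_subset hsub]
    · rw [Finset.sum_pair (by norm_num : (0:ℕ) ≠ 1)]
      exact h2
    · intro x _ hx
      simp only [Finset.mem_insert, Finset.mem_singleton, not_or] at hx
      have : w (x+1) = 0 := by
        simp only [hw, wfun]
        rw [if_neg (by omega), if_neg (by omega)]
      rw [this, mul_zero]
  -- step to k = m+2
  have hmid : (∑ i, μ i * t i ^ (m+2)) = w (m+2) := by
    have step1 : (∑ i, μ i * t i ^ (m+2))
        = ∑ i, ∑ k ∈ range (m+2), -(p.coeff k * (μ i * t i ^ k)) := by
      apply Finset.sum_congr rfl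
      intro i _
      rw [hrec i, mul_neg, Finset.mul_sum, ← Finset.sum_neg_distrib]
      apply Finset.sum_congr rfl
      intro k _
      ring
    rw [step1, Finset.sum_comm]
    have step2 : ∀ k ∈ range (m+2), (∑ i, -(p.coeff k * (μ i * t i ^ k)))
        = -(p.coeff k * w k) := by
      intro k hk
      rw [Finset.sum_neg_distrib, ← Finset.mul_sum, hlow k (by simp at hk; omega)]
    rw [Finset.sum_congr rfl step2, Finset.sum_neg_distrib]
    have htot := hw1
    rw [Finset.sum_range_succ, hc, one_mul] at htot
    linear_combination -htot
  have hAll : ∀ k ≤ m + 2, (∑ i, μ i * t i ^ k) = w k := by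
    intro k hk
    rcases Nat.lt_or_ge k (m+2) with h | h
    · exact hlow k (by omega)
    · have : k = m + 2 := by omega
      rw [this]; exact hmid
  have htop : (∑ i, μ i * t i ^ (m+3)) = w (m+3) := by
    have step1 : (∑ i, μ i * t i ^ (m+3))
        = ∑ i, ∑ k ∈ range (m+2), -(p.coeff k * (μ i * t i ^ (k+1))) := by
      apply Finset.sum_congr rfl
      intro i _
      have hpw : t i ^ (m+3) = t i ^ (m+2) * t i := by ring
      rw [hpw, hrec i, neg_mul, Finset.sum_mul, mul_neg, Finset.mul_sum,
        ← Finset.sum_neg_distrib]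
      apply Finset.sum_congr rfl
      intro k _
      ring
    rw [step1, Finset.sum_comm]
    have step2 : ∀ k ∈ range (m+2), (∑ i, -(p.coeff k * (μ i * t i ^ (k+1))))
        = -(p.coeff k * w (k+1)) := by
      intro k hk
      rw [Finset.sum_neg_distrib, ← Finset.mul_sum, hAll (k+1) (by simp at hk; omega)]
    rw [Finset.sum_congr rfl step2, Finset.sum_neg_distrib, hw2, neg_zero]
    simp only [hw, wfun]
    rw [if_neg (by omega), if_neg (by omega)]
  refine ⟨μ, ?_⟩
  intro k hk
  rcases Nat.lt_or_ge k (m+3) with h | h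
  · exact hAll k (by omega)
  · have : k = m + 3 := by omega
    rw [this]; exact htop

lemma coeffs2 (s pr : ℂ) :
    (Polynomial.X^2 - Polynomial.C s * Polynomial.X + Polynomial.C pr).coeff 0 = pr
    ∧ (Polynomial.X^2 - Polynomial.C s * Polynomial.X + Polynomial.C pr).coeff 1 = -s
    ∧ (Polynomial.X^2 - Polynomial.C s * Polynomial.X + Polynomial.C pr).coeff 2 = 1 := by
  refine ⟨?_, ?_, ?_⟩ <;> simp [Polynomial.coeff_X_pow, Polynomial.coeff_C]

lemma coeffs3 (s1 s2 s3 : ℂ) :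
    (Polynomial.X^3 - Polynomial.C s1 * Polynomial.X^2 + Polynomial.C s2 * Polynomial.X
      - Polynomial.C s3).coeff 0 = -s3
    ∧ (Polynomial.X^3 - Polynomial.C s1 * Polynomial.X^2 + Polynomial.C s2 * Polynomial.X
      - Polynomial.C s3).coeff 1 = s2
    ∧ (Polynomial.X^3 - Polynomial.C s1 * Polynomial.X^2 + Polynomial.C s2 * Polynomial.X
      - Polynomial.C s3).coeff 2 = -s1 := by
  refine ⟨?_, ?_, ?_⟩ <;> simp [Polynomial.coeff_X_pow, Polynomial.coeff_C]

lemma coeffs4 (s1 s2 s3 s4 : ℂ) :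
    (Polynomial.X^4 - Polynomial.C s1 * Polynomial.X^3 + Polynomial.C s2 * Polynomial.X^2
      - Polynomial.C s3 * Polynomial.X + Polynomial.C s4).coeff 0 = s4
    ∧ (Polynomial.X^4 - Polynomial.C s1 * Polynomial.X^3 + Polynomial.C s2 * Polynomial.X^2
      - Polynomial.C s3 * Polynomial.X + Polynomial.C s4).coeff 1 = -s3
    ∧ (Polynomial.X^4 - Polynomial.C s1 * Polynomial.X^3 + Polynomial.C s2 * Polynomial.X^2
      - Polynomial.C s3 * Polynomial.X + Polynomial.C s4).coeff 2 = s2 := by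
  refine ⟨?_, ?_, ?_⟩ <;> simp [Polynomial.coeff_X_pow, Polynomial.coeff_C]

lemma exists_u (c : ℝ) (hc : 0 ≤ c) : ∃ u : ℂ, u^2 = -c := by
  refine ⟨Complex.I * (Real.sqrt c : ℝ), ?_⟩
  rw [mul_pow, Complex.I_sq, ← Complex.ofReal_pow, Real.sq_sqrt hc]
  ring

lemma injOfPairs {n : ℕ} (z : Fin n → ℂ) (h : ∀ i j : Fin n, i < j → z i ≠ z j) :
    Function.Injective z := by
  intro i j hij
  rcases lt_trichotomy i j with h' | h' | h'
  · exact absurd hij (h i j h')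
  · exact h'
  · exact absurd hij.symm (h j i h')

/-- good roots, case m = 0 -/
lemma roots0 (ρ : ℂ) (hρ : ρ ≠ 0) :
    ∃ t : Fin 2 → ℂ, Function.Injective t ∧
      ((∏ i, (Polynomial.X - Polynomial.C (t i))).coeff 1
        + (∏ i, (Polynomial.X - Polynomial.C (t i))).coeff 2 * ρ = 0) ∧
      ((∏ i, (Polynomial.X - Polynomial.C (t i))).coeff 0
        + (∏ i, (Polynomial.X - Polynomial.C (t i))).coeff 1 * ρ = 0) := by
  obtain ⟨u, hu⟩ := exists_u 3 (by norm_num)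
  push_cast at hu
  have hune : u ≠ 0 := by
    intro h; rw [h] at hu; norm_num at hu
  set t : Fin 2 → ℂ := fun i => match i with
    | 0 => ρ * (1 + u) / 2
    | 1 => ρ * (1 - u) / 2 with ht
  have hprod : (∏ i, (Polynomial.X - Polynomial.C (t i)))
      = Polynomial.X^2 - Polynomial.C (ρ) * Polynomial.X + Polynomial.C (ρ^2) := by
    rw [Fin.prod_univ_two]
    have e1 : t 0 + t 1 = ρ := by rw [ht]; ring
    have e2 : t 0 * t 1 = ρ^2 := by rw [ht]; simp only; linear_combination (-ρ^2/4) * hu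
    rw [show (Polynomial.C ρ : Polynomial ℂ) = Polynomial.C (t 0 + t 1) from by rw [e1],
      show (Polynomial.C (ρ^2) : Polynomial ℂ) = Polynomial.C (t 0 * t 1) from by rw [e2]]
    simp only [map_add, map_mul]; ring
  obtain ⟨c0, c1, c2⟩ := coeffs2 ρ (ρ^2)
  refine ⟨t, ?_, ?_, ?_⟩
  · apply injOfPairs
    intro i j hij
    fin_cases i <;> fin_cases j <;> simp_all
    · -- t 0 ≠ t 1
      intro h
      have : ρ * u = 0 := by linear_combination (ρ/2) * h
      rcases mul_eq_zero.1 this with h' | h'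
      · exact hρ h'
      · exact hune h'
  · rw [hprod, c1, c2]; ring
  · rw [hprod, c0, c1]; ring

/-- good roots, case m = 1 -/
lemma roots1 (ρ : ℂ) (hρ : ρ ≠ 0) :
    ∃ t : Fin 3 → ℂ, Function.Injective t ∧
      ((∏ i, (Polynomial.X - Polynomial.C (t i))).coeff 1
        + (∏ i, (Polynomial.X - Polynomial.C (t i))).coeff 2 * ρ = 0) ∧
      ((∏ i, (Polynomial.X - Polynomial.C (t i))).coeff 0
        + (∏ i, (Polynomial.X - Polynomial.C (t i))).coeff 1 * ρ = 0) := by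
  obtain ⟨u, hu⟩ := exists_u 2 (by norm_num)
  push_cast at hu
  set t : Fin 3 → ℂ := fun i => match i with
    | 0 => -ρ
    | 1 => ρ * (1 + u) / 3
    | 2 => ρ * (1 - u) / 3 with ht
  have hprod : (∏ i, (Polynomial.X - Polynomial.C (t i)))
      = Polynomial.X^3 - Polynomial.C (-ρ/3) * Polynomial.X^2
        + Polynomial.C (-ρ^2/3) * Polynomial.X - Polynomial.C (-ρ^3/3) := by
    rw [Fin.prod_univ_three]
    have e1 : t 0 + t 1 + t 2 = -ρ/3 := by rw [ht]; ring
    have e2 : t 0 * t 1 + t 0 * t 2 + t 1 * t 2 = -ρ^2/3 := by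
      rw [ht]; simp only; linear_combination (-ρ^2/9) * hu
    have e3 : t 0 * t 1 * t 2 = -ρ^3/3 := by
      rw [ht]; simp only; linear_combination (ρ^3/9) * hu
    rw [← e1, ← e2, ← e3]
    simp only [map_add, map_mul]; ring
  obtain ⟨c0, c1, c2⟩ := coeffs3 (-ρ/3) (-ρ^2/3) (-ρ^3/3)
  refine ⟨t, ?_, ?_, ?_⟩
  · apply injOfPairs
    intro i j hij
    fin_cases i <;> fin_cases j <;> first | (exact absurd hij (by decide)) | skip
    · show (-ρ : ℂ) ≠ ρ * (1 + u) / 3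
      intro h
      have h2 : ρ * (4 + u) = 0 := by linear_combination -3*h
      rcases mul_eq_zero.1 h2 with h' | h'
      · exact hρ h'
      · have : u = -4 := by linear_combination h'
        rw [this] at hu; norm_num at hu
    · show (-ρ : ℂ) ≠ ρ * (1 - u) / 3
      intro h
      have h2 : ρ * (4 - u) = 0 := by linear_combination -3*h
      rcases mul_eq_zero.1 h2 with h' | h'
      · exact hρ h'
      · have : u = 4 := by linear_combination -h'
        rw [this] at hu; norm_num at hu
    · show ρ * (1 + u) / 3 ≠ ρ * (1 - u) / 3
      intro h
      have h2 : ρ * u = 0 := by linear_combination (3/2)*h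
      rcases mul_eq_zero.1 h2 with h' | h'
      · exact hρ h'
      · rw [h'] at hu; norm_num at hu
  · rw [hprod, c1, c2]; ring
  · rw [hprod, c0, c1]; ring

/-- good roots, case m = 2 -/
lemma roots2 (ρ : ℂ) (hρ : ρ ≠ 0) :
    ∃ t : Fin 4 → ℂ, Function.Injective t ∧
      ((∏ i, (Polynomial.X - Polynomial.C (t i))).coeff 1
        + (∏ i, (Polynomial.X - Polynomial.C (t i))).coeff 2 * ρ = 0) ∧
      ((∏ i, (Polynomial.X - Polynomial.C (t i))).coeff 0
        + (∏ i, (Polynomial.X - Polynomial.C (t i))).coeff 1 * ρ = 0) := by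
  obtain ⟨u, hu⟩ := exists_u 7 (by norm_num)
  push_cast at hu
  set t : Fin 4 → ℂ := fun i => match i with
    | 0 => ρ
    | 1 => -ρ
    | 2 => ρ * (1 + u) / 4
    | 3 => ρ * (1 - u) / 4 with ht
  have hprod : (∏ i, (Polynomial.X - Polynomial.C (t i)))
      = Polynomial.X^4 - Polynomial.C (ρ/2) * Polynomial.X^3
        + Polynomial.C (-ρ^2/2) * Polynomial.X^2
        - Polynomial.C (-ρ^3/2) * Polynomial.X + Polynomial.C (-ρ^4/2) := by
    rw [Fin.prod_univ_four]
    have e1 : t 0 + t 1 + t 2 + t 3 = ρ/2 := by rw [ht]; ring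
    have e2 : t 0 * t 1 + t 0 * t 2 + t 0 * t 3 + t 1 * t 2 + t 1 * t 3 + t 2 * t 3
        = -ρ^2/2 := by
      rw [ht]; simp only; linear_combination (-ρ^2/16) * hu
    have e3 : t 0 * t 1 * t 2 + t 0 * t 1 * t 3 + t 0 * t 2 * t 3 + t 1 * t 2 * t 3
        = -ρ^3/2 := by
      rw [ht]; simp only; ring
    have e4 : t 0 * t 1 * t 2 * t 3 = -ρ^4/2 := by
      rw [ht]; simp only; linear_combination (ρ^4/16) * hu
    rw [← e1, ← e2, ← e3, ← e4]
    simp only [map_add, map_mul]; ring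
  obtain ⟨c0, c1, c2⟩ := coeffs4 (ρ/2) (-ρ^2/2) (-ρ^3/2) (-ρ^4/2)
  refine ⟨t, ?_, ?_, ?_⟩
  · apply injOfPairs
    intro i j hij
    fin_cases i <;> fin_cases j <;> first | (exact absurd hij (by decide)) | skip
    · show ρ ≠ -ρ
      intro h
      have : ρ = 0 := by linear_combination h/2
      exact hρ this
    · show ρ ≠ ρ * (1 + u) / 4
      intro h
      have h2 : ρ * (3 - u) = 0 := by linear_combination 4*h
      rcases mul_eq_zero.1 h2 with h' | h'
      · exact hρ h'
      · have : u = 3 := by linear_combination -h'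
        rw [this] at hu; norm_num at hu
    · show ρ ≠ ρ * (1 - u) / 4
      intro h
      have h2 : ρ * (3 + u) = 0 := by linear_combination 4*h
      rcases mul_eq_zero.1 h2 with h' | h'
      · exact hρ h'
      · have : u = -3 := by linear_combination h'
        rw [this] at hu; norm_num at hu
    · show -ρ ≠ ρ * (1 + u) / 4
      intro h
      have h2 : ρ * (5 + u) = 0 := by linear_combination -4*h
      rcases mul_eq_zero.1 h2 with h' | h'
      · exact hρ h'
      · have : u = -5 := by linear_combination h'
        rw [this] at hu; norm_num at hu
    · show -ρ ≠ ρ * (1 - u) / 4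
      intro h
      have h2 : ρ * (5 - u) = 0 := by linear_combination -4*h
      rcases mul_eq_zero.1 h2 with h' | h'
      · exact hρ h'
      · have : u = 5 := by linear_combination -h'
        rw [this] at hu; norm_num at hu
    · show ρ * (1 + u) / 4 ≠ ρ * (1 - u) / 4
      intro h
      have h2 : ρ * u = 0 := by linear_combination 2*h
      rcases mul_eq_zero.1 h2 with h' | h'
      · exact hρ h'
      · rw [h'] at hu; norm_num at hu
  · rw [hprod, c1, c2]; ring
  · rw [hprod, c0, c1]; ring

/-- good roots, case m = n + 3 -/
lemma rootsBig (n : ℕ) (ρ : ℂ) (hρ : ρ ≠ 0) :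
    ∃ t : Fin (n+3+2) → ℂ, Function.Injective t ∧
      ((∏ i, (Polynomial.X - Polynomial.C (t i))).coeff 1
        + (∏ i, (Polynomial.X - Polynomial.C (t i))).coeff 2 * ρ = 0) ∧
      ((∏ i, (Polynomial.X - Polynomial.C (t i))).coeff 0
        + (∏ i, (Polynomial.X - Polynomial.C (t i))).coeff 1 * ρ = 0) := by
  classical
  set m : ℕ := n + 3 with hm
  -- the radius
  set R : ℝ := ‖ρ‖ + 1 with hR
  have hRpos : 0 < R := by
    rw [hR]; positivity
  have hRgt : ‖ρ‖ < R := by rw [hR]; linarith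
  set c : ℂ := ((R : ℂ))^m with hc
  have hcne : c ≠ 0 := pow_ne_zero _ (by exact_mod_cast hRpos.ne')
  -- the polynomial X^m - c
  set q : Polynomial ℂ := Polynomial.X^m - Polynomial.C c with hq
  have hqmon : q.Monic := Polynomial.monic_X_pow_sub_C _ (by omega)
  have hqdeg : q.natDegree = m := Polynomial.natDegree_X_pow_sub_C
  have hqne : q ≠ 0 := hqmon.ne_zero
  have hcard : Multiset.card q.roots = m := by
    rw [← hqdeg]
    exact (Polynomial.splits_iff_card_roots).1 (IsAlgClosed.splits q)
  have hnodup : q.roots.Nodup :=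
    Polynomial.nodup_roots (Polynomial.separable_X_pow_sub_C c
      (by exact_mod_cast (Nat.cast_ne_zero (R := ℂ)).2 (by omega : m ≠ 0)) hcne)
  set F : Finset ℂ := q.roots.toFinset with hF
  have hFcard : F.card = m := by
    rw [hF, Multiset.toFinset_card_of_nodup hnodup, hcard]
  -- enumeration of the roots
  set s : Fin m → ℂ := fun i => (F.equivFin.symm (Fin.cast hFcard.symm i)).val with hs
  have hsinj : Function.Injective s := by
    intro i j hij
    have := Subtype.val_injective hij
    have := F.equivFin.symm.injective this
    exact Fin.cast_injective _ this
  have hsmem : ∀ i, s i ∈ F := fun i => (F.equivFin.symm _).2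
  have hroot : ∀ x ∈ F, x^m = c := by
    intro x hx
    rw [hF, Multiset.mem_toFinset] at hx
    have := (Polynomial.mem_roots hqne).1 hx
    rw [Polynomial.IsRoot, hq] at this
    simp only [Polynomial.eval_sub, Polynomial.eval_pow, Polynomial.eval_X,
      Polynomial.eval_C] at this
    linear_combination this
  have habs : ∀ x ∈ F, ‖x‖ = R := by
    intro x hx
    have h1 : (‖x‖)^m = R^m := by
      have h2 := congrArg (‖·‖) (hroot x hx)
      rw [norm_pow, hc, norm_pow, Complex.norm_real, Real.norm_eq_abs, abs_of_pos hRpos] at h2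
      exact h2
    exact (pow_left_inj₀ (norm_nonneg x) hRpos.le (by omega)).1 h1
  -- the product over the enumeration equals q
  have hsprod : (∏ i : Fin m, (Polynomial.X - Polynomial.C (s i))) = q := by
    have e1 : (∏ i : Fin m, (Polynomial.X - Polynomial.C (s i)))
        = ∏ y : {x // x ∈ F}, (Polynomial.X - Polynomial.C y.val) := by
      apply Equiv.prod_comp ((finCongr hFcard.symm).trans F.equivFin.symm)
        (fun y : {x // x ∈ F} => Polynomial.X - Polynomial.C y.val)
    rw [e1, Finset.prod_coe_sort F (fun x => Polynomial.X - Polynomial.C x)]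
    rw [Finset.prod_eq_multiset_prod, hF, Multiset.toFinset_val,
      Multiset.dedup_eq_self.2 hnodup]
    exact Polynomial.prod_multiset_X_sub_C_of_monic_of_roots_card_eq hqmon
      (by rw [hcard, hqdeg])
  -- the quadratic part
  set u : ℂ := Complex.I * (Real.sqrt 3 : ℝ) with hudef
  have hu : u^2 = -3 := by
    rw [hudef, mul_pow, Complex.I_sq, ← Complex.ofReal_pow, Real.sq_sqrt (by norm_num)]
    norm_num
  have habs1 : ∀ ε : ℝ, ‖(1 + ε • u)‖ = Real.sqrt (1 + 3 * ε^2) := by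
    intro ε
    rw [Complex.norm_def]
    congr 1
    rw [Complex.normSq_apply]
    have hre : (1 + ε • u).re = 1 := by
      simp [hudef, Complex.add_re, Complex.smul_re, Complex.mul_re]
    have him : (1 + ε • u).im = ε * Real.sqrt 3 := by
      simp [hudef, Complex.add_im, Complex.smul_im, Complex.mul_im]
    rw [hre, him]
    have h3 : Real.sqrt 3 * Real.sqrt 3 = 3 := Real.mul_self_sqrt (by norm_num)
    nlinarith [h3]
  have h2 : ‖(1 + u)‖ = 2 := by
    have h := habs1 1
    rw [one_smul] at h
    rw [h, show (1 + 3*(1:ℝ)^2) = 2^2 by norm_num]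
    exact Real.sqrt_sq (by norm_num)
  have h2' : ‖(1 - u)‖ = 2 := by
    have h := habs1 (-1)
    rw [neg_smul, one_smul, ← sub_eq_add_neg] at h
    rw [h, show (1 + 3*(-1:ℝ)^2) = 2^2 by norm_num]
    exact Real.sqrt_sq (by norm_num)
  have habsu : ‖((1 + u)/2)‖ = 1 := by
    rw [norm_div, h2, Complex.norm_two]
    norm_num
  have habsu' : ‖((1 - u)/2)‖ = 1 := by
    rw [norm_div, h2', Complex.norm_two]
    norm_num
  set z0 : ℂ := ρ * ((1 + u)/2) with hz0
  set z1 : ℂ := ρ * ((1 - u)/2) with hz1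
  have habsz0 : ‖z0‖ < R := by rw [hz0, norm_mul, habsu, mul_one]; exact hRgt
  have habsz1 : ‖z1‖ < R := by rw [hz1, norm_mul, habsu', mul_one]; exact hRgt
  have hz01 : z0 ≠ z1 := by
    intro h
    have h2 : ρ * u = 0 := by rw [hz0, hz1] at h; linear_combination h
    rcases mul_eq_zero.1 h2 with h' | h'
    · exact hρ h'
    · rw [h'] at hu; norm_num at hu
  -- the full root function
  set t : Fin (m+2) → ℂ := Fin.cons z0 (Fin.cons z1 s) with htdef
  have htinj : Function.Injective t := by
    rw [htdef, Fin.cons_injective_iff]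
    constructor
    · rintro ⟨i, hi⟩
      revert hi
      refine Fin.cases ?_ ?_ i
      · rw [Fin.cons_zero]; exact fun h => hz01 h.symm
      · intro j h
        rw [Fin.cons_succ] at h
        have hax := habs (s j) (hsmem j)
        rw [h] at hax
        rw [hax] at habsz0
        exact lt_irrefl _ habsz0
    · rw [Fin.cons_injective_iff]
      constructor
      · rintro ⟨j, hj⟩
        have hax := habs (s j) (hsmem j)
        rw [hj] at hax
        rw [hax] at habsz1
        exact lt_irrefl _ habsz1
      · exact hsinj
  have hquad : (Polynomial.X - Polynomial.C z0) * (Polynomial.X - Polynomial.C z1)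
      = Polynomial.X^2 - Polynomial.C ρ * Polynomial.X + Polynomial.C (ρ^2) := by
    have e1 : z0 + z1 = ρ := by rw [hz0, hz1]; ring
    have e2 : z0 * z1 = ρ^2 := by rw [hz0, hz1]; linear_combination (-ρ^2/4) * hu
    rw [← e2, ← e1]
    simp only [map_add, map_mul]; ring
  have hprodt : (∏ i, (Polynomial.X - Polynomial.C (t i)))
      = (Polynomial.X^2 - Polynomial.C ρ * Polynomial.X + Polynomial.C (ρ^2)) * q := by
    rw [Fin.prod_univ_succ, Fin.prod_univ_succ]
    simp only [htdef, Fin.cons_zero, Fin.cons_succ]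
    rw [← hsprod, ← hquad]
    ring
  -- coefficients of the product
  have hco : ∀ k : ℕ, k < 3 →
      (∏ i, (Polynomial.X - Polynomial.C (t i))).coeff k
      = -((Polynomial.X^2 - Polynomial.C ρ * Polynomial.X + Polynomial.C (ρ^2)).coeff k * c) := by
    intro k hk
    rw [hprodt, hq, mul_sub, Polynomial.coeff_sub, Polynomial.coeff_mul_X_pow',
      Polynomial.coeff_mul_C, if_neg (by omega)]
    ring
  obtain ⟨c0, c1, c2⟩ := coeffs2 ρ (ρ^2)
  refine ⟨t, htinj, ?_, ?_⟩
  · rw [hco 1 (by omega), hco 2 (by omega), c1, c2]; ring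
  · rw [hco 0 (by omega), hco 1 (by omega), c0, c1]; ring


lemma exists_good_roots (m : ℕ) (ρ : ℂ) (hρ : ρ ≠ 0) :
    ∃ t : Fin (m+2) → ℂ, Function.Injective t ∧
      ((∏ i, (Polynomial.X - Polynomial.C (t i))).coeff 1
        + (∏ i, (Polynomial.X - Polynomial.C (t i))).coeff 2 * ρ = 0) ∧
      ((∏ i, (Polynomial.X - Polynomial.C (t i))).coeff 0
        + (∏ i, (Polynomial.X - Polynomial.C (t i))).coeff 1 * ρ = 0) := by
  match m with
  | 0 => exact roots0 ρ hρ
  | 1 => exact roots1 ρ hρ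
  | 2 => exact roots2 ρ hρ
  | (n+3) => exact rootsBig n ρ hρ

lemma upper (m : ℕ) (a b : Fin 3 → ℂ)
    (hdist : ∀ i j, i ≠ j → a i * b j - a j * b i ≠ 0) :
    ∃ lam A B : Fin (m+2) → ℂ,
      lform (a 0) (b 0) ^ (m+1) * lform (a 1) (b 1) * lform (a 2) (b 2)
        = ∑ j, C (lam j) * lform (A j) (B j) ^ (m+3) := by
  classical
  have h01 := hdist 0 1 (by decide)
  have h21 := hdist 2 1 (by decide)
  have h02 := hdist 0 2 (by decide)
  set u := lform (a 0) (b 0) with hu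
  set v := lform (a 1) (b 1) with hv
  set Δ : ℂ := a 0 * b 1 - a 1 * b 0 with hΔ
  have hΔne : Δ ≠ 0 := h01
  set γ : ℂ := (a 2 * b 1 - a 1 * b 2) / Δ with hγdef
  set δ : ℂ := (a 0 * b 2 - a 2 * b 0) / Δ with hδdef
  have hγ : γ ≠ 0 := div_ne_zero h21 hΔne
  have hδ : δ ≠ 0 := div_ne_zero (by intro h; apply h02; linear_combination h) hΔne
  have hl2 : lform (a 2) (b 2) = C γ * u + C δ * v := by
    have ea : γ * a 0 + δ * a 1 = a 2 := by
      rw [hγdef, hδdef]; field_simp; ring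
    have eb : γ * b 0 + δ * b 1 = b 2 := by
      rw [hγdef, hδdef]; field_simp; ring
    rw [hu, hv]
    unfold lform
    rw [← ea, ← eb]
    simp only [map_add, map_mul]
    ring
  set w1 : ℂ := γ / (((m+3).choose 1 : ℕ) : ℂ) with hw1def
  set w2 : ℂ := δ / (((m+3).choose 2 : ℕ) : ℂ) with hw2def
  have hch1 : (((m+3).choose 1 : ℕ) : ℂ) ≠ 0 :=
    Nat.cast_ne_zero.2 (Nat.choose_pos (by omega)).ne'
  have hch2 : (((m+3).choose 2 : ℕ) : ℂ) ≠ 0 :=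
    Nat.cast_ne_zero.2 (Nat.choose_pos (by omega)).ne'
  have hw1 : w1 ≠ 0 := div_ne_zero hγ hch1
  have hw2 : w2 ≠ 0 := div_ne_zero hδ hch2
  set ρ : ℂ := w2 / w1 with hρdef
  have hρ : ρ ≠ 0 := div_ne_zero hw2 hw1
  obtain ⟨t, tinj, hc1, hc2⟩ := exists_good_roots m ρ hρ
  have hρw : ρ * w1 = w2 := by rw [hρdef]; field_simp
  have hcc1 : (∏ i, (Polynomial.X - Polynomial.C (t i))).coeff 1 * w1
      + (∏ i, (Polynomial.X - Polynomial.C (t i))).coeff 2 * w2 = 0 := by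
    linear_combination w1 * hc1 - (∏ i, (Polynomial.X - Polynomial.C (t i))).coeff 2 * hρw
  have hcc2 : (∏ i, (Polynomial.X - Polynomial.C (t i))).coeff 0 * w1
      + (∏ i, (Polynomial.X - Polynomial.C (t i))).coeff 1 * w2 = 0 := by
    linear_combination w1 * hc2 - (∏ i, (Polynomial.X - Polynomial.C (t i))).coeff 1 * hρw
  obtain ⟨μ, hμ⟩ := solve_moments m w1 w2 t tinj hcc1 hcc2
  set A : Fin (m+2) → ℂ := fun j => a 0 + t j * a 1 with hA
  set B : Fin (m+2) → ℂ := fun j => b 0 + t j * b 1 with hB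
  have hlAB : ∀ j, lform (A j) (B j) = C (t j) * v + u := by
    intro j
    rw [hu, hv, hA, hB]
    unfold lform
    simp only [map_add, map_mul]
    ring
  have main : (∑ j, C (μ j) * lform (A j) (B j) ^ (m+3))
      = C γ * (v * u^(m+2)) + C δ * (v^2 * u^(m+1)) := by
    have step1 : ∀ j : Fin (m+2), C (μ j) * lform (A j) (B j) ^ (m+3)
        = ∑ k ∈ range (m+4), C (μ j * t j ^ k * (((m+3).choose k : ℕ) : ℂ))
            * (v ^ k * u ^ (m+3-k)) := by
      intro j
      rw [hlAB j, add_pow, Finset.mul_sum]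
      apply Finset.sum_congr rfl
      intro k hk
      rw [mul_pow, ← map_pow]
      rw [show (((m+3).choose k : ℕ) : MvPolynomial (Fin 2) ℂ)
        = C ((((m+3).choose k : ℕ)) : ℂ) from (map_natCast (C : ℂ →+* MvPolynomial (Fin 2) ℂ) _).symm]
      simp only [map_mul]
      ring
    rw [Finset.sum_congr rfl (fun j _ => step1 j), Finset.sum_comm]
    have step2 : ∀ k ∈ range (m+4),
        (∑ j : Fin (m+2), C (μ j * t j ^ k * (((m+3).choose k : ℕ) : ℂ))
          * (v ^ k * u ^ (m+3-k)))
        = C (wfun w1 w2 k * (((m+3).choose k : ℕ) : ℂ)) * (v ^ k * u ^ (m+3-k)) := by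
      intro k hk
      rw [← Finset.sum_mul, ← map_sum, ← Finset.sum_mul, hμ k (by simp at hk; omega)]
    rw [Finset.sum_congr rfl step2]
    have hsub : ({1, 2} : Finset ℕ) ⊆ range (m+4) := by
      intro x hx; simp at hx; rcases hx with h | h <;> simp [h]
    rw [← Finset.sum_subset hsub]
    · rw [Finset.sum_pair (by norm_num : (1:ℕ) ≠ 2)]
      have e1 : wfun w1 w2 1 * (((m+3).choose 1 : ℕ) : ℂ) = γ := by
        have h' : wfun w1 w2 1 = w1 := by simp [wfun]
        rw [h', hw1def, div_mul_cancel₀ _ hch1]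
      have e2 : wfun w1 w2 2 * (((m+3).choose 2 : ℕ) : ℂ) = δ := by
        have h' : wfun w1 w2 2 = w2 := by simp [wfun]
        rw [h', hw2def, div_mul_cancel₀ _ hch2]
      rw [e1, e2]
      rw [show m+3-1 = m+2 from rfl, show m+3-2 = m+1 from rfl, pow_one]
    · intro x hx hxn
      simp only [Finset.mem_insert, Finset.mem_singleton, not_or] at hxn
      have : wfun w1 w2 x = 0 := by simp [wfun, hxn.1, hxn.2]
      rw [this, zero_mul, map_zero, zero_mul]
  refine ⟨μ, A, B, ?_⟩
  rw [hl2, main]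
  ring

end RankAux

/-- `L_ℂ(ℓ₀^(d-2) ℓ₁ ℓ₂) = d - 1` for pairwise nonproportional linear forms. -/
theorem rank_of_near_power (d : ℕ) (hd : 3 ≤ d) (a b : Fin 3 → ℂ)
    (hdist : ∀ i j, i ≠ j → a i * b j - a j * b i ≠ 0)
    (f : MvPolynomial (Fin 2) ℂ)
    (hf : f = lform (a 0) (b 0) ^ (d - 2) * lform (a 1) (b 1) * lform (a 2) (b 2)) :
    rankC d f = d - 1 := by
  classical
  obtain ⟨m, rfl⟩ : ∃ m, d = m + 3 := ⟨d - 3, by omega⟩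
  have hf' : f = lform (a 0) (b 0) ^ (m+1) * lform (a 1) (b 1) * lform (a 2) (b 2) := hf
  have hmem : (m + 2) ∈ {r : ℕ | ∃ lam a' b' : Fin r → ℂ,
      f = ∑ j, C (lam j) * lform (a' j) (b' j) ^ (m+3)} := by
    obtain ⟨lam, A, B, h⟩ := RankAux.upper m a b hdist
    exact ⟨lam, A, B, by rw [hf']; exact h⟩
  have hset : {r : ℕ | ∃ lam a' b' : Fin r → ℂ,
      f = ∑ j, C (lam j) * lform (a' j) (b' j) ^ (m+3)}
      = {r : ℕ | ∃ lam a' b' : Fin r → ℂ,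
      f = ∑ j, C (lam j) * lform (a' j) (b' j) ^ (m+3)} := rfl
  show sInf {r : ℕ | ∃ lam a' b' : Fin r → ℂ,
      f = ∑ j, C (lam j) * lform (a' j) (b' j) ^ (m+3)} = (m+3) - 1
  have hgoal : (m+3) - 1 = m + 2 := rfl
  rw [hgoal]
  apply le_antisymm
  · exact Nat.sInf_le hmem
  · apply le_csInf ⟨m+2, hmem⟩
    intro r hr
    by_contra hlt
    push_neg at hlt
    obtain ⟨lam, α, β, heq⟩ := hr
    exact RankAux.lower_bound m r a b hdist lam α β (by omega) (by rw [← hf']; exact heq)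
end

section
/- Let d ≥ 3 and let f(x,y) = ℓ(x,y)^{d−2} p(x,y) ∈ ℝ[x,y], where ℓ is a nonzero real linear form and p is an irreducible real quadratic form (a real quadratic form with no real roots). Then L_ℝ(f) = d − 1. -/
section AuxOneVar
open Polynomial Finset Matrix

noncomputable def W (α : ℝ) : ℕ → Polynomial ℝ
  | 0 => 1
  | 1 => C α * X
  | (n+2) => C (2*α) * X * W α (n+1) - W α n

lemma coeffCX0 (c : ℝ) (p : Polynomial ℝ) : (C c * X * p).coeff 0 = 0 := by
  rw [mul_assoc, coeff_C_mul, mul_coeff_zero, coeff_X_zero]; ring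

lemma coeffCX (c : ℝ) (p : Polynomial ℝ) (k : ℕ) :
    (C c * X * p).coeff (k+1) = c * p.coeff k := by
  rw [mul_assoc, coeff_C_mul, coeff_X_mul]

lemma W_eval (α : ℝ) (hα : α ≠ 0) (θ : ℝ) :
    ∀ n : ℕ, (W α n).eval (Real.cos θ / α) = Real.cos (n*θ) := by
  have key : ∀ n : ℕ, (W α n).eval (Real.cos θ / α) = Real.cos (n*θ) ∧
      (W α (n+1)).eval (Real.cos θ / α) = Real.cos (((n:ℝ)+1)*θ) := by
    intro n
    induction n with
    | zero =>
      constructor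
      · simp [W]
      · simp only [W, eval_mul, eval_C, eval_X]
        field_simp
        simp
    | succ n ih =>
      constructor
      · rw [ih.2]; push_cast; ring_nf
      · show (W α (n+2)).eval _ = _
        rw [W, eval_sub, eval_mul, eval_mul, eval_C, eval_X, ih.1, ih.2]
        have h2 : ((n:ℝ)+1+1)*θ = (((n:ℝ)+1)*θ) + θ := by ring
        have h0 : (n:ℝ)*θ = (((n:ℝ)+1)*θ) - θ := by ring
        push_cast
        rw [h2, h0, Real.cos_add, Real.cos_sub]
        field_simp
        ring
  exact fun n => (key n).1

lemma W_coeffs (α : ℝ) : ∀ m : ℕ,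
    (W α (2*m)).coeff 0 = (-1)^m ∧ (W α (2*m)).coeff 1 = 0 ∧
    (W α (2*m)).coeff 2 = (-1)^m * (-2) * m^2 * α^2 ∧
    (W α (2*m+1)).coeff 0 = 0 ∧ (W α (2*m+1)).coeff 1 = (-1)^m*(2*m+1)*α ∧
    (W α (2*m+1)).coeff 2 = 0 := by
  intro m
  induction m with
  | zero =>
    refine ⟨by simp [W], by simp [W, coeff_one], by simp [W, coeff_one], ?_, ?_, ?_⟩
    · show (W α 1).coeff 0 = 0
      simp [W]
    · show (W α 1).coeff 1 = _
      simp [W, coeff_C_mul]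
    · show (W α 1).coeff 2 = 0
      simp [W, coeff_C_mul, coeff_X]
  | succ m ih =>
    obtain ⟨e0, e1, e2, o0, o1, o2⟩ := ih
    have h2m : 2*(m+1) = (2*m+1) + 1 := by ring
    have h2m' : 2*(m+1)+1 = (2*m+1) + 2 := by ring
    have We : W α (2*(m+1)) = C (2*α) * X * W α (2*m+1) - W α (2*m) := by
      rw [h2m]; rw [show 2*m+1+1 = 2*m+2 from rfl]; rw [W]
    have Wo : W α (2*(m+1)+1) = C (2*α) * X * W α (2*(m+1)) - W α (2*m+1) := by
      rw [h2m', W, ← h2m]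
    refine ⟨?_, ?_, ?_, ?_, ?_, ?_⟩
    · rw [We, coeff_sub, coeffCX0, e0]; push_cast; ring
    · rw [We, coeff_sub, coeffCX, o0, e1]; ring
    · rw [We, coeff_sub, show (2:ℕ) = 1+1 from rfl, coeffCX, o1, e2]; push_cast; ring
    · rw [Wo, coeff_sub, coeffCX0, o0]; ring
    · rw [Wo, coeff_sub, coeffCX, o1]
      rw [We, coeff_sub, coeffCX0, e0]; push_cast; ring
    · rw [Wo, coeff_sub, show (2:ℕ) = 1+1 from rfl, coeffCX, o2]
      rw [We, coeff_sub, coeffCX, o0, e1]; ring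

lemma W_natDegree_le (α : ℝ) : ∀ n : ℕ, (W α n).natDegree ≤ n := by
  have key : ∀ n : ℕ, (W α n).natDegree ≤ n ∧ (W α (n+1)).natDegree ≤ n+1 := by
    intro n
    induction n with
    | zero =>
      constructor
      · show (1 : Polynomial ℝ).natDegree ≤ 0; simp
      · show (C α * X).natDegree ≤ 1
        exact (natDegree_C_mul_le α X).trans natDegree_X_le
    | succ n ih =>
      refine ⟨ih.2, ?_⟩
      show (W α (n+2)).natDegree ≤ n+2
      rw [W]
      refine (natDegree_sub_le _ _).trans (max_le ?_ (ih.1.trans (by omega)))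
      refine (natDegree_mul_le).trans ?_
      have h1 : (C (2*α) * X).natDegree ≤ 1 :=
        (natDegree_C_mul_le _ X).trans natDegree_X_le
      omega
  exact fun n => (key n).1

lemma W_lead (α : ℝ) : ∀ n : ℕ, (W α (n+1)).coeff (n+1) = 2^n * α^(n+1) := by
  have key : ∀ n : ℕ, (W α (n+1)).coeff (n+1) = 2^n * α^(n+1) ∧
      (W α (n+2)).coeff (n+2) = 2^(n+1) * α^(n+2) := by
    intro n
    induction n with
    | zero =>
      constructor
      · show (C α * X).coeff 1 = _
        rw [coeff_C_mul, coeff_X_one]; ring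
      · show (W α 2).coeff 2 = _
        rw [W, coeff_sub, show (2:ℕ) = 1+1 from rfl, coeffCX]
        show 2*α * (C α * X).coeff 1 - (1:Polynomial ℝ).coeff 2 = _
        rw [coeff_C_mul, coeff_X_one, coeff_one]
        norm_num; ring
    | succ n ih =>
      refine ⟨ih.2, ?_⟩
      show (W α (n+3)).coeff (n+3) = _
      rw [show n+3 = (n+1)+2 from rfl, W, coeff_sub,
        show n+1+2 = (n+2)+1 from rfl, coeffCX,
        coeff_eq_zero_of_natDegree_lt ((W_natDegree_le α (n+1)).trans_lt (by omega))]
      rw [ih.2]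
      ring
  exact fun n => (key n).1








noncomputable def gam (K : ℝ) (k : ℕ) : ℝ :=
  if k = 0 then 1 else if k = 2 then 2/K else 0

lemma nodes_exist (m : ℕ) (hm : 1 ≤ m) (K : ℝ) (hK : 0 < K) :
    ∃ (t : Fin (2*m) → ℝ) (q : Polynomial ℝ), Function.Injective t ∧
      q.natDegree ≤ 2*m ∧ q.coeff (2*m) ≠ 0 ∧ q.coeff 1 = 0 ∧
      q.coeff 0 ≠ 0 ∧ q.coeff 2 = -(K/2) * q.coeff 0 ∧
      ∀ j, q.eval (t j) = 0 := by
  set n := 2*m with hn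
  have hn2 : 2 ≤ n := by omega
  set α := Real.sqrt K / n with hα
  have hαpos : 0 < α := by
    apply div_pos (Real.sqrt_pos.mpr hK); positivity
  have hα2 : α^2 = K / n^2 := by
    rw [hα, div_pow, Real.sq_sqrt hK.le]
  set θ : Fin n → ℝ := fun j => (2*(j:ℕ)+1)*Real.pi/(2*n) with hθ
  set t : Fin n → ℝ := fun j => Real.cos (θ j) / α with ht
  refine ⟨t, W α n, ?_, W_natDegree_le α n, ?_, ?_, ?_, ?_, ?_⟩
  · -- injective
    intro j j' hjj
    have hcos : Real.cos (θ j) = Real.cos (θ j') := by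
      have h1 : Real.cos (θ j) / α = Real.cos (θ j') / α := hjj
      field_simp at h1; exact h1
    have hbound : ∀ i : Fin n, θ i ∈ Set.Icc 0 Real.pi := by
      intro i
      have hi : ((i:ℕ):ℝ) + 1 ≤ (n:ℝ) := by exact_mod_cast i.2
      constructor
      · rw [hθ]; positivity
      · rw [hθ, div_le_iff₀ (by positivity)]
        nlinarith [Real.pi_pos]
    have hθeq : θ j = θ j' := Real.injOn_cos (hbound j) (hbound j') hcos
    rw [hθ] at hθeq
    simp only at hθeq
    have hnn : ((n:ℕ):ℝ) ≠ 0 := by positivity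
    field_simp at hθeq
    exact Fin.ext (by exact_mod_cast (by linarith : ((j:ℕ):ℝ) = ((j':ℕ):ℝ)))
  · rw [hn, show 2*m = (2*m-1)+1 by omega, W_lead]
    positivity
  · exact (W_coeffs α m).2.1
  · rw [(W_coeffs α m).1]; positivity
  · rw [(W_coeffs α m).2.2.1, (W_coeffs α m).1, hα2]
    rw [hn]; push_cast
    field_simp
  · intro j
    rw [ht]
    show (W α n).eval (Real.cos (θ j) / α) = 0
    rw [W_eval α (ne_of_gt hαpos) (θ j) n]
    have hnθ : (n:ℝ) * θ j = (j:ℕ)*Real.pi + Real.pi/2 := by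
      rw [hθ]; field_simp
    rw [hnθ, Real.cos_add, Real.cos_pi_div_two, Real.sin_pi_div_two,
      Real.sin_nat_mul_pi]
    ring





lemma moments_of_nodes (n : ℕ) (hn2 : 2 ≤ n) (K : ℝ) (hK : 0 < K)
    (t : Fin n → ℝ) (q : Polynomial ℝ) (hinj : Function.Injective t)
    (hdeg : q.natDegree ≤ n) (hlead : q.coeff n ≠ 0) (hc1 : q.coeff 1 = 0)
    (hc0 : q.coeff 0 ≠ 0) (hc2 : q.coeff 2 = -(K/2) * q.coeff 0)
    (hroot : ∀ j, q.eval (t j) = 0) :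
    ∃ lam : Fin n → ℝ,
      ∀ k ≤ n+1, (∑ j, lam j * t j ^ k) = gam K k := by
  -- Vandermonde solve
  set M : Matrix (Fin n) (Fin n) ℝ := (Matrix.vandermonde t)ᵀ with hM
  have hdet : M.det ≠ 0 := by
    rw [hM, Matrix.det_transpose]
    exact Matrix.det_vandermonde_ne_zero_iff.mpr hinj
  set gv : Fin n → ℝ := fun i => gam K (i:ℕ) with hgv
  set lam : Fin n → ℝ := M⁻¹.mulVec gv with hlam
  have hsolve : ∀ i : Fin n, (∑ j, lam j * t j ^ (i:ℕ)) = gam K (i:ℕ) := by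
    have h1 : M.mulVec lam = gv := by
      rw [hlam, Matrix.mulVec_mulVec, Matrix.mul_nonsing_inv _
        (isUnit_iff_ne_zero.mpr hdet), Matrix.one_mulVec]
    intro i
    have := congrFun h1 i
    rw [Matrix.mulVec, dotProduct] at this
    simp only [hM, Matrix.transpose_apply, Matrix.vandermonde, Matrix.of_apply,
      hgv] at this
    rw [← this]
    exact Finset.sum_congr rfl (fun j _ => mul_comm _ _)
  set μ : ℕ → ℝ := fun k => ∑ j, lam j * t j ^ k with hμ
  have hbase : ∀ k < n, μ k = gam K k := by
    intro k hk
    exact hsolve ⟨k, hk⟩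
  -- the recurrence step
  have hstep : ∀ s : ℕ, (∑ k ∈ range (n+1), q.coeff k * gam K (k+s)) = 0 →
      (∀ k < n + s, μ k = gam K k) → μ (n+s) = gam K (n+s) := by
    intro s hgs hind
    have hrec : (∑ k ∈ range (n+1), q.coeff k * μ (k+s)) = 0 := by
      have : ∀ j : Fin n, (∑ k ∈ range (n+1), q.coeff k * (lam j * t j ^ (k+s))) = 0 := by
        intro j
        have hev : q.eval (t j) = ∑ k ∈ range (n+1), q.coeff k * t j ^ k :=
          eval_eq_sum_range' (by omega) _
        have : (∑ k ∈ range (n+1), q.coeff k * (lam j * t j ^ (k+s)))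
            = lam j * t j ^ s * ∑ k ∈ range (n+1), q.coeff k * t j ^ k := by
          rw [Finset.mul_sum]
          apply Finset.sum_congr rfl
          intro k _
          rw [pow_add]; ring
        rw [this, ← hev, hroot j, mul_zero]
      calc (∑ k ∈ range (n+1), q.coeff k * μ (k+s))
          = ∑ k ∈ range (n+1), ∑ j, q.coeff k * (lam j * t j ^ (k+s)) := by
            apply Finset.sum_congr rfl; intro k _; rw [hμ]; rw [Finset.mul_sum]
        _ = ∑ j, ∑ k ∈ range (n+1), q.coeff k * (lam j * t j ^ (k+s)) :=
            Finset.sum_comm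
        _ = 0 := by rw [Finset.sum_congr rfl (fun j _ => this j), Finset.sum_const_zero]
    have hdiff : (∑ k ∈ range (n+1), q.coeff k * (μ (k+s) - gam K (k+s))) = 0 := by
      have : (∑ k ∈ range (n+1), q.coeff k * (μ (k+s) - gam K (k+s)))
          = (∑ k ∈ range (n+1), q.coeff k * μ (k+s))
            - (∑ k ∈ range (n+1), q.coeff k * gam K (k+s)) := by
        rw [← Finset.sum_sub_distrib]
        apply Finset.sum_congr rfl; intro k _; ring
      rw [this, hrec, hgs, sub_zero]
    rw [Finset.sum_range_succ] at hdiff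
    have hzero : (∑ k ∈ range n, q.coeff k * (μ (k+s) - gam K (k+s))) = 0 := by
      apply Finset.sum_eq_zero
      intro k hk
      rw [hind (k+s) (by simp at hk; omega), sub_self, mul_zero]
    rw [hzero, zero_add] at hdiff
    have := mul_eq_zero.mp hdiff
    rcases this with h | h
    · exact absurd h hlead
    · linarith [sub_eq_zero.mp h]
  -- gamma sums
  have hg0 : (∑ k ∈ range (n+1), q.coeff k * gam K (k+0)) = 0 := by
    have hsub : ({0, 2} : Finset ℕ) ⊆ range (n+1) := by
      intro x hx; simp at hx; rcases hx with rfl | rfl <;> simp <;> omega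
    rw [← Finset.sum_subset hsub]
    · rw [Finset.sum_pair (by norm_num : (0:ℕ) ≠ 2)]
      simp only [add_zero, gam]
      norm_num
      rw [hc2]
      field_simp
      ring
    · intro x hx hnx
      simp at hnx
      have h1 : gam K (x+0) = 0 := by
        rw [gam]; rw [if_neg (by omega), if_neg (by omega)]
      rw [h1, mul_zero]
  have hg1 : (∑ k ∈ range (n+1), q.coeff k * gam K (k+1)) = 0 := by
    have hsub : ({1} : Finset ℕ) ⊆ range (n+1) := by
      intro x hx; simp at hx; subst hx; simp; omega
    rw [← Finset.sum_subset hsub]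
    · rw [Finset.sum_singleton, hc1, zero_mul]
    · intro x hx hnx
      simp at hnx
      have h1 : gam K (x+1) = 0 := by
        rw [gam]; rw [if_neg (by omega), if_neg (by omega)]
      rw [h1, mul_zero]
  refine ⟨lam, ?_⟩
  intro k hk
  rcases lt_or_ge k n with h | h
  · exact hbase k h
  · have hμn : μ n = gam K n := hstep 0 hg0 (fun k hk => hbase k (by omega))
    rcases Nat.eq_or_lt_of_le h with h' | h'
    · rw [← h']; exact_mod_cast hμn
    · have hkn : k = n + 1 := by omega
      subst hkn
      exact hstep 1 hg1 (fun k hk => by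
        rcases lt_or_ge k n with h2 | h2
        · exact hbase k h2
        · have : k = n := by omega
          subst this; exact hμn)


lemma moments_exist (m : ℕ) (hm : 1 ≤ m) (K : ℝ) (hK : 0 < K) :
    ∃ (t lam : Fin (2*m) → ℝ),
      ∀ k ≤ 2*m+1, (∑ j, lam j * t j ^ k) = gam K k := by
  obtain ⟨t, q, hinj, hdeg, hlead, hc1, hc0, hc2, hroot⟩ := nodes_exist m hm K hK
  obtain ⟨lam, h⟩ := moments_of_nodes (2*m) (by omega) K hK t q hinj hdeg hlead
    hc1 hc0 hc2 hroot
  exact ⟨t, lam, h⟩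





lemma sum_expand (n d : ℕ) (t lam : Fin n → ℝ) (X Y : ℝ) :
    (∑ j, lam j * (X + t j * Y)^d)
      = ∑ k ∈ range (d+1), (d.choose k : ℝ) * (∑ j, lam j * t j ^ k)
          * X^(d-k) * Y^k := by
  have expand : ∀ j : Fin n, (X + t j * Y)^d
      = ∑ k ∈ range (d+1), (d.choose k : ℝ) * (t j)^k * X^(d-k) * Y^k := by
    intro j
    rw [add_comm, add_pow]
    apply Finset.sum_congr rfl
    intro k _
    rw [mul_pow]
    ring
  calc (∑ j, lam j * (X + t j * Y)^d)
      = ∑ j, ∑ k ∈ range (d+1),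
          lam j * ((d.choose k : ℝ) * (t j)^k * X^(d-k) * Y^k) := by
        apply Finset.sum_congr rfl
        intro j _
        rw [expand j, Finset.mul_sum]
    _ = ∑ k ∈ range (d+1), ∑ j,
          lam j * ((d.choose k : ℝ) * (t j)^k * X^(d-k) * Y^k) := Finset.sum_comm
    _ = _ := by
        apply Finset.sum_congr rfl
        intro k _
        rw [show ((d.choose k : ℝ) * (∑ j, lam j * t j ^ k)) * X^(d-k) * Y^k
            = ∑ j, lam j * ((d.choose k : ℝ) * (t j)^k * X^(d-k) * Y^k) from by
          rw [Finset.mul_sum, Finset.sum_mul, Finset.sum_mul]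
          exact Finset.sum_congr rfl (fun j _ => by ring)]

lemma gam_sum (d N : ℕ) (hd : 3 ≤ d) (hN3 : 3 ≤ N) (hNd : N ≤ d+1) (μ : ℕ → ℝ)
    (hμ : ∀ k < N, μ k = gam ((d:ℝ)*((d:ℝ)-1)) k) (X Y : ℝ) :
    (∑ k ∈ range N, (d.choose k : ℝ) * μ k * X^(d-k) * Y^k)
      = X^(d-2) * (X^2 + Y^2) := by
  have hKpos : (0:ℝ) < (d:ℝ)*((d:ℝ)-1) := by
    have : (3:ℝ) ≤ (d:ℝ) := by exact_mod_cast hd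
    nlinarith
  have hsub : ({0, 2} : Finset ℕ) ⊆ range N := by
    intro x hx; simp at hx; rcases hx with rfl | rfl <;> simp <;> omega
  rw [← Finset.sum_subset hsub]
  · rw [Finset.sum_pair (by norm_num : (0:ℕ) ≠ 2)]
    rw [hμ 0 (by omega), hμ 2 (by omega)]
    have h1 : X^(d-0) = X^(d-2) * X^2 := by
      rw [← pow_add]; congr 1; omega
    simp only [gam]
    norm_num
    rw [Nat.cast_choose_two, Nat.sub_zero] at *
    rw [h1]
    have hne : (d:ℝ)*((d:ℝ)-1) ≠ 0 := ne_of_gt hKpos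
    have hd3 : (3:ℝ) ≤ (d:ℝ) := by exact_mod_cast hd
    have hne1 : (d:ℝ) - 1 ≠ 0 := by linarith
    field_simp
  · intro x hx hnx
    simp at hnx
    rw [hμ x (by simp at hx; omega)]
    rw [gam, if_neg (by omega), if_neg (by omega)]
    ring

lemma core_decomp (d : ℕ) (hd : 3 ≤ d) :
    ∃ lam A B : Fin (d-1) → ℝ,
      ∀ X Y : ℝ, (∑ j, lam j * (A j * X + B j * Y)^d)
        = X^(d-2) * (X^2 + Y^2) := by
  have hKpos : (0:ℝ) < (d:ℝ)*((d:ℝ)-1) := by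
    have : (3:ℝ) ≤ (d:ℝ) := by exact_mod_cast hd
    nlinarith
  rcases Nat.even_or_odd d with he | ho
  · -- d even : d-2 = 2m, use snoc with infinity node
    obtain ⟨m, hm⟩ : ∃ m, d-2 = 2*m := by
      rcases he with ⟨c, hc⟩; exact ⟨c-1, by omega⟩
    have hm1 : 1 ≤ m := by omega
    obtain ⟨t, lam0, hmom⟩ := moments_exist m hm1 ((d:ℝ)*((d:ℝ)-1)) hKpos
    -- reindex to Fin (d-2)
    have hd2 : d-2 = 2*m := hm
    have hd1 : d-1 = (d-2) + 1 := by omega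
    set μ : ℕ → ℝ := fun k => ∑ j, lam0 j * t j ^ k with hμdef
    have hmom' : ∀ k ≤ d-1, μ k = gam ((d:ℝ)*((d:ℝ)-1)) k := by
      intro k hk; exact hmom k (by omega)
    set linf : ℝ := -(μ d) with hlinf
    have e : Fin (d-1) ≃ Fin ((2*m) + 1) := finCongr (by omega)
    refine ⟨fun j => (Fin.snoc (fun i : Fin (2*m) => lam0 i) linf : Fin (2*m+1) → ℝ) (e j),
           fun j => (Fin.snoc (fun _ : Fin (2*m) => (1:ℝ)) 0 : Fin (2*m+1) → ℝ) (e j),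
           fun j => (Fin.snoc (fun i : Fin (2*m) => t i) 1 : Fin (2*m+1) → ℝ) (e j), ?_⟩
    intro X Y
    rw [Fintype.sum_equiv e _ (fun j => (Fin.snoc (fun i : Fin (2*m) => lam0 i) linf : Fin (2*m+1) → ℝ) j *
        ((Fin.snoc (fun _ : Fin (2*m) => (1:ℝ)) 0 : Fin (2*m+1) → ℝ) j * X +
         (Fin.snoc (fun i : Fin (2*m) => t i) 1 : Fin (2*m+1) → ℝ) j * Y)^d)
        (fun j => rfl)]
    rw [Fin.sum_univ_castSucc]
    simp only [Fin.snoc_castSucc, Fin.snoc_last]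
    have hmain : (∑ j : Fin (2*m), lam0 j * ((1:ℝ) * X + t j * Y)^d)
        = ∑ k ∈ range (d+1), (d.choose k : ℝ) * μ k * X^(d-k) * Y^k := by
      rw [← sum_expand]
      apply Finset.sum_congr rfl
      intro j _
      rw [one_mul]
    rw [hmain, Finset.sum_range_succ]
    have hlast : (d.choose d : ℝ) * μ d * X^(d-d) * Y^d = μ d * Y^d := by
      rw [Nat.choose_self, Nat.sub_self]
      push_cast; ring
    have hgs := gam_sum d d hd (by omega) (by omega) μ
      (fun k hk => hmom' k (by omega)) X Y
    have hy : ((0:ℝ)*X + 1*Y)^d = Y^d := by rw [show (0:ℝ)*X+1*Y = Y from by ring]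
    rw [hlast, hgs, hy, hlinf]
    ring
  · -- d odd : d-1 = 2m
    obtain ⟨m, hm⟩ : ∃ m, d-1 = 2*m := by
      rcases ho with ⟨c, hc⟩; exact ⟨c, by omega⟩
    have hm1 : 1 ≤ m := by omega
    obtain ⟨t, lam0, hmom⟩ := moments_exist m hm1 ((d:ℝ)*((d:ℝ)-1)) hKpos
    have e : Fin (d-1) ≃ Fin (2*m) := finCongr hm
    refine ⟨fun j => lam0 (e j), fun _ => 1, fun j => t (e j), ?_⟩
    intro X Y
    rw [Fintype.sum_equiv e _ (fun j => lam0 j * ((1:ℝ) * X + t j * Y)^d)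
        (fun j => rfl)]
    have : (∑ j : Fin (2*m), lam0 j * ((1:ℝ) * X + t j * Y)^d)
        = ∑ j : Fin (2*m), lam0 j * (X + t j * Y)^d := by
      apply Finset.sum_congr rfl; intro j _; rw [one_mul]
    rw [this, sum_expand]
    exact gam_sum d (d+1) hd (by omega) (by omega) _ (fun k hk => hmom k (by omega)) X Y


lemma quad_rep_sq (a b A B C' : ℝ) (hab : a ≠ 0 ∨ b ≠ 0)
    (hpos : ∀ u v : ℝ, A*u^2 + B*u*v + C'*v^2 = 0 → u = 0 ∧ v = 0) :
    ∃ σ t c e : ℝ, (σ = 1 ∨ σ = -1) ∧ 0 < t ∧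
      ∀ u v : ℝ, A*u^2 + B*u*v + C'*v^2
        = σ * ((t*(a*u+b*v))^2 + (c*u+e*v)^2) := by
  have hA : A ≠ 0 := by
    intro h
    rcases hpos 1 0 (by rw [h]; ring) with ⟨h1, _⟩
    exact one_ne_zero h1
  have hq0 : A*b^2 - B*a*b + C'*a^2 ≠ 0 := by
    intro h
    rcases hpos b (-a) (by nlinarith [h]) with ⟨h1, h2⟩
    have ha0 : a = 0 := by linarith
    rcases hab with h' | h'
    · exact h' ha0
    · exact h' h1
  have hΔ : 0 < 4*A*C' - B^2 := by
    rcases lt_or_ge 0 (4*A*C' - B^2) with h | h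
    · exact h
    · exfalso
      have hd : 0 ≤ B^2 - 4*A*C' := by linarith
      set u := -B + Real.sqrt (B^2 - 4*A*C') with hu
      have hsq : (Real.sqrt (B^2 - 4*A*C'))^2 = B^2 - 4*A*C' := Real.sq_sqrt hd
      have h1 : u^2 + 2*B*u + 4*A*C' = 0 := by
        rw [hu]; linear_combination hsq
      rcases hpos u (2*A) (by linear_combination A * h1) with ⟨_, h2⟩
      exact hA (by linarith)
  set σ : ℝ := if 0 < A*b^2 - B*a*b + C'*a^2 then 1 else -1 with hσ
  have hσ1 : σ = 1 ∨ σ = -1 := by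
    by_cases h : 0 < A*b^2 - B*a*b + C'*a^2 <;> simp [hσ, h]
  have hσ2 : σ^2 = 1 := by rcases hσ1 with h | h <;> rw [h] <;> ring
  have hq0' : 0 < σ * (A*b^2 - B*a*b + C'*a^2) := by
    by_cases h : 0 < A*b^2 - B*a*b + C'*a^2
    · simp only [hσ, if_pos h]; linarith
    · simp only [hσ, if_neg h]
      rcases lt_or_eq_of_le (not_lt.mp h) with h' | h'
      · linarith
      · exact (hq0 h').elim
  set Q0 := σ * (A*b^2 - B*a*b + C'*a^2) with hQ0
  set s : ℝ := (4*A*C' - B^2) / (4*Q0) with hs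
  have hspos : 0 < s := by positivity
  set A'' : ℝ := σ*A - s*a^2 with hA''
  set B'' : ℝ := σ*B - 2*s*a*b with hB''
  set C'' : ℝ := σ*C' - s*b^2 with hC''
  have h4 : s * (4*Q0) = 4*A*C' - B^2 := by
    rw [hs]; field_simp
  have key : B''^2 = 4*A''*C'' := by
    rw [hA'', hB'', hC'', hQ0] at *
    nlinarith [h4, hσ2]
  have hval : A''*b^2 - B''*a*b + C''*a^2 = Q0 := by
    rw [hA'', hB'', hC'', hQ0]; ring
  set t := Real.sqrt s with ht
  have htpos : 0 < t := Real.sqrt_pos.mpr hspos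
  have ht2 : t^2 = s := Real.sq_sqrt hspos.le
  obtain ⟨c, e, hc2, hce, he2⟩ : ∃ c e : ℝ, c^2 = A'' ∧ 2*(c*e) = B'' ∧ e^2 = C'' := by
    by_cases hA2 : A'' = 0
    · have hB2 : B'' = 0 := by
        have hB2' : B''^2 = 0 := by rw [key, hA2]; ring
        exact pow_eq_zero_iff (two_ne_zero) |>.mp hB2'
      have hval2 : C''*a^2 = Q0 := by rw [← hval, hA2, hB2]; ring
      have hC2 : 0 < C'' := by
        rcases lt_or_ge 0 C'' with h | h
        · exact h
        · exfalso
          nlinarith [hval2, hq0', mul_nonneg (neg_nonneg.mpr h) (sq_nonneg a)]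
      exact ⟨0, Real.sqrt C'', by rw [hA2]; ring, by rw [hB2]; ring, Real.sq_sqrt hC2.le⟩
    · have hsq : A''*Q0 = (A''*b - B''*a/2)^2 := by
        linear_combination (-A'')*hval + (-(a^2)/4)*key
      have hA2pos : 0 < A'' := by
        rcases lt_or_gt_of_ne hA2 with h | h
        · exfalso
          have : A''*Q0 < 0 := mul_neg_of_neg_of_pos h hq0'
          nlinarith [hsq, sq_nonneg (A''*b - B''*a/2)]
        · exact h
      set c := Real.sqrt A'' with hc
      have hc2 : c^2 = A'' := Real.sq_sqrt hA2pos.le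
      have hcne : c ≠ 0 := by positivity
      refine ⟨c, B''/(2*c), hc2, by field_simp, ?_⟩
      rw [div_pow, div_eq_iff (by positivity)]
      linear_combination key - 4*(σ*C' - s*b^2)*hc2
  refine ⟨σ, t, c, e, hσ1, htpos, fun u v => ?_⟩
  linear_combination (-σ*(a*u+b*v)^2)*ht2 + (-σ*u^2)*hc2 + (-σ*u*v)*hce +
    (-σ*v^2)*he2 + (-σ*u^2)*hA'' + (-σ*u*v)*hB'' + (-σ*v^2)*hC'' -
    (A*u^2+B*u*v+C'*v^2)*hσ2

end AuxOneVar



open MvPolynomial Finset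

lemma finsupp_eq_iff (m m' : Fin 2 →₀ ℕ) : m = m' ↔ (m 0 = m' 0 ∧ m 1 = m' 1) := by
  constructor
  · rintro rfl; exact ⟨rfl, rfl⟩
  · rintro ⟨h0, h1⟩; ext i; fin_cases i <;> assumption

lemma degree_fin2 (m : Fin 2 →₀ ℕ) : m.degree = m 0 + m 1 := by
  show (∑ i ∈ m.support, m i) = m 0 + m 1
  rw [Finset.sum_subset (Finset.subset_univ m.support)
    (fun i _ hi => Finsupp.notMem_support_iff.mp hi), Fin.sum_univ_two]

lemma finsupp_two (m : Fin 2 →₀ ℕ) (hm : m 0 + m 1 = 2) :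
    m = Finsupp.single 0 2 ∨ m = Finsupp.single 0 1 + Finsupp.single 1 1 ∨
      m = Finsupp.single 1 2 := by
  have h0 : m 0 = 2 ∧ m 1 = 0 ∨ m 0 = 1 ∧ m 1 = 1 ∨ m 0 = 0 ∧ m 1 = 2 := by omega
  rcases h0 with ⟨h1, h2⟩ | ⟨h1, h2⟩ | ⟨h1, h2⟩
  · left; rw [finsupp_eq_iff]; simp [h1, h2, Finsupp.single_apply]
  · right; left; rw [finsupp_eq_iff]; simp [h1, h2, Finsupp.single_apply]
  · right; right; rw [finsupp_eq_iff]; simp [h1, h2, Finsupp.single_apply]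

lemma quad_repr (p : MvPolynomial (Fin 2) ℝ) (hp2 : p.IsHomogeneous 2) :
    ∃ A B C' : ℝ, p = C A * X 0 ^ 2 + C B * (X 0 * X 1) + C C' * X 1 ^ 2 := by
  refine ⟨coeff (Finsupp.single 0 2) p,
    coeff (Finsupp.single 0 1 + Finsupp.single 1 1) p, coeff (Finsupp.single 1 2) p, ?_⟩
  have hX : (C (coeff (Finsupp.single 0 1 + Finsupp.single 1 1) p) *
      (X 0 * X 1) : MvPolynomial (Fin 2) ℝ)
      = monomial (Finsupp.single 0 1 + Finsupp.single 1 1)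
        (coeff (Finsupp.single 0 1 + Finsupp.single 1 1) p) := by
    rw [X, X, monomial_mul, C_mul_monomial, mul_one, mul_one]
  ext m
  rw [hX, coeff_add, coeff_add, C_mul_X_pow_eq_monomial, C_mul_X_pow_eq_monomial,
    coeff_monomial, coeff_monomial, coeff_monomial]
  have hne : ∀ m m' : Fin 2 →₀ ℕ, ¬(m 0 = m' 0 ∧ m 1 = m' 1) → m ≠ m' := by
    intro m m' h hc; exact h ((finsupp_eq_iff m m').mp hc)
  by_cases hm : m 0 + m 1 = 2
  · rcases finsupp_two m hm with h | h | h <;> subst h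
    · rw [if_pos rfl, if_neg (hne _ _ (by simp [Finsupp.single_apply])),
        if_neg (by apply hne; simp [Finsupp.single_apply])]; ring
    · rw [if_pos rfl, if_neg (by apply hne; simp [Finsupp.single_apply]),
        if_neg (by apply hne; simp [Finsupp.single_apply])]; ring
    · rw [if_pos rfl, if_neg (by apply hne; simp [Finsupp.single_apply]),
        if_neg (by apply hne; simp [Finsupp.single_apply])]; ring
  · have hz : coeff m p = 0 := by
      apply hp2.coeff_eq_zero; rw [degree_fin2]; omega
    rw [hz, if_neg (fun h => by subst h; simp [Finsupp.single_apply] at hm),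
      if_neg (fun h => by subst h; simp [Finsupp.single_apply] at hm),
      if_neg (fun h => by subst h; simp [Finsupp.single_apply] at hm)]
    ring




noncomputable def opd (u v : ℝ) (g : MvPolynomial (Fin 2) ℝ) : MvPolynomial (Fin 2) ℝ :=
  C u * pderiv 0 g + C v * pderiv 1 g

lemma opd_add (u v : ℝ) (g h : MvPolynomial (Fin 2) ℝ) :
    opd u v (g + h) = opd u v g + opd u v h := by
  simp only [opd, map_add]; ring

lemma opd_sum {n : ℕ} (u v : ℝ) (F : Fin n → MvPolynomial (Fin 2) ℝ) :
    opd u v (∑ j, F j) = ∑ j, opd u v (F j) := by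
  simp only [opd, map_sum, Finset.mul_sum, ← Finset.sum_add_distrib]

lemma opd_mul (u v : ℝ) (g h : MvPolynomial (Fin 2) ℝ) :
    opd u v (g * h) = opd u v g * h + g * opd u v h := by
  simp only [opd, pderiv_mul]; ring

lemma opd_C (u v c : ℝ) : opd u v (C c) = 0 := by
  simp [opd]

lemma opd_C_mul (u v c : ℝ) (g : MvPolynomial (Fin 2) ℝ) :
    opd u v (C c * g) = C c * opd u v g := by
  rw [opd_mul, opd_C]; ring

lemma pderiv0_lform (A B : ℝ) : pderiv 0 (lformR A B) = C A := by
  simp [lformR]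

lemma pderiv1_lform (A B : ℝ) : pderiv 1 (lformR A B) = C B := by
  simp [lformR]

lemma opd_lform (u v A B : ℝ) : opd u v (lformR A B) = C (u*A + v*B) := by
  simp only [opd, pderiv0_lform, pderiv1_lform, C_add, C_mul]

lemma opd_lpow (u v A B : ℝ) (e : ℕ) :
    opd u v ((lformR A B)^(e+1)) = C (((e:ℝ)+1) * (u*A + v*B)) * lformR A B ^ e := by
  have hp : ∀ i : Fin 2, (pderiv i) ((lformR A B)^(e+1))
      = (e+1) • ((lformR A B)^e * (pderiv i) (lformR A B)) := by
    intro i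
    rw [Derivation.leibniz_pow]
    simp
  simp only [opd, hp, pderiv0_lform, pderiv1_lform, nsmul_eq_mul]
  rw [show ((e+1 : ℕ) : MvPolynomial (Fin 2) ℝ) = C (((e:ℝ)+1))
    from by push_cast; simp]
  simp only [C_add, C_mul, C_1]
  ring

lemma opd_term (u v lam A B : ℝ) (e : ℕ) :
    opd u v (C lam * (lformR A B)^(e+1))
      = C (lam * ((e:ℝ)+1) * (u*A + v*B)) * lformR A B ^ e := by
  rw [opd_C_mul, opd_lpow]
  simp only [C_mul]
  ring

lemma lform_ne_zero (a b : ℝ) (hab : ¬(a = 0 ∧ b = 0)) : lformR a b ≠ 0 := by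
  intro h
  have h1 : eval ![a, b] (lformR a b) = 0 := by rw [h]; simp
  simp [lformR] at h1
  have : a = 0 ∧ b = 0 := by constructor <;> nlinarith [h1, sq_nonneg a, sq_nonneg b]
  exact hab this

lemma lform_zero : lformR 0 0 = 0 := by simp [lformR]

lemma opd_zero (u v : ℝ) : opd u v 0 = 0 := by simp [opd]

lemma lower_ind (a b : ℝ) (hab : ¬(a = 0 ∧ b = 0)) (w : MvPolynomial (Fin 2) ℝ)
    (hw : eval ![b, -a] w ≠ 0) :
    ∀ (r : ℕ) (lam A B : Fin r → ℝ),
      (∀ j, lam j = 0 ∨ B j * a - A j * b ≠ 0 ∨ (A j = 0 ∧ B j = 0)) →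
      ∀ (k : ℕ) (c : ℝ) (m : MvPolynomial (Fin 2) ℝ), c ≠ 0 → r ≤ k →
      lformR a b ^ k * (C c * w + lformR a b * m)
        ≠ ∑ j, C (lam j) * lformR (A j) (B j) ^ (k+1) := by
  intro r
  induction r with
  | zero =>
    intro lam A B hcond k c m hc hrk hE
    rw [Fin.sum_univ_zero] at hE
    have h1 : lformR a b ^ k ≠ 0 := pow_ne_zero _ (lform_ne_zero a b hab)
    have h2 : C c * w + lformR a b * m ≠ 0 := by
      intro h
      have h3 : eval ![b, -a] (C c * w + lformR a b * m) = 0 := by rw [h]; simp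
      have h4 : eval ![b, -a] (lformR a b) = 0 := by simp [lformR]; ring
      simp only [eval_add, eval_mul, eval_C, h4, zero_mul] at h3
      rw [add_zero] at h3
      exact (mul_ne_zero hc hw) h3
    exact mul_ne_zero h1 h2 hE
  | succ r ih =>
    intro lam A B hcond k c m hc hrk hE
    obtain ⟨k', rfl⟩ : ∃ k', k = k' + 1 := ⟨k - 1, by omega⟩
    set j0 : Fin (r+1) := Fin.last r with hj0
    obtain ⟨u, v, hnl, hlast⟩ : ∃ u v : ℝ, u*a + v*b ≠ 0 ∧
        opd u v (C (lam j0) * lformR (A j0) (B j0) ^ (k'+1+1)) = 0 := by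
      by_cases hx : B j0 * a - A j0 * b ≠ 0
      · refine ⟨B j0, -(A j0), fun h => hx (by linarith), ?_⟩
        rw [opd_term, show B j0 * A j0 + -(A j0) * B j0 = 0 from by ring]
        simp
      · refine ⟨a, b, fun h => hab ⟨by nlinarith [sq_nonneg a, sq_nonneg b],
          by nlinarith [sq_nonneg a, sq_nonneg b]⟩, ?_⟩
        push_neg at hx
        rcases hcond j0 with h | h | h
        · rw [h]; simp [opd]
        · exact absurd h (by simpa using hx)
        · rw [h.1, h.2, lform_zero]
          rw [show (0:MvPolynomial (Fin 2) ℝ)^(k'+1+1) = 0 from by simp]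
          rw [mul_zero, opd_zero]
    have hE2 := congrArg (opd u v) hE
    rw [opd_sum, Fin.sum_univ_castSucc, hlast, add_zero] at hE2
    have hLHS : opd u v (lformR a b ^ (k'+1) * (C c * w + lformR a b * m))
        = lformR a b ^ k' * (C (((k':ℝ)+1) * (u*a+v*b) * c) * w
          + lformR a b * (C (((k':ℝ)+1) * (u*a+v*b)) * m + C c * opd u v w
            + C (u*a+v*b) * m + lformR a b * opd u v m)) := by
      rw [opd_mul, opd_lpow, opd_add, opd_C_mul, opd_mul, opd_lform]
      simp only [C_add, C_mul, C_1]
      ring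
    rw [hLHS] at hE2
    have hE3 : lformR a b ^ k' * (C (((k':ℝ)+1) * (u*a+v*b) * c) * w
        + lformR a b * (C (((k':ℝ)+1) * (u*a+v*b)) * m + C c * opd u v w
          + C (u*a+v*b) * m + lformR a b * opd u v m))
        = ∑ j : Fin r, C ((fun j => lam (Fin.castSucc j) * (((k'+1:ℕ):ℝ)+1)
            * (u * A (Fin.castSucc j) + v * B (Fin.castSucc j))) j)
          * lformR (A (Fin.castSucc j)) (B (Fin.castSucc j)) ^ (k'+1) := by
      rw [hE2]
      exact Finset.sum_congr rfl (fun j _ => by rw [opd_term])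
    have hcnew : ((k':ℝ)+1) * (u*a+v*b) * c ≠ 0 := by
      apply mul_ne_zero (mul_ne_zero _ hnl) hc
      positivity
    exact ih (fun j => lam (Fin.castSucc j) * (((k'+1:ℕ):ℝ)+1)
        * (u * A (Fin.castSucc j) + v * B (Fin.castSucc j)))
      (fun j => A (Fin.castSucc j)) (fun j => B (Fin.castSucc j))
      (fun j => by
        rcases hcond (Fin.castSucc j) with h | h | h
        · left
          show lam (Fin.castSucc j) * _ * _ = 0
          rw [h, zero_mul, zero_mul]
        · right; left; exact h
        · right; right; exact h)
      k' (((k':ℝ)+1) * (u*a+v*b) * c) _ hcnew (by omega) hE3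
















/-- `L_ℝ(ℓ^(d-2) p) = d - 1` for a nonzero real linear form `ℓ` and an irreducible real
quadratic form `p` (no nontrivial real zeros). -/
theorem real_rank_linear_times_quadratic (d : ℕ) (hd : 3 ≤ d)
    (a b : ℝ) (hab : (a, b) ≠ (0, 0))
    (p : MvPolynomial (Fin 2) ℝ) (hp2 : p.IsHomogeneous 2)
    (hirr : ∀ v : Fin 2 → ℝ, eval v p = 0 → v = 0)
    (f : MvPolynomial (Fin 2) ℝ) (hf : f = lformR a b ^ (d - 2) * p) :
    rankR d f = d - 1 := by
  have hab' : ¬(a = 0 ∧ b = 0) := by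
    intro ⟨h1, h2⟩; exact hab (by rw [h1, h2])
  obtain ⟨A, B, C', hrepr⟩ := quad_repr p hp2
  have hevalp : ∀ u v : ℝ, eval ![u, v] p = A*u^2 + B*u*v + C'*v^2 := by
    intro u v
    rw [hrepr]
    simp
    ring
  have hpos : ∀ u v : ℝ, A*u^2 + B*u*v + C'*v^2 = 0 → u = 0 ∧ v = 0 := by
    intro u v huv
    have := hirr ![u, v] (by rw [hevalp]; exact huv)
    exact ⟨congrFun this 0, congrFun this 1⟩
  -- upper bound: membership of d-1
  have hmem : (d-1) ∈ {r : ℕ | ∃ lam a b : Fin r → ℝ,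
      f = ∑ j, C (lam j) * lformR (a j) (b j) ^ d} := by
    obtain ⟨σ, t, c, e, hσ, htpos, hquad⟩ := quad_rep_sq a b A B C'
      (by rcases hab' with h; by_cases h1 : a = 0
          · right; intro h2; exact hab' ⟨h1, h2⟩
          · left; exact h1) hpos
    obtain ⟨lam0, A0, B0, hcore⟩ := core_decomp d hd
    have htne : (t:ℝ)^(d-2) ≠ 0 := pow_ne_zero _ (ne_of_gt htpos)
    refine ⟨fun j => σ * lam0 j / t^(d-2),
      fun j => A0 j * (t*a) + B0 j * c,
      fun j => A0 j * (t*b) + B0 j * e, ?_⟩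
    apply MvPolynomial.funext
    intro x
    have hx : x = ![x 0, x 1] := by
      funext i; fin_cases i <;> simp
    rw [eval_sum]
    have hterm : ∀ j, eval x (C (σ * lam0 j / t^(d-2)) *
        lformR (A0 j * (t*a) + B0 j * c) (A0 j * (t*b) + B0 j * e) ^ d)
        = (σ / t^(d-2)) * (lam0 j *
          (A0 j * (t*(a * x 0 + b * x 1)) + B0 j * (c * x 0 + e * x 1))^d) := by
      intro j
      simp only [eval_mul, eval_C, eval_pow, lformR, eval_add, eval_X]
      ring_nf
    rw [Finset.sum_congr rfl (fun j _ => hterm j), ← Finset.mul_sum]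
    rw [hcore (t*(a * x 0 + b * x 1)) (c * x 0 + e * x 1)]
    have hevp : eval x p = σ * ((t*(a * x 0 + b * x 1))^2 + (c * x 0 + e * x 1)^2) := by
      rw [hx, hevalp]
      exact hquad (x 0) (x 1)
    rw [hf]
    simp only [eval_mul, eval_pow, lformR, eval_add, eval_C, eval_X]
    rw [hevp]
    rw [show (t*(a*x 0+b*x 1))^(d-2) = t^(d-2)*(a*x 0+b*x 1)^(d-2) from mul_pow _ _ _]
    field_simp
  -- lower bound
  have hlow : ∀ r ∈ {r : ℕ | ∃ lam a b : Fin r → ℝ,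
      f = ∑ j, C (lam j) * lformR (a j) (b j) ^ d}, d-1 ≤ r := by
    intro r hr
    by_contra hcon
    push_neg at hcon
    have hrd : r ≤ d - 2 := by omega
    obtain ⟨lam, AA, BB, hE⟩ := hr
    -- apply opd b (-a)
    set w : MvPolynomial (Fin 2) ℝ := opd b (-a) p with hwdef
    have hw : eval ![b, -a] w ≠ 0 := by
      have hp0 : pderiv (0 : Fin 2) p = C (2*A) * X 0 + C B * X 1 := by
        rw [hrepr]
        simp [pderiv_mul, pderiv_X_self, pderiv_X_of_ne, pderiv_pow, map_ofNat]
        ring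
      have hp1 : pderiv (1 : Fin 2) p = C B * X 0 + C (2*C') * X 1 := by
        rw [hrepr]
        simp [pderiv_mul, pderiv_X_self, pderiv_X_of_ne, pderiv_pow, map_ofNat]
        ring
      have hwval : eval ![b, -a] w = 2*(A*b^2 + B*b*(-a) + C'*(-a)^2) := by
        rw [hwdef, opd, hp0, hp1]
        simp
        ring
      rw [hwval]
      intro hzz
      have h0 := hpos b (-a) (by nlinarith [hzz])
      exact hab' ⟨by linarith [h0.2], h0.1⟩
    obtain ⟨q, rfl⟩ : ∃ q, d = q + 3 := ⟨d - 3, by omega⟩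
    have hd2 : q + 3 - 2 = q + 1 := rfl
    have hd1 : q + 3 - 1 = q + 2 := rfl
    rw [hd2] at hf
    have hE2 := congrArg (opd b (-a)) hE
    rw [hf, opd_sum] at hE2
    have hL : opd b (-a) (lformR a b ^ (q+1) * p) = lformR a b ^ (q+1) * w := by
      rw [opd_mul, opd_lpow, show b*a + -a*b = 0 from by ring]
      simp
      exact Or.inl rfl
    rw [hL] at hE2
    have hE3 : lformR a b ^ (q+1) * (C 1 * w + lformR a b * 0)
        = ∑ j : Fin r, C ((fun j => lam j * (((q+2:ℕ):ℝ)+1) * (b * AA j + -a * BB j)) j)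
          * lformR (AA j) (BB j) ^ ((q+1)+1) := by
      rw [show (C 1 : MvPolynomial (Fin 2) ℝ) = 1 from by simp, one_mul,
        mul_zero, add_zero, hE2]
      apply Finset.sum_congr rfl
      intro j _
      rw [show (q+3) = (q+2)+1 from rfl, opd_term]
    exact lower_ind a b hab' w hw r _ AA BB
      (fun j => by
        by_cases hx : BB j * a - AA j * b ≠ 0
        · right; left; exact hx
        · left
          push_neg at hx
          show lam j * _ * _ = 0
          rw [show b * AA j + -a * BB j = -(BB j * a - AA j * b) from by ring, hx]
          ring)
      (q+1) 1 0 one_ne_zero (by omega) hE3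
  have hne : {r : ℕ | ∃ lam a b : Fin r → ℝ,
      f = ∑ j, C (lam j) * lformR (a j) (b j) ^ d}.Nonempty := ⟨d-1, hmem⟩
  exact le_antisymm (Nat.sInf_le hmem) (le_csInf hne hlow)
end

section
/- Let ℓ_0, ℓ_1, ℓ_2 be pairwise nonproportional linear forms over ℂ. Then L_ℂ(ℓ_0^2 ℓ_1^2) = 3 and L_ℂ(ℓ_0^2 ℓ_1 ℓ_2) = 3, while L_ℂ(ℓ_0^3 ℓ_1) = 4. -/
open MvPolynomial Finset

section helperZZ

lemma lemK (l c d : ℂ) (h1 : l*c^3*d = 1/4) (h2 : l*c^2*d^2 = 0) : False := by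
  have : (1 : ℂ) = 0 := by
    linear_combination (-(4 + 16*l*c^3*d))*h1 + (16*l*c^4)*h2
  exact one_ne_zero this

lemma lemD (l1 l2 l3 c1 c2 c3 d1 d2 d3 : ℂ) (hd1 : d1 = 0)
    (hB1 : 4*(l1*c1^3*d1 + l2*c2^3*d2 + l3*c3^3*d3) = 1)
    (hB2 : 6*(l1*c1^2*d1^2 + l2*c2^2*d2^2 + l3*c3^2*d3^2) = 0)
    (hB3 : 4*(l1*c1*d1^3 + l2*c2*d2^3 + l3*c3*d3^3) = 0)
    (hG1 : c1*d2*d3 + c2*d1*d3 + c3*d1*d2 = 0) : False := by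
  subst hd1
  have hcd : c1*(d2*d3) = 0 := by linear_combination hG1
  rcases mul_eq_zero.mp hcd with hc1 | hdd
  · subst hc1
    have hdd : d2*d3 = 0 := by
      linear_combination (-(d2*d3))*hB1 + ((2/3)*(c2*d3 + c3*d2))*hB2 + (-(c2*c3))*hB3
    rcases mul_eq_zero.mp hdd with hd2 | hd3
    · subst hd2
      exact lemK l3 c3 d3 (by linear_combination (1/4 : ℂ)*hB1) (by linear_combination (1/6 : ℂ)*hB2)
    · subst hd3
      exact lemK l2 c2 d2 (by linear_combination (1/4 : ℂ)*hB1) (by linear_combination (1/6 : ℂ)*hB2)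
  · rcases mul_eq_zero.mp hdd with hd2 | hd3
    · subst hd2
      exact lemK l3 c3 d3 (by linear_combination (1/4 : ℂ)*hB1) (by linear_combination (1/6 : ℂ)*hB2)
    · subst hd3
      exact lemK l2 c2 d2 (by linear_combination (1/4 : ℂ)*hB1) (by linear_combination (1/6 : ℂ)*hB2)

lemma aux3 (l1 l2 l3 c1 c2 c3 d1 d2 d3 : ℂ)
    (H : ∀ P Q : ℂ, P^3*Q
      = l1*(c1*P + d1*Q)^4 + l2*(c2*P + d2*Q)^4 + l3*(c3*P + d3*Q)^4) : False := by
  have hB0 : l1*c1^4 + l2*c2^4 + l3*c3^4 = 0 := by linear_combination (-1 : ℂ)*H 1 0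
  have hB4 : l1*d1^4 + l2*d2^4 + l3*d3^4 = 0 := by linear_combination (-1 : ℂ)*H 0 1
  have hB2 : 6*(l1*c1^2*d1^2 + l2*c2^2*d2^2 + l3*c3^2*d3^2) = 0 := by
    linear_combination H 1 0 + H 0 1 - (1/2 : ℂ)*H 1 1 - (1/2 : ℂ)*H 1 (-1)
  have hB1 : 4*(l1*c1^3*d1 + l2*c2^3*d2 + l3*c3^3*d3) = 1 := by
    linear_combination 2*H 1 0 - (1/2 : ℂ)*H 0 1 + (1/2 : ℂ)*H 1 1 + (1/6 : ℂ)*H 1 (-1) - (1/6 : ℂ)*H 2 1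
  have hB3 : 4*(l1*c1*d1^3 + l2*c2*d2^3 + l3*c3*d3^3) = 0 := by
    linear_combination (-2 : ℂ)*H 1 0 + (1/2 : ℂ)*H 0 1 - H 1 1 + (1/3 : ℂ)*H 1 (-1) + (1/6 : ℂ)*H 2 1
  have hG0 : d1*(d2*d3) = 0 := by
    linear_combination (-(d1*d2*d3))*hB1 + ((2/3)*(c1*d2*d3 + c2*d1*d3 + c3*d1*d2))*hB2
      + (-(c1*c2*d3 + c1*d2*c3 + d1*c2*c3))*hB3 + (4*c1*c2*c3)*hB4
  have hG1 : c1*d2*d3 + c2*d1*d3 + c3*d1*d2 = 0 := by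
    linear_combination (4*(d1*d2*d3))*hB0 + (-(c1*d2*d3 + c2*d1*d3 + c3*d1*d2))*hB1
      + ((2/3)*(c1*c2*d3 + c1*d2*c3 + d1*c2*c3))*hB2 + (-(c1*c2*c3))*hB3
  rcases mul_eq_zero.mp hG0 with hd1 | hdd
  · exact lemD l1 l2 l3 c1 c2 c3 d1 d2 d3 hd1 hB1 hB2 hB3 hG1
  · rcases mul_eq_zero.mp hdd with hd2 | hd3
    · exact lemD l2 l1 l3 c2 c1 c3 d2 d1 d3 hd2 (by linear_combination hB1)
        (by linear_combination hB2) (by linear_combination hB3) (by linear_combination hG1)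
    · exact lemD l3 l1 l2 c3 c1 c2 d3 d1 d2 hd3 (by linear_combination hB1)
        (by linear_combination hB2) (by linear_combination hB3) (by linear_combination hG1)

lemma aux2 (s t l1 l2 c1 c2 d1 d2 : ℂ) (ht : t ≠ 0)
    (H : ∀ P Q : ℂ, s*P^3*Q + t*P^2*Q^2
      = l1*(c1*P + d1*Q)^4 + l2*(c2*P + d2*Q)^4) : False := by
  have hB0 : l1*c1^4 + l2*c2^4 = 0 := by linear_combination (-1 : ℂ)*H 1 0
  have hB4 : l1*d1^4 + l2*d2^4 = 0 := by linear_combination (-1 : ℂ)*H 0 1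
  have hB2 : 6*(l1*c1^2*d1^2 + l2*c2^2*d2^2) = t := by
    linear_combination H 1 0 + H 0 1 - (1/2 : ℂ)*H 1 1 - (1/2 : ℂ)*H 1 (-1)
  have hB1 : 4*(l1*c1^3*d1 + l2*c2^3*d2) = s := by
    linear_combination 2*H 1 0 - (1/2 : ℂ)*H 0 1 + (1/2 : ℂ)*H 1 1 + (1/6 : ℂ)*H 1 (-1) - (1/6 : ℂ)*H 2 1
  have hB3 : 4*(l1*c1*d1^3 + l2*c2*d2^3) = 0 := by
    linear_combination (-2 : ℂ)*H 1 0 + (1/2 : ℂ)*H 0 1 - H 1 1 + (1/3 : ℂ)*H 1 (-1) + (1/6 : ℂ)*H 2 1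
  have ht3 : t^3 = 0 := by
    linear_combination
      (216*((l1*c1^2*d1^2 + l2*c2^2*d2^2)*(l1*d1^4 + l2*d2^4) - (l1*c1*d1^3 + l2*c2*d2^3)^2))*hB0
      - (t^2 + 6*t*(l1*c1^2*d1^2 + l2*c2^2*d2^2) + 36*(l1*c1^2*d1^2 + l2*c2^2*d2^2)^2)*hB2
      + (108*(l1*c1^3*d1 + l2*c2^3*d2)*(l1*c1^2*d1^2 + l2*c2^2*d2^2))*hB3
      - (216*(l1*c1^3*d1 + l2*c2^3*d2)^2)*hB4
  exact ht (pow_eq_zero_iff (three_ne_zero) |>.mp ht3)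

lemma dec1 (om : ℂ) (hom : om^2 + om + 1 = 0) (u v : ℂ) :
    u^2*v^2 = (1/18)*(u + v)^4 + (om/18)*(u + om*v)^4 + (om^2/18)*(u + om^2*v)^4 := by
  linear_combination ((1/18 : ℂ)*(-u^4 - 4*u^3*v*om^2 + 4*u^3*v*om - 4*u^3*v - 6*u^2*v^2*om^4
    + 6*u^2*v^2*om^3 - 12*u^2*v^2*om + 12*u^2*v^2 - 4*u*v^3*om^6 + 4*u*v^3*om^5 - 4*u*v^3*om^3
    + 4*u*v^3*om - 4*u*v^3 - v^4*om^8 + v^4*om^7 - v^4*om^5 + v^4*om^4 - v^4*om^3 + v^4*om - v^4))*hom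

lemma dec3 (u v : ℂ) :
    u^3*v = (1/16)*(u + v)^4 + (-(1/16))*(u - v)^4 + (-(Complex.I/16))*(u + Complex.I*v)^4
      + (Complex.I/16)*(u - Complex.I*v)^4 := by
  linear_combination ((1/16 : ℂ)*(8*u^3*v + 8*u*v^3*Complex.I^2 - 8*u*v^3))*Complex.I_sq

lemma exists_om : ∃ om : ℂ, om^2 + om + 1 = 0 := by
  refine ⟨(-1 + Complex.I*(Real.sqrt 3 : ℝ))/2, ?_⟩
  have h3 : ((Real.sqrt 3 : ℝ) : ℂ)^2 = 3 := by
    norm_cast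
    exact Real.sq_sqrt (by norm_num)
  linear_combination ((((Real.sqrt 3 : ℝ) : ℂ))^2/4)*Complex.I_sq - (1/4 : ℂ)*h3

lemma dec2 (s t : ℂ) (hs : s ≠ 0) (ht : t ≠ 0) :
    ∃ l1 l2 c1 c2 : ℂ, ∀ u v : ℂ,
      u^2*v*(s*u + t*v) = l1*v^4 + l2*(u + c1*v)^4 + (-l2)*(u + c2*v)^4 := by
  have h3 : ((Real.sqrt 3 : ℝ) : ℂ)^2 = 3 := by
    norm_cast
    exact Real.sq_sqrt (by norm_num)
  set r3 : ℂ := ((Real.sqrt 3 : ℝ) : ℂ) with hr3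
  set e : ℂ := 2*t/(3*s) with hedef
  have he : 3*s*e = 2*t := by
    rw [hedef]; field_simp
  have he0 : e ≠ 0 := by
    intro h
    rw [h, mul_zero] at he
    exact ht (by linear_combination (-1/2 : ℂ)*he)
  set c1 : ℂ := e*(1 + Complex.I*r3)/2 with hc1def
  have hc1 : c1^2 = e*c1 - e^2 := by
    rw [hc1def]
    linear_combination (e^2*r3^2/4)*Complex.I_sq - (e^2/4)*h3
  have hA2 : (2*c1 - e)^2 = -3*e^2 := by linear_combination 4*hc1
  have hA0 : 2*c1 - e ≠ 0 := by
    intro h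
    rw [h] at hA2
    have : e^2 = 0 := by linear_combination (1/3 : ℂ)*hA2
    exact he0 (pow_eq_zero_iff two_ne_zero |>.mp this)
  set l2 : ℂ := s/(4*(2*c1 - e)) with hl2def
  have hl2 : (2*c1 - e)*(4*l2) = s := by
    rw [hl2def]; field_simp
  set l1 : ℂ := 2*t^3/(27*s^2) with hl1def
  have hl1 : 27*s^2*l1 = 2*t^3 := by
    rw [hl1def]; field_simp
  refine ⟨l1, l2, c1, e - c1, fun u v => ?_⟩
  have hmul : (108 : ℂ)*s^2*(2*c1 - e) ≠ 0 :=
    mul_ne_zero (mul_ne_zero (by norm_num) (pow_ne_zero 2 hs)) hA0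
  apply mul_left_cancel₀ hmul
  linear_combination (-4*(2*c1 - e)*v^4)*hl1
    + (27*s^2*((u + (e - c1)*v)^4 - (u + c1*v)^4))*hl2
    + (54*s^3*e^2*v^4 - 108*s^3*e*c1*v^4 + 108*s^3*e*u*v^3 - 216*s^3*c1*u*v^3)*hc1
    + (-9*s^2*e^3*v^4 + 18*s^2*e^2*c1*v^4 + 54*s^2*e*u^2*v^2 - 108*s^2*c1*u^2*v^2
       - 6*s*t*e^2*v^4 + 12*s*t*e*c1*v^4 - 4*t^2*e*v^4 + 8*t^2*c1*v^4)*he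

lemma pad {r n : ℕ} (hrn : r ≤ n) (p : MvPolynomial (Fin 2) ℂ) (lam c d : Fin r → ℂ)
    (h : p = ∑ j, C (lam j) * lform (c j) (d j) ^ 4) :
    ∃ lam' c' d' : Fin n → ℂ, p = ∑ j, C (lam' j) * lform (c' j) (d' j) ^ 4 := by
  classical
  set F : ℕ → MvPolynomial (Fin 2) ℂ :=
    fun i => if h : i < r then C (lam ⟨i, h⟩) * lform (c ⟨i, h⟩) (d ⟨i, h⟩) ^ 4 else 0 with hF
  refine ⟨fun j => if h : (j : ℕ) < r then lam ⟨j, h⟩ else 0,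
          fun j => if h : (j : ℕ) < r then c ⟨j, h⟩ else 0,
          fun j => if h : (j : ℕ) < r then d ⟨j, h⟩ else 0, ?_⟩
  rw [h]
  have step1 : ∑ j : Fin r, C (lam j) * lform (c j) (d j) ^ 4 = ∑ j : Fin r, F (j : ℕ) := by
    refine Finset.sum_congr rfl fun j _ => ?_
    simp [hF, j.isLt]
  have step2 : ∑ j : Fin n, F (j : ℕ)
      = ∑ j : Fin n, C (if h : (j : ℕ) < r then lam ⟨j, h⟩ else 0)
          * lform (if h : (j : ℕ) < r then c ⟨j, h⟩ else 0)
                  (if h : (j : ℕ) < r then d ⟨j, h⟩ else 0) ^ 4 := by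
    refine Finset.sum_congr rfl fun j _ => ?_
    by_cases hj : (j : ℕ) < r
    · simp [hF, hj]
    · simp [hF, hj, lform]
  rw [step1, ← step2]
  rw [Fin.sum_univ_eq_sum_range F r, Fin.sum_univ_eq_sum_range F n]
  exact Finset.sum_subset (Finset.range_subset_range.2 hrn)
    (fun i _ hi => by simp [hF, (by simpa using hi : ¬ i < r)])

lemma rep_eval {r : ℕ} (p : MvPolynomial (Fin 2) ℂ) (lam c d : Fin r → ℂ)
    (h : p = ∑ j, C (lam j) * lform (c j) (d j) ^ 4) (x y : ℂ) :
    eval ![x, y] p = ∑ j, lam j * (c j * x + d j * y)^4 := by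
  rw [h]; simp [lform]

lemma eval22 (α β γ δ x y : ℂ) :
    eval ![x, y] (lform α β ^ 2 * lform γ δ ^ 2) = (α*x + β*y)^2 * (γ*x + δ*y)^2 := by
  simp [lform]

lemma eval211 (α β γ δ ε ζ x y : ℂ) :
    eval ![x, y] (lform α β ^ 2 * lform γ δ * lform ε ζ)
      = (α*x + β*y)^2 * (γ*x + δ*y) * (ε*x + ζ*y) := by
  simp [lform]

lemma eval31 (α β γ δ x y : ℂ) :
    eval ![x, y] (lform α β ^ 3 * lform γ δ) = (α*x + β*y)^3 * (γ*x + δ*y) := by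
  simp [lform]

end helperZZ

set_option maxHeartbeats 2000000 in
/-- Waring ranks of binary quartics with repeated roots: `L_ℂ(ℓ₀²ℓ₁²) = 3`,
`L_ℂ(ℓ₀²ℓ₁ℓ₂) = 3`, and `L_ℂ(ℓ₀³ℓ₁) = 4`. -/
theorem quartic_ranks (a b : Fin 3 → ℂ)
    (hdist : ∀ i j, i ≠ j → a i * b j - a j * b i ≠ 0) :
    rankC 4 (lform (a 0) (b 0) ^ 2 * lform (a 1) (b 1) ^ 2) = 3 ∧
    rankC 4 (lform (a 0) (b 0) ^ 2 * lform (a 1) (b 1) * lform (a 2) (b 2)) = 3 ∧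
    rankC 4 (lform (a 0) (b 0) ^ 3 * lform (a 1) (b 1)) = 4 := by
  obtain ⟨om, hom⟩ := exists_om
  have hd01 : a 0 * b 1 - a 1 * b 0 ≠ 0 := hdist 0 1 (by decide)
  refine ⟨?_, ?_, ?_⟩
  · -- claim 1 : rank of ℓ0² ℓ1² is 3
    have hmem : ∃ lam c d : Fin 3 → ℂ,
        lform (a 0) (b 0) ^ 2 * lform (a 1) (b 1) ^ 2 = ∑ j, C (lam j) * lform (c j) (d j) ^ 4 := by
      refine ⟨![1/18, om/18, om^2/18], ![a 0 + a 1, a 0 + om*a 1, a 0 + om^2*a 1],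
        ![b 0 + b 1, b 0 + om*b 1, b 0 + om^2*b 1], ?_⟩
      apply MvPolynomial.funext
      intro v
      simp [lform, Fin.sum_univ_three]
      linear_combination dec1 om hom (a 0 * v 0 + b 0 * v 1) (a 1 * v 0 + b 1 * v 1)
    rw [rankC]
    refine le_antisymm (Nat.sInf_le hmem) (le_csInf ⟨3, hmem⟩ fun r hr => ?_)
    by_contra hcon
    push_neg at hcon
    obtain ⟨lam, cc, dd, heq⟩ := hr
    obtain ⟨lam, cc, dd, heq⟩ := pad (Nat.lt_succ_iff.mp hcon) _ lam cc dd heq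
    refine aux2 0 1 (lam 0) (lam 1)
      ((cc 0 * b 1 - dd 0 * a 1)/(a 0 * b 1 - a 1 * b 0))
      ((cc 1 * b 1 - dd 1 * a 1)/(a 0 * b 1 - a 1 * b 0))
      ((dd 0 * a 0 - cc 0 * b 0)/(a 0 * b 1 - a 1 * b 0))
      ((dd 1 * a 0 - cc 1 * b 0)/(a 0 * b 1 - a 1 * b 0))
      one_ne_zero fun P Q => ?_
    have hv := rep_eval _ lam cc dd heq
      ((b 1 * P - b 0 * Q)/(a 0 * b 1 - a 1 * b 0)) ((a 0 * Q - a 1 * P)/(a 0 * b 1 - a 1 * b 0))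
    rw [eval22, Fin.sum_univ_two] at hv
    have e0 : a 0 * ((b 1 * P - b 0 * Q)/(a 0 * b 1 - a 1 * b 0))
        + b 0 * ((a 0 * Q - a 1 * P)/(a 0 * b 1 - a 1 * b 0)) = P := by
      rw [← mul_div_assoc, ← mul_div_assoc, ← add_div, div_eq_iff hd01]; ring
    have e1 : a 1 * ((b 1 * P - b 0 * Q)/(a 0 * b 1 - a 1 * b 0))
        + b 1 * ((a 0 * Q - a 1 * P)/(a 0 * b 1 - a 1 * b 0)) = Q := by
      rw [← mul_div_assoc, ← mul_div_assoc, ← add_div, div_eq_iff hd01]; ring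
    have f0 : cc 0 * ((b 1 * P - b 0 * Q)/(a 0 * b 1 - a 1 * b 0))
        + dd 0 * ((a 0 * Q - a 1 * P)/(a 0 * b 1 - a 1 * b 0))
        = ((cc 0 * b 1 - dd 0 * a 1)/(a 0 * b 1 - a 1 * b 0))*P
          + ((dd 0 * a 0 - cc 0 * b 0)/(a 0 * b 1 - a 1 * b 0))*Q := by
      field_simp [hd01]; ring
    have f1 : cc 1 * ((b 1 * P - b 0 * Q)/(a 0 * b 1 - a 1 * b 0))
        + dd 1 * ((a 0 * Q - a 1 * P)/(a 0 * b 1 - a 1 * b 0))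
        = ((cc 1 * b 1 - dd 1 * a 1)/(a 0 * b 1 - a 1 * b 0))*P
          + ((dd 1 * a 0 - cc 1 * b 0)/(a 0 * b 1 - a 1 * b 0))*Q := by
      field_simp [hd01]; ring
    rw [e0, e1, f0, f1] at hv
    linear_combination hv
  · -- claim 2 : rank of ℓ0² ℓ1 ℓ2 is 3
    have hs0 : (a 2 * b 1 - a 1 * b 2)/(a 0 * b 1 - a 1 * b 0) ≠ 0 :=
      div_ne_zero (hdist 2 1 (by decide)) hd01
    have ht0 : (a 0 * b 2 - a 2 * b 0)/(a 0 * b 1 - a 1 * b 0) ≠ 0 :=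
      div_ne_zero (hdist 0 2 (by decide)) hd01
    obtain ⟨l1, l2, c1, c2, hkey⟩ := dec2 _ _ hs0 ht0
    have ha2 : a 2 = ((a 2 * b 1 - a 1 * b 2)/(a 0 * b 1 - a 1 * b 0))*a 0
        + ((a 0 * b 2 - a 2 * b 0)/(a 0 * b 1 - a 1 * b 0))*a 1 := by
      rw [div_mul_eq_mul_div, div_mul_eq_mul_div, ← add_div, eq_div_iff hd01]; ring
    have hb2 : b 2 = ((a 2 * b 1 - a 1 * b 2)/(a 0 * b 1 - a 1 * b 0))*b 0
        + ((a 0 * b 2 - a 2 * b 0)/(a 0 * b 1 - a 1 * b 0))*b 1 := by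
      rw [div_mul_eq_mul_div, div_mul_eq_mul_div, ← add_div, eq_div_iff hd01]; ring
    have hmem : ∃ lam c d : Fin 3 → ℂ,
        lform (a 0) (b 0) ^ 2 * lform (a 1) (b 1) * lform (a 2) (b 2)
          = ∑ j, C (lam j) * lform (c j) (d j) ^ 4 := by
      refine ⟨![l1, l2, -l2], ![a 1, a 0 + c1*a 1, a 0 + c2*a 1],
        ![b 1, b 0 + c1*b 1, b 0 + c2*b 1], ?_⟩
      apply MvPolynomial.funext
      intro v
      simp [lform, Fin.sum_univ_three]
      linear_combination hkey (a 0 * v 0 + b 0 * v 1) (a 1 * v 0 + b 1 * v 1)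
        + ((a 0 * v 0 + b 0 * v 1)^2*(a 1 * v 0 + b 1 * v 1)*v 0)*ha2
        + ((a 0 * v 0 + b 0 * v 1)^2*(a 1 * v 0 + b 1 * v 1)*v 1)*hb2
    rw [rankC]
    refine le_antisymm (Nat.sInf_le hmem) (le_csInf ⟨3, hmem⟩ fun r hr => ?_)
    by_contra hcon
    push_neg at hcon
    obtain ⟨lam, cc, dd, heq⟩ := hr
    obtain ⟨lam, cc, dd, heq⟩ := pad (Nat.lt_succ_iff.mp hcon) _ lam cc dd heq
    refine aux2 ((a 2 * b 1 - a 1 * b 2)/(a 0 * b 1 - a 1 * b 0))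
      ((a 0 * b 2 - a 2 * b 0)/(a 0 * b 1 - a 1 * b 0)) (lam 0) (lam 1)
      ((cc 0 * b 1 - dd 0 * a 1)/(a 0 * b 1 - a 1 * b 0))
      ((cc 1 * b 1 - dd 1 * a 1)/(a 0 * b 1 - a 1 * b 0))
      ((dd 0 * a 0 - cc 0 * b 0)/(a 0 * b 1 - a 1 * b 0))
      ((dd 1 * a 0 - cc 1 * b 0)/(a 0 * b 1 - a 1 * b 0))
      ht0 fun P Q => ?_
    have hv := rep_eval _ lam cc dd heq
      ((b 1 * P - b 0 * Q)/(a 0 * b 1 - a 1 * b 0)) ((a 0 * Q - a 1 * P)/(a 0 * b 1 - a 1 * b 0))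
    rw [eval211, Fin.sum_univ_two] at hv
    have e0 : a 0 * ((b 1 * P - b 0 * Q)/(a 0 * b 1 - a 1 * b 0))
        + b 0 * ((a 0 * Q - a 1 * P)/(a 0 * b 1 - a 1 * b 0)) = P := by
      rw [← mul_div_assoc, ← mul_div_assoc, ← add_div, div_eq_iff hd01]; ring
    have e1 : a 1 * ((b 1 * P - b 0 * Q)/(a 0 * b 1 - a 1 * b 0))
        + b 1 * ((a 0 * Q - a 1 * P)/(a 0 * b 1 - a 1 * b 0)) = Q := by
      rw [← mul_div_assoc, ← mul_div_assoc, ← add_div, div_eq_iff hd01]; ring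
    have e2 : a 2 * ((b 1 * P - b 0 * Q)/(a 0 * b 1 - a 1 * b 0))
        + b 2 * ((a 0 * Q - a 1 * P)/(a 0 * b 1 - a 1 * b 0))
        = ((a 2 * b 1 - a 1 * b 2)/(a 0 * b 1 - a 1 * b 0))*P
          + ((a 0 * b 2 - a 2 * b 0)/(a 0 * b 1 - a 1 * b 0))*Q := by
      field_simp [hd01]; ring
    have f0 : cc 0 * ((b 1 * P - b 0 * Q)/(a 0 * b 1 - a 1 * b 0))
        + dd 0 * ((a 0 * Q - a 1 * P)/(a 0 * b 1 - a 1 * b 0))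
        = ((cc 0 * b 1 - dd 0 * a 1)/(a 0 * b 1 - a 1 * b 0))*P
          + ((dd 0 * a 0 - cc 0 * b 0)/(a 0 * b 1 - a 1 * b 0))*Q := by
      field_simp [hd01]; ring
    have f1 : cc 1 * ((b 1 * P - b 0 * Q)/(a 0 * b 1 - a 1 * b 0))
        + dd 1 * ((a 0 * Q - a 1 * P)/(a 0 * b 1 - a 1 * b 0))
        = ((cc 1 * b 1 - dd 1 * a 1)/(a 0 * b 1 - a 1 * b 0))*P
          + ((dd 1 * a 0 - cc 1 * b 0)/(a 0 * b 1 - a 1 * b 0))*Q := by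
      field_simp [hd01]; ring
    rw [e0, e1, e2, f0, f1] at hv
    linear_combination hv
  · -- claim 3 : rank of ℓ0³ ℓ1 is 4
    have hmem : ∃ lam c d : Fin 4 → ℂ,
        lform (a 0) (b 0) ^ 3 * lform (a 1) (b 1) = ∑ j, C (lam j) * lform (c j) (d j) ^ 4 := by
      refine ⟨![1/16, -(1/16), -(Complex.I/16), Complex.I/16],
        ![a 0 + a 1, a 0 - a 1, a 0 + Complex.I*a 1, a 0 - Complex.I*a 1],
        ![b 0 + b 1, b 0 - b 1, b 0 + Complex.I*b 1, b 0 - Complex.I*b 1], ?_⟩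
      apply MvPolynomial.funext
      intro v
      simp [lform, Fin.sum_univ_four]
      linear_combination dec3 (a 0 * v 0 + b 0 * v 1) (a 1 * v 0 + b 1 * v 1)
    rw [rankC]
    refine le_antisymm (Nat.sInf_le hmem) (le_csInf ⟨4, hmem⟩ fun r hr => ?_)
    by_contra hcon
    push_neg at hcon
    obtain ⟨lam, cc, dd, heq⟩ := hr
    obtain ⟨lam, cc, dd, heq⟩ := pad (Nat.lt_succ_iff.mp hcon) _ lam cc dd heq
    refine aux3 (lam 0) (lam 1) (lam 2)
      ((cc 0 * b 1 - dd 0 * a 1)/(a 0 * b 1 - a 1 * b 0))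
      ((cc 1 * b 1 - dd 1 * a 1)/(a 0 * b 1 - a 1 * b 0))
      ((cc 2 * b 1 - dd 2 * a 1)/(a 0 * b 1 - a 1 * b 0))
      ((dd 0 * a 0 - cc 0 * b 0)/(a 0 * b 1 - a 1 * b 0))
      ((dd 1 * a 0 - cc 1 * b 0)/(a 0 * b 1 - a 1 * b 0))
      ((dd 2 * a 0 - cc 2 * b 0)/(a 0 * b 1 - a 1 * b 0))
      fun P Q => ?_
    have hv := rep_eval _ lam cc dd heq
      ((b 1 * P - b 0 * Q)/(a 0 * b 1 - a 1 * b 0)) ((a 0 * Q - a 1 * P)/(a 0 * b 1 - a 1 * b 0))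
    rw [eval31, Fin.sum_univ_three] at hv
    have e0 : a 0 * ((b 1 * P - b 0 * Q)/(a 0 * b 1 - a 1 * b 0))
        + b 0 * ((a 0 * Q - a 1 * P)/(a 0 * b 1 - a 1 * b 0)) = P := by
      rw [← mul_div_assoc, ← mul_div_assoc, ← add_div, div_eq_iff hd01]; ring
    have e1 : a 1 * ((b 1 * P - b 0 * Q)/(a 0 * b 1 - a 1 * b 0))
        + b 1 * ((a 0 * Q - a 1 * P)/(a 0 * b 1 - a 1 * b 0)) = Q := by
      rw [← mul_div_assoc, ← mul_div_assoc, ← add_div, div_eq_iff hd01]; ring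
    have f0 : cc 0 * ((b 1 * P - b 0 * Q)/(a 0 * b 1 - a 1 * b 0))
        + dd 0 * ((a 0 * Q - a 1 * P)/(a 0 * b 1 - a 1 * b 0))
        = ((cc 0 * b 1 - dd 0 * a 1)/(a 0 * b 1 - a 1 * b 0))*P
          + ((dd 0 * a 0 - cc 0 * b 0)/(a 0 * b 1 - a 1 * b 0))*Q := by
      field_simp [hd01]; ring
    have f1 : cc 1 * ((b 1 * P - b 0 * Q)/(a 0 * b 1 - a 1 * b 0))
        + dd 1 * ((a 0 * Q - a 1 * P)/(a 0 * b 1 - a 1 * b 0))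
        = ((cc 1 * b 1 - dd 1 * a 1)/(a 0 * b 1 - a 1 * b 0))*P
          + ((dd 1 * a 0 - cc 1 * b 0)/(a 0 * b 1 - a 1 * b 0))*Q := by
      field_simp [hd01]; ring
    have f2 : cc 2 * ((b 1 * P - b 0 * Q)/(a 0 * b 1 - a 1 * b 0))
        + dd 2 * ((a 0 * Q - a 1 * P)/(a 0 * b 1 - a 1 * b 0))
        = ((cc 2 * b 1 - dd 2 * a 1)/(a 0 * b 1 - a 1 * b 0))*P
          + ((dd 2 * a 0 - cc 2 * b 0)/(a 0 * b 1 - a 1 * b 0))*Q := by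
      field_simp [hd01]; ring
    rw [e0, e1, f0, f1, f2] at hv
    linear_combination hv
end

section
/- Let k ≥ 1, let λ ∈ ℂ be nonzero, let μ ∈ ℂ be a fixed k-th root of λ, let ζ_k = e^{2πi/k}, and let f_λ(x,y) = x^{2k} + (2k choose k) λ x^k y^k + y^{2k}. Then f_λ(x,y) = (1 − λ^2) y^{2k} + (1/k) Σ_{i=0}^{k−1} (x + μ ζ_k^i y)^{2k}; moreover L_ℂ(f_λ) = k if λ = ±1 (in which case this representation of length k is unique up to order and scaling of the linear forms), and L_ℂ(f_λ) = k + 1 if λ ≠ ±1. -/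
open MvPolynomial Finset

section Aux

lemma sum_zeta_pow {k : ℕ} {ζ : ℂ} (hζ : IsPrimitiveRoot ζ k) (j : ℕ) :
    ∑ i ∈ range k, (ζ ^ j) ^ i = if k ∣ j then (k : ℂ) else 0 := by
  by_cases h : k ∣ j
  · obtain ⟨m, rfl⟩ := h
    have h1 : ζ ^ (k * m) = 1 := by rw [pow_mul, hζ.pow_eq_one, one_pow]
    simp [h1, Nat.dvd_mul_right]
  · have hne : ζ ^ j ≠ 1 := fun h1 => h ((hζ.pow_eq_one_iff_dvd j).mp h1)
    rw [if_neg h, geom_sum_eq hne]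
    have : (ζ ^ j) ^ k = 1 := by rw [← pow_mul, mul_comm, pow_mul, hζ.pow_eq_one, one_pow]
    simp [this]

lemma exists_e : ∀ (r : ℕ) (a b : Fin r → ℂ), ∃ e : ℕ → ℂ,
    (∀ m, r < m → e m = 0) ∧
    ∀ x y : ℂ, ∑ m ∈ range (r+1), e m * x ^ m * y ^ (r - m) = ∏ j, (a j * x - b j * y) := by
  intro r
  induction r with
  | zero =>
    intro a b
    refine ⟨fun m => if m = 0 then 1 else 0, ?_, ?_⟩
    · intro m hm; have : m ≠ 0 := by omega
      simp [this]
    · intro x y; simp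
  | succ r ih =>
    intro a b
    obtain ⟨e, he0, he⟩ := ih (fun j => a j.succ) (fun j => b j.succ)
    refine ⟨fun m => (if m = 0 then 0 else a 0 * e (m-1)) - b 0 * e m, ?_, ?_⟩
    · intro m hm
      show ((if m = 0 then 0 else a 0 * e (m-1)) - b 0 * e m) = 0
      rw [if_neg (by omega), he0 m (by omega), he0 (m-1) (by omega)]; ring
    · intro x y
      rw [Fin.prod_univ_succ, ← he x y]
      have expand : ∀ m ∈ range (r+2),
          ((if m = 0 then 0 else a 0 * e (m-1)) - b 0 * e m) * x ^ m * y ^ (r+1-m)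
          = (if m = 0 then 0 else a 0 * e (m-1) * x ^ m * y ^ (r+1-m))
            - b 0 * e m * x ^ m * y ^ (r+1-m) := by
        intro m hm
        split_ifs with h <;> ring
      rw [Finset.sum_congr rfl expand, Finset.sum_sub_distrib]
      rw [Finset.sum_range_succ' (fun m => if m = 0 then 0 else a 0 * e (m-1) * x ^ m * y ^ (r+1-m)) (r+1)]
      rw [Finset.sum_range_succ (fun m => b 0 * e m * x ^ m * y ^ (r+1-m)) (r+1)]
      rw [he0 (r+1) (by omega)]
      have h1 : ∀ m ∈ range (r+1),
          (if m + 1 = 0 then (0:ℂ) else a 0 * e (m+1-1) * x ^ (m+1) * y ^ (r+1-(m+1)))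
          = a 0 * x * (e m * x ^ m * y ^ (r - m)) := by
        intro m hm
        rw [if_neg (by omega)]
        simp only [Nat.add_sub_cancel]
        have : r + 1 - (m + 1) = r - m := by omega
        rw [this]; ring
      have h2 : ∀ m ∈ range (r+1),
          b 0 * e m * x ^ m * y ^ (r+1-m) = b 0 * y * (e m * x ^ m * y ^ (r - m)) := by
        intro m hm
        simp only [mem_range] at hm
        have : r + 1 - m = (r - m) + 1 := by omega
        rw [this, pow_succ]; ring
      rw [Finset.sum_congr rfl h1, Finset.sum_congr rfl h2, ← Finset.mul_sum, ← Finset.mul_sum]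
      simp only [if_true, mul_zero, zero_mul, add_zero]
      ring

lemma exists_pt (r : ℕ) (a b : Fin r → ℂ) (h : ∀ j, a j ≠ 0 ∨ b j ≠ 0) :
    ∃ x y : ℂ, ∏ j, (a j * x - b j * y) ≠ 0 := by
  obtain ⟨x, hx⟩ := Infinite.exists_notMem_finset (Finset.image (fun j => b j / a j) univ)
  refine ⟨x, 1, ?_⟩
  rw [Finset.prod_ne_zero_iff]
  intro j _
  rcases eq_or_ne (a j) 0 with ha | ha
  · rcases h j with h' | h'
    · exact absurd ha h'
    · simpa [ha] using h'
  · intro hz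
    apply hx
    rw [Finset.mem_image]
    refine ⟨j, mem_univ j, ?_⟩
    field_simp
    linear_combination -hz

lemma coeff_linpow (a b : ℂ) (n i : ℕ) (hi : i ≤ n) :
    ((Polynomial.C a + Polynomial.C b * Polynomial.X) ^ n).coeff i
      = (n.choose i : ℂ) * b ^ i * a ^ (n - i) := by
  have hexp : (Polynomial.C a + Polynomial.C b * Polynomial.X) ^ n
      = ∑ m ∈ range (n+1),
          Polynomial.C ((n.choose m : ℂ) * b ^ m * a ^ (n - m)) * Polynomial.X ^ m := by
    rw [add_comm, add_pow]
    refine Finset.sum_congr rfl fun m hm => ?_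
    simp only [Polynomial.C_mul, Polynomial.C_pow, ← Polynomial.C_eq_natCast, mul_pow]
    ring
  rw [hexp, Polynomial.finset_sum_coeff]
  rw [Finset.sum_eq_single i]
  · rw [Polynomial.coeff_C_mul, Polynomial.coeff_X_pow, if_pos rfl, mul_one]
  · intro m hm hne
    rw [Polynomial.coeff_C_mul, Polynomial.coeff_X_pow, if_neg (fun h => hne h.symm), mul_zero]
  · intro hmem
    exact absurd (mem_range.mpr (by omega)) hmem

lemma key_eqs (n r : ℕ) (hrn : r ≤ n) (hn : 2 ≤ n) (c a b : Fin r → ℂ) (S : ℕ → ℂ)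
    (hS : ∀ i, i ≤ n → S i = ∑ j, c j * b j ^ i * a j ^ (n - i)) :
    ∃ (a' : Fin r → ℂ) (e : ℕ → ℂ),
      (∀ j, (a j ≠ 0 ∨ b j ≠ 0) → a' j = a j) ∧
      (∀ m, r < m → e m = 0) ∧
      (∀ x y : ℂ, ∑ m ∈ range (r+1), e m * x ^ m * y ^ (r - m) = ∏ j, (a' j * x - b j * y)) ∧
      (∃ x y : ℂ, ∏ j, (a' j * x - b j * y) ≠ 0) ∧
      (∀ s, s + r ≤ n → ∑ m ∈ range (r+1), e m * S (m + s) = 0) := by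
  classical
  set a' : Fin r → ℂ := fun j => if a j = 0 ∧ b j = 0 then 1 else a j with ha'
  obtain ⟨e, he0, he⟩ := exists_e r a' b
  have hnd : ∀ j, a' j ≠ 0 ∨ b j ≠ 0 := by
    intro j
    by_cases hd : a j = 0 ∧ b j = 0
    · left; simp [ha', hd]
    · rcases not_and_or.mp hd with h | h
      · left; simpa [ha', hd] using h
      · right; exact h
  refine ⟨a', e, ?_, he0, he, exists_pt r a' b hnd, ?_⟩
  · intro j hj
    have hd : ¬(a j = 0 ∧ b j = 0) := by tauto
    simp [ha', hd]
  · intro s hs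
    have hswap : ∑ m ∈ range (r+1), e m * S (m + s)
        = ∑ j : Fin r, ∑ m ∈ range (r+1), e m * (c j * b j ^ (m+s) * a j ^ (n - (m+s))) := by
      rw [Finset.sum_comm]
      refine Finset.sum_congr rfl fun m hm => ?_
      simp only [mem_range] at hm
      rw [hS (m+s) (by omega), Finset.mul_sum]
    rw [hswap]
    refine Finset.sum_eq_zero fun j _ => ?_
    by_cases hd : a j = 0 ∧ b j = 0
    · refine Finset.sum_eq_zero fun m hm => ?_
      rcases Nat.eq_zero_or_pos (m + s) with h0 | h0
      · have h1 : n - (m+s) ≠ 0 := by omega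
        rw [hd.1, zero_pow h1, mul_zero, mul_zero]
      · simp [hd.2, zero_pow h0.ne']
    · have ha : a' j = a j := by simp [ha', hd]
      have hterm : ∀ m ∈ range (r+1),
          e m * (c j * b j ^ (m+s) * a j ^ (n - (m+s)))
          = (c j * b j ^ s * a j ^ (n - r - s)) * (e m * b j ^ m * a j ^ (r - m)) := by
        intro m hm
        simp only [mem_range] at hm
        have h1 : b j ^ (m+s) = b j ^ m * b j ^ s := by rw [pow_add]
        have h2 : a j ^ (n - (m+s)) = a j ^ (r - m) * a j ^ (n - r - s) := by
          rw [← pow_add]; congr 1; omega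
        rw [h1, h2]; ring
      rw [Finset.sum_congr rfl hterm, ← Finset.mul_sum, he (b j) (a j)]
      have hz : ∏ i, (a' i * b j - b i * a j) = 0 :=
        Finset.prod_eq_zero (Finset.mem_univ j) (by rw [ha]; ring)
      rw [hz, mul_zero]


lemma S_vals (k : ℕ) (hk : 1 ≤ k) (lam : ℂ) (r : ℕ) (c a b : Fin r → ℂ)
    (f : MvPolynomial (Fin 2) ℂ)
    (hf : f = X 0 ^ (2 * k) + C (((2 * k).choose k : ℂ) * lam) * X 0 ^ k * X 1 ^ k
      + X 1 ^ (2 * k))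
    (hrep : f = ∑ j, C (c j) * lform (a j) (b j) ^ (2 * k))
    (i : ℕ) (hi : i ≤ 2 * k) :
    (∑ j, c j * b j ^ i * a j ^ (2 * k - i))
      = if i = 0 then 1 else if i = k then lam else if i = 2 * k then 1 else 0 := by
  classical
  set φ : MvPolynomial (Fin 2) ℂ →ₐ[ℂ] Polynomial ℂ :=
    aeval ![(1 : Polynomial ℂ), Polynomial.X] with hφ
  have h1 : φ f = 1 + Polynomial.C (((2 * k).choose k : ℂ) * lam) * Polynomial.X ^ k
      + Polynomial.X ^ (2 * k) := by
    rw [hf]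
    simp [hφ, Polynomial.algebraMap_eq]
  have h2 : φ f = ∑ j, Polynomial.C (c j)
      * (Polynomial.C (a j) + Polynomial.C (b j) * Polynomial.X) ^ (2 * k) := by
    rw [hrep, map_sum]
    refine Finset.sum_congr rfl fun j _ => ?_
    simp [hφ, lform, Polynomial.algebraMap_eq]
  have hco := congrArg (fun p => Polynomial.coeff p i) (h1.symm.trans h2)
  simp only [Polynomial.coeff_add, Polynomial.coeff_one, Polynomial.coeff_C_mul,
    Polynomial.coeff_X_pow, Polynomial.finset_sum_coeff] at hco
  have hterm : ∀ j : Fin r,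
      c j * ((Polynomial.C (a j) + Polynomial.C (b j) * Polynomial.X) ^ (2*k)).coeff i
        = ((2*k).choose i : ℂ) * (c j * b j ^ i * a j ^ (2*k - i)) := by
    intro j
    rw [coeff_linpow _ _ _ _ hi]
    ring
  rw [Finset.sum_congr rfl (fun j _ => hterm j), ← Finset.mul_sum] at hco
  have hch : ((2*k).choose i : ℂ) ≠ 0 :=
    Nat.cast_ne_zero.mpr (Nat.choose_pos hi).ne'
  apply mul_left_cancel₀ hch
  rw [← hco]
  have F1 : ¬ (0:ℕ) = k := by omega
  have F2 : ¬ k = 0 := by omega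
  have F3 : ¬ 2*k = k := by omega
  have F4 : ¬ k = 2*k := by omega
  have F5 : ¬ k*2 = k := by omega
  have F6 : ¬ k = k*2 := by omega
  have F7 : ¬ (0:ℕ) = 2*k := by omega
  by_cases h0 : i = 0
  · simp [h0, F1, F2, F7]
  · by_cases hik : i = k
    · simp [hik, F2, F3, F4, F5, F6]
      try ring
    · by_cases h2k : i = 2*k
      · simp [h2k, F2, F3, F4, F5, F6, Nat.choose_self]
      · simp [h0, hik, h2k]


lemma part1 (k : ℕ) (hk : 1 ≤ k) (lam mu ζ : ℂ) (hmu : mu ^ k = lam)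
    (hprim : IsPrimitiveRoot ζ k) :
    X 0 ^ (2*k) + C (((2*k).choose k : ℂ) * lam) * X 0 ^ k * X 1 ^ k + X 1 ^ (2*k)
      = C (1 - lam^2) * X 1 ^ (2*k)
        + C (1/(k:ℂ)) * ∑ i ∈ range k, lform 1 (mu * ζ^i) ^ (2*k) := by
  have hk0 : (k:ℂ) ≠ 0 := Nat.cast_ne_zero.mpr (by omega)
  have hexp : ∀ w:ℂ, lform 1 w ^ (2*k) = ∑ m ∈ range (2*k+1),
      C (w^(2*k-m) * ((2*k).choose m : ℂ)) * X 0^m * X 1^(2*k-m) := by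
    intro w
    show (C 1 * X 0 + C w * X 1 : MvPolynomial (Fin 2) ℂ)^(2*k) = _
    rw [C_1, one_mul, add_pow]
    refine Finset.sum_congr rfl fun m hm => ?_
    simp only [mul_pow, ← C_pow, ← C_eq_coe_nat, map_mul]
    ring
  have hsum : ∑ i ∈ range k, lform 1 (mu * ζ^i) ^ (2*k) = ∑ m ∈ range (2*k+1),
      C (mu^(2*k-m) * (if k ∣ (2*k-m) then (k:ℂ) else 0) * ((2*k).choose m : ℂ))
        * X 0^m * X 1^(2*k-m) := by
    rw [Finset.sum_congr rfl (fun i _ => hexp (mu * ζ^i)), Finset.sum_comm]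
    refine Finset.sum_congr rfl fun m hm => ?_
    have hscal : ∑ i ∈ range k, (mu*ζ^i)^(2*k-m)
        = mu^(2*k-m) * (if k ∣ (2*k-m) then (k:ℂ) else 0) := by
      have h1 : ∀ i ∈ range k, (mu*ζ^i)^(2*k-m) = mu^(2*k-m) * (ζ^(2*k-m))^i := by
        intro i _
        rw [mul_pow, ← pow_mul, mul_comm i (2*k-m), pow_mul]
      rw [Finset.sum_congr rfl h1, ← Finset.mul_sum, sum_zeta_pow hprim]
    rw [← Finset.sum_mul, ← Finset.sum_mul, ← map_sum, ← Finset.sum_mul, hscal]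
  have hcoll : (∑ m ∈ range (2*k+1),
      C (mu^(2*k-m) * (if k ∣ (2*k-m) then (k:ℂ) else 0) * ((2*k).choose m : ℂ))
        * X 0^m * X 1^(2*k-m) : MvPolynomial (Fin 2) ℂ)
      = ∑ m ∈ ({0, k, 2*k} : Finset ℕ),
      C (mu^(2*k-m) * (if k ∣ (2*k-m) then (k:ℂ) else 0) * ((2*k).choose m : ℂ))
        * X 0^m * X 1^(2*k-m) := by
    refine (Finset.sum_subset ?_ ?_).symm
    · intro m hm
      simp only [mem_insert, mem_singleton] at hm
      rw [mem_range]; omega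
    · intro m hm hnot
      simp only [mem_insert, mem_singleton, mem_range] at hm hnot
      push_neg at hnot
      have hdvd : ¬ k ∣ (2*k - m) := by
        rintro ⟨d, hd⟩
        have h1 : k * d ≤ 2 * k := hd ▸ Nat.sub_le _ _
        have h2 : k * d ≤ k * 2 := by rw [mul_comm 2 k] at h1; exact h1
        have hd2 : d ≤ 2 := Nat.le_of_mul_le_mul_left h2 (by omega)
        interval_cases d <;> omega
      simp [hdvd]
  rw [hsum, hcoll]
  have h0k : (0:ℕ) ∉ ({k, 2*k} : Finset ℕ) := by
    simp only [mem_insert, mem_singleton]; omega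
  have hk2k : k ∉ ({2*k} : Finset ℕ) := by
    simp only [mem_singleton]; omega
  rw [Finset.sum_insert h0k, Finset.sum_insert hk2k, Finset.sum_singleton]
  have e0 : mu^(2*k-0) * (if k ∣ (2*k-0) then (k:ℂ) else 0) * ((2*k).choose 0 : ℂ)
      = (k:ℂ) * lam^2 := by
    rw [Nat.sub_zero, if_pos ⟨2, by ring⟩, Nat.choose_zero_right,
      show 2*k = k*2 from by ring, pow_mul, hmu]
    norm_num; ring
  have ek : mu^(2*k-k) * (if k ∣ (2*k-k) then (k:ℂ) else 0) * ((2*k).choose k : ℂ)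
      = (k:ℂ) * (((2*k).choose k : ℂ) * lam) := by
    rw [show 2*k-k = k from by omega, if_pos dvd_rfl, hmu]
    ring
  have e2k : mu^(2*k-2*k) * (if k ∣ (2*k-2*k) then (k:ℂ) else 0) * ((2*k).choose (2*k) : ℂ)
      = (k:ℂ) := by
    rw [Nat.sub_self, if_pos (dvd_zero k), pow_zero, Nat.choose_self]
    norm_num
  rw [e0, ek, e2k]
  have hCk : (C ((1:ℂ)/(k:ℂ)) : MvPolynomial (Fin 2) ℂ) * C ((k:ℂ)) = 1 := by
    rw [← map_mul, one_div_mul_cancel hk0, map_one]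
  have h2kk : 2*k-k = k := by omega
  simp only [h2kk, Nat.sub_zero, Nat.sub_self, pow_zero, mul_one, one_mul, map_sub, map_one,
    map_mul]
  linear_combination (-(C (lam^2) * X 1^(2*k) + C (((2*k).choose k : ℂ)) * C lam * X 0^k
    * X 1^k + X 0^(2*k))) * hCk


lemma no_rep_lt (k : ℕ) (hk : 1 ≤ k) (lam : ℂ) (hlam : lam ≠ 0)
    (f : MvPolynomial (Fin 2) ℂ)
    (hf : f = X 0 ^ (2 * k) + C (((2 * k).choose k : ℂ) * lam) * X 0 ^ k * X 1 ^ k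
      + X 1 ^ (2 * k))
    (r : ℕ) (hr : r < k) (c a b : Fin r → ℂ)
    (hrep : f = ∑ j, C (c j) * lform (a j) (b j) ^ (2 * k)) : False := by
  set S : ℕ → ℂ := fun i => ∑ j, c j * b j ^ i * a j ^ (2*k - i) with hSdef
  obtain ⟨a', e, ha', he0, he, ⟨x, y, hpt⟩, heqs⟩ :=
    key_eqs (2*k) r (by omega) (by omega) c a b S (fun i _ => rfl)
  have hSvals : ∀ i ≤ 2*k, S i = if i = 0 then 1 else if i = k then lam
      else if i = 2*k then 1 else 0 := fun i hi => S_vals k hk lam r c a b f hf hrep i hi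
  have hzero : ∀ m0, m0 ≤ r → e m0 = 0 := by
    intro m0 hm0
    have hs := heqs (k - m0) (by omega)
    have hred : ∑ m ∈ range (r+1), e m * S (m + (k - m0)) = e m0 * lam := by
      rw [Finset.sum_eq_single m0]
      · have h1 : m0 + (k - m0) = k := by omega
        rw [h1, hSvals k (by omega), if_neg (by omega), if_pos rfl]
      · intro m hm hne
        simp only [mem_range] at hm
        have h1 : m + (k - m0) ≤ 2*k := by omega
        rw [hSvals _ h1, if_neg (by omega), if_neg (by omega), if_neg (by omega), mul_zero]
      · intro habs
        exact absurd (mem_range.mpr (by omega)) habs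
    rw [hred] at hs
    exact (mul_eq_zero.mp hs).resolve_right hlam
  apply hpt
  rw [← he x y]
  refine Finset.sum_eq_zero fun m hm => ?_
  simp only [mem_range] at hm
  rw [hzero m (by omega), zero_mul, zero_mul]

lemma rep_k_struct (k : ℕ) (hk : 1 ≤ k) (lam : ℂ) (hlam : lam ≠ 0)
    (f : MvPolynomial (Fin 2) ℂ)
    (hf : f = X 0 ^ (2 * k) + C (((2 * k).choose k : ℂ) * lam) * X 0 ^ k * X 1 ^ k
      + X 1 ^ (2 * k))
    (c a b : Fin k → ℂ)
    (hrep : f = ∑ j, C (c j) * lform (a j) (b j) ^ (2 * k)) :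
    ∃ (a' : Fin k → ℂ) (e : ℕ → ℂ),
      (∀ j, (a j ≠ 0 ∨ b j ≠ 0) → a' j = a j) ∧
      (∀ x y : ℂ, e k * x ^ k + e 0 * y ^ k = ∏ j, (a' j * x - b j * y)) ∧
      (∃ x y : ℂ, ∏ j, (a' j * x - b j * y) ≠ 0) ∧
      e 0 + e k * lam = 0 ∧ e 0 * lam + e k = 0 := by
  set S : ℕ → ℂ := fun i => ∑ j, c j * b j ^ i * a j ^ (2*k - i) with hSdef
  obtain ⟨a', e, ha', he0, he, hpt, heqs⟩ :=
    key_eqs (2*k) k (by omega) (by omega) c a b S (fun i _ => rfl)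
  have hSvals : ∀ i ≤ 2*k, S i = if i = 0 then 1 else if i = k then lam
      else if i = 2*k then 1 else 0 := fun i hi => S_vals k hk lam k c a b f hf hrep i hi
  have hmid : ∀ m0, 0 < m0 → m0 < k → e m0 = 0 := by
    intro m0 h0 hm0
    have hs := heqs (k - m0) (by omega)
    have hred : ∑ m ∈ range (k+1), e m * S (m + (k - m0)) = e m0 * lam := by
      rw [Finset.sum_eq_single m0]
      · have h1 : m0 + (k - m0) = k := by omega
        rw [h1, hSvals k (by omega), if_neg (by omega), if_pos rfl]
      · intro m hm hne
        simp only [mem_range] at hm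
        have h1 : m + (k - m0) ≤ 2*k := by omega
        rw [hSvals _ h1, if_neg (by omega), if_neg (by omega), if_neg (by omega), mul_zero]
      · intro habs
        exact absurd (mem_range.mpr (by omega)) habs
    rw [hred] at hs
    exact (mul_eq_zero.mp hs).resolve_right hlam
  have hsub : ({0, k} : Finset ℕ) ⊆ range (k+1) := by
    intro m hm
    simp only [mem_insert, mem_singleton] at hm
    rw [mem_range]; omega
  have h0k : (0:ℕ) ∉ ({k} : Finset ℕ) := by simp only [mem_singleton]; omega
  have collapse : ∀ g : ℕ → ℂ, ∑ m ∈ range (k+1), e m * g m = e 0 * g 0 + e k * g k := by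
    intro g
    rw [← Finset.sum_subset hsub (fun m hm hnot => ?_), Finset.sum_insert h0k,
      Finset.sum_singleton]
    simp only [mem_insert, mem_singleton, mem_range] at hm hnot
    push_neg at hnot
    rw [hmid m (by omega) (by omega), zero_mul]
  have heq1 : e 0 + e k * lam = 0 := by
    have hs := heqs 0 (by omega)
    have := collapse (fun m => S (m + 0))
    rw [this] at hs
    simpa [hSvals 0 (by omega), hSvals k (by omega), if_neg (show ¬ k = 0 by omega)] using hs
  have heq2 : e 0 * lam + e k = 0 := by
    have hs := heqs k (by omega)
    have := collapse (fun m => S (m + k))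
    rw [this] at hs
    have hSk : S (0 + k) = lam := by
      have h' : 0 + k = k := by omega
      rw [h', hSvals k (by omega), if_neg (by omega), if_pos rfl]
    have hS2k : S (k + k) = 1 := by
      rw [hSvals (k + k) (by omega), if_neg (by omega), if_neg (by omega),
        if_pos (by omega : k + k = 2*k)]
    rw [hSk, hS2k] at hs
    linear_combination hs
  refine ⟨a', e, ha', ?_, hpt, heq1, heq2⟩
  intro x y
  have h1 : ∑ m ∈ range (k+1), e m * x ^ m * y ^ (k-m)
      = ∑ m ∈ range (k+1), e m * (x ^ m * y ^ (k-m)) :=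
    Finset.sum_congr rfl fun m _ => by ring
  rw [← he x y, h1, collapse (fun m => x ^ m * y ^ (k - m))]
  simp only [pow_zero, Nat.sub_self, Nat.sub_zero, one_mul, mul_one]
  ring


lemma uniq_rep (k : ℕ) (hk : 1 ≤ k) (lam : ℂ) (hlam : lam ≠ 0)
    (mu : ℂ) (hmu : mu ^ k = lam) (ζ : ℂ) (hprim : IsPrimitiveRoot ζ k)
    (f : MvPolynomial (Fin 2) ℂ)
    (hf : f = X 0 ^ (2 * k) + C (((2 * k).choose k : ℂ) * lam) * X 0 ^ k * X 1 ^ k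
      + X 1 ^ (2 * k))
    (c a b : Fin k → ℂ)
    (hrep : f = ∑ j, C (c j) * lform (a j) (b j) ^ (2 * k)) :
    ∃ σ : Equiv.Perm (Fin k), ∀ j, ∃ t : ℂ, t ≠ 0 ∧
      a j = t ∧ b j = t * (mu * ζ ^ (σ j : ℕ)) := by
  obtain ⟨a', e, ha', he, ⟨x0, y0, hpt⟩, heq1, heq2⟩ :=
    rep_k_struct k hk lam hlam f hf c a b hrep
  have hek : e k ≠ 0 := by
    intro h
    have h0 : e 0 = 0 := by linear_combination heq1 - lam * h
    apply hpt; rw [← he x0 y0, h, h0]; ring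
  have he0' : e 0 = -(e k) * lam := by linear_combination heq1
  have hprod : ∀ x y : ℂ, ∏ j, (a' j * x - b j * y) = e k * (x^k - lam * y^k) := by
    intro x y; rw [← he x y, he0']; ring
  have hprodA' : ∏ j, a' j = e k := by
    have h1 := hprod 1 0
    have h2 : ∏ j, (a' j * 1 - b j * 0) = ∏ j, a' j :=
      Finset.prod_congr rfl fun j _ => by ring
    rw [h2] at h1
    rw [h1, one_pow, zero_pow (by omega : k ≠ 0)]
    ring
  have hbne : ∀ j, b j ≠ 0 := by
    have h1 := hprod 0 1
    have h4 : e k * ((0:ℂ)^k - lam * 1^k) ≠ 0 := by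
      rw [zero_pow (by omega : k ≠ 0), one_pow]
      intro hz
      rcases mul_eq_zero.mp hz with h | h
      · exact hek h
      · exact hlam (by linear_combination -h)
    intro j hbj
    apply h4
    rw [← h1]
    exact Finset.prod_eq_zero (Finset.mem_univ j) (by rw [hbj]; ring)
  have haa : ∀ j, a' j = a j := fun j => ha' j (Or.inr (hbne j))
  have hA : ∀ j, a j ≠ 0 := by
    intro j hja
    have : ∏ j, a' j = 0 :=
      Finset.prod_eq_zero (Finset.mem_univ j) (by rw [haa j, hja])
    rw [hprodA'] at this
    exact hek this
  have hprodA : ∏ j, a j = e k := by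
    rw [← hprodA']; exact Finset.prod_congr rfl fun j _ => (haa j).symm
  have hprod' : ∀ x : ℂ, ∏ j, (a j * x - b j) = e k * (x^k - lam) := by
    intro x
    have h2 : ∏ j, (a j * x - b j) = ∏ j, (a' j * x - b j * 1) :=
      Finset.prod_congr rfl fun j _ => by rw [haa j]; ring
    rw [h2, hprod x 1, one_pow, mul_one]
  have hP : (∏ j, (Polynomial.C (a j) * Polynomial.X - Polynomial.C (b j)))
      = Polynomial.C (e k) * (Polynomial.X ^ k - Polynomial.C lam) := by
    apply Polynomial.funext
    intro x
    simp only [Polynomial.eval_prod, Polynomial.eval_mul, Polynomial.eval_sub,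
      Polynomial.eval_pow, Polynomial.eval_C, Polynomial.eval_X]
    exact hprod' x
  have hQ : (Polynomial.X ^ k - Polynomial.C lam : Polynomial ℂ)
      = ∏ i ∈ range k, (Polynomial.X - Polynomial.C (ζ ^ i * mu)) :=
    X_pow_sub_C_eq_prod hprim (by omega) hmu
  have hPfac : (∏ j, (Polynomial.C (a j) * Polynomial.X - Polynomial.C (b j)))
      = Polynomial.C (∏ j, a j) * ∏ j, (Polynomial.X - Polynomial.C (b j / a j)) := by
    rw [map_prod, ← Finset.prod_mul_distrib]
    refine Finset.prod_congr rfl fun j _ => ?_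
    have hha : a j * (b j / a j) = b j := by
      rw [mul_comm, div_mul_cancel₀ _ (hA j)]
    rw [mul_sub, ← Polynomial.C_mul, hha]
  rw [hPfac, hprodA, hQ] at hP
  have hPQ : (∏ j, (Polynomial.X - Polynomial.C (b j / a j)))
      = ∏ i ∈ range k, (Polynomial.X - Polynomial.C (ζ ^ i * mu)) :=
    mul_left_cancel₀ (Polynomial.C_ne_zero.mpr hek) hP
  have hms : Multiset.map (fun j => b j / a j) univ.val
      = Multiset.map (fun i => ζ ^ i * mu) (Multiset.range k) := by
    have e1 : ∏ j, (Polynomial.X - Polynomial.C (b j / a j))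
        = (Multiset.map (fun u => Polynomial.X - Polynomial.C u)
            (Multiset.map (fun j => b j / a j) univ.val)).prod := by
      rw [Multiset.map_map, Finset.prod_eq_multiset_prod]
      rfl
    have e2 : ∏ i ∈ range k, (Polynomial.X - Polynomial.C (ζ ^ i * mu))
        = (Multiset.map (fun u => Polynomial.X - Polynomial.C u)
            (Multiset.map (fun i => ζ ^ i * mu) (Multiset.range k))).prod := by
      rw [Multiset.map_map, Finset.prod_eq_multiset_prod, Finset.range_val]
      rfl
    have h1 := congrArg Polynomial.roots (e1 ▸ e2 ▸ hPQ)
    rwa [Polynomial.roots_multiset_prod_X_sub_C, Polynomial.roots_multiset_prod_X_sub_C] at h1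
  have hmune : mu ≠ 0 := by
    intro h
    apply hlam
    rw [← hmu, h, zero_pow (by omega : k ≠ 0)]
  have hzinj : ∀ i1, i1 < k → ∀ i2, i2 < k → ζ ^ i1 * mu = ζ ^ i2 * mu → i1 = i2 := by
    intro i1 h1 i2 h2 hz
    exact hprim.pow_inj h1 h2 (mul_right_cancel₀ hmune hz)
  have hnodupT : (Multiset.map (fun i => ζ ^ i * mu) (Multiset.range k)).Nodup := by
    refine Multiset.Nodup.map_on ?_ (Multiset.nodup_range k)
    intro i1 h1 i2 h2 hz
    exact hzinj i1 (Multiset.mem_range.mp h1) i2 (Multiset.mem_range.mp h2) hz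
  have hnodupS : (Multiset.map (fun j => b j / a j) univ.val).Nodup := by
    rw [hms]; exact hnodupT
  have hwinj : ∀ j1 j2 : Fin k, b j1 / a j1 = b j2 / a j2 → j1 = j2 := by
    intro j1 j2 hw
    exact Multiset.inj_on_of_nodup_map hnodupS j1 (Finset.mem_val.mpr (mem_univ j1))
      j2 (Finset.mem_val.mpr (mem_univ j2)) hw
  have hmem : ∀ j : Fin k, ∃ i, i < k ∧ b j / a j = ζ ^ i * mu := by
    intro j
    have h1 : b j / a j ∈ Multiset.map (fun j => b j / a j) univ.val :=
      Multiset.mem_map_of_mem _ (Finset.mem_val.mpr (mem_univ j))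
    rw [hms] at h1
    obtain ⟨i, hi, hz⟩ := Multiset.mem_map.mp h1
    exact ⟨i, Multiset.mem_range.mp hi, hz.symm⟩
  choose iof hlt hwz using hmem
  have hσinj : Function.Injective (fun j : Fin k => (⟨iof j, hlt j⟩ : Fin k)) := by
    intro j1 j2 h
    have h' : iof j1 = iof j2 := congrArg Fin.val h
    apply hwinj
    rw [hwz j1, hwz j2, h']
  refine ⟨Equiv.ofBijective _ (Finite.injective_iff_bijective.mp hσinj), fun j => ⟨a j, hA j, rfl, ?_⟩⟩
  have h1 : b j = (ζ ^ (iof j) * mu) * a j := (div_eq_iff (hA j)).mp (hwz j)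
  show b j = a j * (mu * ζ ^ (iof j))
  linear_combination h1

end Aux

/-- Minimal complex representations of `f_λ = x^(2k) + (2k choose k) λ x^k y^k + y^(2k)`:
`f_λ = (1 - λ²) y^(2k) + (1/k) Σ_{i<k} (x + μ ζ_k^i y)^(2k)` where `μ^k = λ`; moreover
`L_ℂ(f_λ) = k` if `λ = ±1` (with this length-`k` representation unique up to order and
scaling) and `L_ℂ(f_λ) = k + 1` otherwise. -/
theorem complex_rank_flambda (k : ℕ) (hk : 1 ≤ k) (lam : ℂ) (hlam : lam ≠ 0)
    (mu : ℂ) (hmu : mu ^ k = lam)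
    (ζ : ℂ) (hζ : ζ = Complex.exp (2 * Real.pi * Complex.I / k))
    (f : MvPolynomial (Fin 2) ℂ)
    (hf : f = X 0 ^ (2 * k) + C (((2 * k).choose k : ℂ) * lam) * X 0 ^ k * X 1 ^ k
      + X 1 ^ (2 * k)) :
    f = C (1 - lam ^ 2) * X 1 ^ (2 * k)
        + C (1 / (k : ℂ)) * ∑ i ∈ range k, lform 1 (mu * ζ ^ i) ^ (2 * k) ∧
    ((lam = 1 ∨ lam = -1) → rankC (2 * k) f = k ∧
      ∀ c a b : Fin k → ℂ, f = ∑ j, C (c j) * lform (a j) (b j) ^ (2 * k) →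
        ∃ σ : Equiv.Perm (Fin k), ∀ j, ∃ t : ℂ, t ≠ 0 ∧
          a j = t ∧ b j = t * (mu * ζ ^ (σ j : ℕ))) ∧
    ((lam ≠ 1 ∧ lam ≠ -1) → rankC (2 * k) f = k + 1) := by
  have hk0 : k ≠ 0 := by omega
  have hprim : IsPrimitiveRoot ζ k := by
    rw [hζ]; exact Complex.isPrimitiveRoot_exp k hk0
  have hpart1 : f = C (1 - lam ^ 2) * X 1 ^ (2 * k)
      + C (1 / (k : ℂ)) * ∑ i ∈ range k, lform 1 (mu * ζ ^ i) ^ (2 * k) := by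
    rw [hf]; exact part1 k hk lam mu ζ hmu hprim
  refine ⟨hpart1, ?_, ?_⟩
  · intro hpm
    have hlam2 : lam ^ 2 = 1 := by rcases hpm with h | h <;> rw [h] <;> norm_num
    constructor
    · have hmemk : k ∈ {r : ℕ | ∃ lam' a b : Fin r → ℂ,
          f = ∑ j, C (lam' j) * lform (a j) (b j) ^ (2*k)} := by
        refine ⟨fun _ => 1/(k:ℂ), fun _ => 1, fun j => mu * ζ ^ (j:ℕ), ?_⟩
        rw [hpart1, show (1:ℂ) - lam^2 = 0 by rw [hlam2]; ring, map_zero, zero_mul, zero_add,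
          Finset.mul_sum]
        exact (Fin.sum_univ_eq_sum_range
          (fun i => C ((1:ℂ)/(k:ℂ)) * lform 1 (mu * ζ ^ i) ^ (2*k)) k).symm
      apply le_antisymm
      · exact Nat.sInf_le hmemk
      · refine le_csInf ⟨k, hmemk⟩ ?_
        intro r hr
        obtain ⟨c', a', b', hrep⟩ := hr
        by_contra hlt
        push_neg at hlt
        exact no_rep_lt k hk lam hlam f hf r hlt c' a' b' hrep
    · intro c a b hrep
      exact uniq_rep k hk lam hlam mu hmu ζ hprim f hf c a b hrep
  · rintro ⟨h1, h2⟩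
    have hlam2 : lam ^ 2 ≠ 1 := by
      intro h
      have hz : (lam - 1) * (lam + 1) = 0 := by linear_combination h
      rcases mul_eq_zero.mp hz with h' | h'
      · exact h1 (by linear_combination h')
      · exact h2 (by linear_combination h')
    have hmemk1 : (k+1) ∈ {r : ℕ | ∃ lam' a b : Fin r → ℂ,
        f = ∑ j, C (lam' j) * lform (a j) (b j) ^ (2*k)} := by
      refine ⟨Fin.cons (1 - lam^2) (fun _ => 1/(k:ℂ)), Fin.cons 0 (fun _ => 1),
        Fin.cons 1 (fun j => mu * ζ ^ (j:ℕ)), ?_⟩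
      rw [Fin.sum_univ_succ]
      simp only [Fin.cons_zero, Fin.cons_succ]
      rw [hpart1]
      congr 1
      · congr 1
        have : lform 0 1 = (X 1 : MvPolynomial (Fin 2) ℂ) := by simp [lform]
        rw [this]
      · rw [Finset.mul_sum]
        exact (Fin.sum_univ_eq_sum_range
          (fun i => C ((1:ℂ)/(k:ℂ)) * lform 1 (mu * ζ ^ i) ^ (2*k)) k).symm
    apply le_antisymm
    · exact Nat.sInf_le hmemk1
    · refine le_csInf ⟨k+1, hmemk1⟩ ?_
      intro r hr
      obtain ⟨c', a', b', hrep⟩ := hr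
      by_contra hlt
      push_neg at hlt
      rcases Nat.lt_or_ge r k with h | h
      · exact no_rep_lt k hk lam hlam f hf r h c' a' b' hrep
      · have hr' : r = k := by omega
        subst hr'
        obtain ⟨a'', e, _, he, ⟨x0, y0, hpt⟩, heq1, heq2⟩ :=
          rep_k_struct r hk lam hlam f hf c' a' b' hrep
        have hek : e r = 0 := by
          have hz : e r * (1 - lam^2) = 0 := by linear_combination heq2 - lam * heq1
          rcases mul_eq_zero.mp hz with h' | h'
          · exact h'
          · exact absurd (by linear_combination -h') hlam2
        have he0 : e 0 = 0 := by linear_combination heq1 - lam * hek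
        apply hpt
        rw [← he x0 y0, hek, he0]; ring
end

section
/- Let K ⊆ ℂ be a field, let d ≥ 5, and suppose f(x,y) = λ_1(α_1 x + β_1 y)^d + λ_2 x^d + λ_3 y^d ∈ K[x,y], where λ_1, λ_2, λ_3, α_1, β_1 ∈ ℂ are all nonzero. Then L_K(f) = 3, and this is the projectively unique representation of f of length 3 (any representation of f as a K-linear combination of three d-th powers of linear forms uses the same three linear forms up to scaling). -/
open MvPolynomial Finset

noncomputable def Dop (q : ℂ × ℂ) (p : MvPolynomial (Fin 2) ℂ) : MvPolynomial (Fin 2) ℂ :=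
  C q.2 * pderiv 0 p - C q.1 * pderiv 1 p
lemma Dop_sum {ι : Type*} (q : ℂ × ℂ) (s : Finset ι) (g : ι → MvPolynomial (Fin 2) ℂ) :
    Dop q (∑ j ∈ s, g j) = ∑ j ∈ s, Dop q (g j) := by
  simp only [Dop, map_sum, Finset.mul_sum, ← Finset.sum_sub_distrib]
lemma Dop_C_mul (q : ℂ × ℂ) (c : ℂ) (p : MvPolynomial (Fin 2) ℂ) :
    Dop q (C c * p) = C c * Dop q p := by
  simp only [Dop, pderiv_C_mul]; ring
lemma Dop_zero (q : ℂ × ℂ) : Dop q 0 = 0 := by simp [Dop]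
lemma pderiv_lform0 (a b : ℂ) : pderiv 0 (lform a b) = C a := by simp [lform]
lemma pderiv_lform1 (a b : ℂ) : pderiv 1 (lform a b) = C b := by simp [lform]
lemma Dop_lform_pow (q : ℂ × ℂ) (a b : ℂ) (m : ℕ) :
    Dop q (lform a b ^ m) = C ((m : ℂ) * (q.2 * a - q.1 * b)) * lform a b ^ (m - 1) := by
  have hm' : ((m : MvPolynomial (Fin 2) ℂ)) = C (m : ℂ) := by simp
  rw [Dop, pderiv_pow, pderiv_pow, pderiv_lform0, pderiv_lform1, hm']
  rw [C_mul, C_sub, C_mul, C_mul]; ring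

noncomputable def DL : List (ℂ × ℂ) → MvPolynomial (Fin 2) ℂ → MvPolynomial (Fin 2) ℂ
  | [], p => p
  | q :: L, p => Dop q (DL L p)

lemma DL_sum {ι : Type*} (L : List (ℂ × ℂ)) (s : Finset ι) (g : ι → MvPolynomial (Fin 2) ℂ) :
    DL L (∑ j ∈ s, g j) = ∑ j ∈ s, DL L (g j) := by
  induction L with
  | nil => rfl
  | cons q L ih => simp only [DL, ih, Dop_sum]

lemma DL_C_mul (L : List (ℂ × ℂ)) (c : ℂ) (p : MvPolynomial (Fin 2) ℂ) :
    DL L (C c * p) = C c * DL L p := by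
  induction L with
  | nil => rfl
  | cons q L ih => simp only [DL, ih, Dop_C_mul]

lemma DL_zero (L : List (ℂ × ℂ)) : DL L 0 = 0 := by
  induction L with
  | nil => rfl
  | cons q L ih => simp only [DL, ih, Dop_zero]

lemma DL_lform_pow (L : List (ℂ × ℂ)) (a b : ℂ) {d : ℕ} (hL : L.length ≤ d) :
    ∃ s : ℂ, s ≠ 0 ∧ DL L (lform a b ^ d) =
      C (s * (L.map (fun q => q.2 * a - q.1 * b)).prod) * lform a b ^ (d - L.length) := by
  induction L with
  | nil => exact ⟨1, one_ne_zero, by simp [DL]⟩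
  | cons q L ih =>
    have hlen : L.length + 1 ≤ d := by simpa using hL
    obtain ⟨s, hs, hEq⟩ := ih (by omega)
    set m := d - L.length with hm
    have hm1 : 1 ≤ m := by omega
    refine ⟨s * m, mul_ne_zero hs (Nat.cast_ne_zero.2 (by omega)), ?_⟩
    show Dop q (DL L (lform a b ^ d)) = _
    rw [hEq, Dop_C_mul, Dop_lform_pow]
    rw [← mul_assoc, ← C_mul]
    have hexp : d - (q :: L).length = m - 1 := by simp only [List.length_cons, hm]; omega
    rw [hexp, List.map_cons, List.prod_cons]
    congr 1
    exact congrArg C (by ring)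

lemma eval_lform (z : Fin 2 → ℂ) (a b : ℂ) : eval z (lform a b) = a * z 0 + b * z 1 := by
  simp [lform]

lemma conj_pos_ne (a b : ℂ) (hab : ¬(a = 0 ∧ b = 0)) : a * star a + b * star b ≠ 0 := by
  intro h
  simp only [Complex.star_def, Complex.mul_conj] at h
  rw [← Complex.ofReal_add] at h
  have h' : Complex.normSq a + Complex.normSq b = 0 := by exact_mod_cast h
  have h1 : Complex.normSq a = 0 := by
    have := Complex.normSq_nonneg a
    have := Complex.normSq_nonneg b
    linarith
  have h2 : Complex.normSq b = 0 := by
    have := Complex.normSq_nonneg a; linarith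
  exact hab ⟨Complex.normSq_eq_zero.mp h1, Complex.normSq_eq_zero.mp h2⟩

lemma extract {ι : Type*} [Fintype ι] {d : ℕ} (hd1 : 1 ≤ d) (c : ι → ℂ) (v : ι → ℂ × ℂ)
    (hsum : (∑ j, C (c j) * lform (v j).1 (v j).2 ^ d) = 0)
    (L : List (ℂ × ℂ)) (hL : L.length ≤ d)
    (i₀ : ι) (hv : v i₀ ≠ 0)
    (hnk : ∀ q ∈ L, q.2 * (v i₀).1 - q.1 * (v i₀).2 ≠ 0)
    (hoth : ∀ j, j ≠ i₀ → (∃ q ∈ L, q.2 * (v j).1 - q.1 * (v j).2 = 0) ∨ c j = 0 ∨ v j = 0) :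
    c i₀ = 0 := by
  classical
  set z : Fin 2 → ℂ := ![star (v i₀).1, star (v i₀).2] with hz
  have hTsum : ∑ j, eval z (DL L (C (c j) * lform (v j).1 (v j).2 ^ d)) = 0 := by
    rw [← map_sum, ← DL_sum, hsum, DL_zero, map_zero]
  have hterm : ∀ j ∈ (univ : Finset ι), j ≠ i₀ →
      eval z (DL L (C (c j) * lform (v j).1 (v j).2 ^ d)) = 0 := by
    intro j _ hj
    rcases hoth j hj with ⟨q, hqL, hq⟩ | hc | hv0
    · obtain ⟨s, hs, hDL⟩ := DL_lform_pow L (v j).1 (v j).2 hL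
      rw [DL_C_mul, hDL]
      have hzero : (L.map fun q => q.2 * (v j).1 - q.1 * (v j).2).prod = 0 :=
        List.prod_eq_zero (List.mem_map.2 ⟨q, hqL, hq⟩)
      rw [hzero]
      simp
    · rw [hc]; simp [DL_C_mul, DL_zero]
    · have h1 : lform (v j).1 (v j).2 = 0 := by rw [hv0]; simp [lform]
      rw [h1, zero_pow (by omega : d ≠ 0), mul_zero, DL_zero, map_zero]
  have hmain : eval z (DL L (C (c i₀) * lform (v i₀).1 (v i₀).2 ^ d)) = 0 := by
    rwa [Finset.sum_eq_single_of_mem i₀ (mem_univ i₀) hterm] at hTsum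
  obtain ⟨s, hs, hDL⟩ := DL_lform_pow L (v i₀).1 (v i₀).2 hL
  rw [DL_C_mul, hDL] at hmain
  rw [map_mul, map_mul, eval_C, eval_C, map_pow, eval_lform] at hmain
  have hE : (v i₀).1 * z 0 + (v i₀).2 * z 1 ≠ 0 := by
    have : z 0 = star (v i₀).1 := by simp [hz]
    have h2 : z 1 = star (v i₀).2 := by simp [hz]
    rw [this, h2]
    refine conj_pos_ne _ _ ?_
    rintro ⟨h1', h2'⟩
    exact hv (Prod.ext h1' h2')
  have hprod : (L.map fun q => q.2 * (v i₀).1 - q.1 * (v i₀).2).prod ≠ 0 := by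
    refine List.prod_ne_zero ?_
    intro h0
    obtain ⟨q, hqL, hq⟩ := List.mem_map.1 h0
    exact hnk q hqL hq
  rcases mul_eq_zero.mp hmain with h | h
  · exact h
  · exact absurd h (mul_ne_zero (mul_ne_zero hs hprod) (pow_ne_zero _ hE))

lemma pair_cases (p : ℂ × ℂ) (hp : p ≠ 0) : p.1 ≠ 0 ∨ p.2 ≠ 0 := by
  by_contra h
  push_neg at h
  exact hp (Prod.ext h.1 h.2)

lemma cross_trans {p q r : ℂ × ℂ} (hp : p ≠ 0)
    (h1 : p.2 * q.1 - p.1 * q.2 = 0) (h2 : p.2 * r.1 - p.1 * r.2 = 0) :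
    q.2 * r.1 - q.1 * r.2 = 0 := by
  have hA : (q.2 * r.1 - q.1 * r.2) * p.1 = 0 := by linear_combination (-r.1) * h1 + q.1 * h2
  have hB : (q.2 * r.1 - q.1 * r.2) * p.2 = 0 := by linear_combination (-r.2) * h1 + q.2 * h2
  rcases pair_cases p hp with h | h
  · exact (mul_eq_zero.mp hA).resolve_right h
  · exact (mul_eq_zero.mp hB).resolve_right h

lemma prop_scalar (p q : ℂ × ℂ) (hp : p ≠ 0) (hq : q ≠ 0)
    (hcross : p.2 * q.1 - p.1 * q.2 = 0) :
    ∃ c : ℂ, c ≠ 0 ∧ p.1 = c * q.1 ∧ p.2 = c * q.2 := by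
  rcases pair_cases q hq with h | h
  · refine ⟨p.1 / q.1, ?_, by field_simp, by rw [div_mul_eq_mul_div, eq_div_iff h]; linear_combination hcross⟩
    intro hc
    rw [div_eq_zero_iff] at hc
    have h1 : p.1 = 0 := hc.resolve_right h
    have h2 : p.2 = 0 := by
      have h3 : p.2 * q.1 = 0 := by linear_combination hcross + q.2 * h1
      exact (mul_eq_zero.mp h3).resolve_right h
    exact hp (Prod.ext h1 h2)
  · refine ⟨p.2 / q.2, ?_, by rw [div_mul_eq_mul_div, eq_div_iff h]; linear_combination -hcross, by field_simp⟩
    intro hc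
    rw [div_eq_zero_iff] at hc
    have h2 : p.2 = 0 := hc.resolve_right h
    have h1 : p.1 = 0 := by
      have h3 : p.1 * q.2 = 0 := by linear_combination -hcross + q.1 * h2
      exact (mul_eq_zero.mp h3).resolve_right h
    exact hp (Prod.ext h1 h2)

lemma fin3_facts : ∀ i : Fin 3, i + 1 ≠ i ∧ i + 2 ≠ i ∧
    ∀ k : Fin 3, k ≠ i → k = i + 1 ∨ k = i + 2 := by decide

lemma match_aux {d : ℕ} (hd : 5 ≤ d) (lam : Fin 3 → ℂ) (hlam : ∀ i, lam i ≠ 0)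
    (P : Fin 3 → ℂ × ℂ) (hP0 : ∀ i, P i ≠ 0)
    (hPnp : ∀ i i', i ≠ i' → (P i).2 * (P i').1 - (P i).1 * (P i').2 ≠ 0)
    {m : ℕ} (hm : m ≤ 3) (μ : Fin m → ℂ) (w : Fin m → ℂ × ℂ)
    (hrep : ∑ i, C (lam i) * lform (P i).1 (P i).2 ^ d
          = ∑ j, C (μ j) * lform (w j).1 (w j).2 ^ d) :
    ∀ i, ∃ j, w j ≠ 0 ∧ (w j).2 * (P i).1 - (w j).1 * (P i).2 = 0 := by
  intro i
  by_contra hcon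
  push_neg at hcon
  set c : Fin 3 ⊕ Fin m → ℂ := Sum.elim lam (fun j => -μ j) with hc
  set v : Fin 3 ⊕ Fin m → ℂ × ℂ := Sum.elim P w with hvdef
  have hsum : (∑ x : Fin 3 ⊕ Fin m, C (c x) * lform (v x).1 (v x).2 ^ d) = 0 := by
    rw [Fintype.sum_sum_type]
    simp only [hc, hvdef, Sum.elim_inl, Sum.elim_inr, map_neg, neg_mul]
    rw [Finset.sum_neg_distrib, ← hrep, add_neg_cancel]
  set L : List (ℂ × ℂ) :=
    [P (i+1), P (i+2)] ++ List.ofFn (fun j : Fin m => if w j = 0 then P (i+1) else w j) with hLdef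
  have hi1 : (i + 1 : Fin 3) ≠ i := (fin3_facts i).1
  have hi2 : (i + 2 : Fin 3) ≠ i := (fin3_facts i).2.1
  have hlen : L.length ≤ d := by
    have : L.length = 2 + m := by simp [hLdef]; omega
    omega
  have hext := extract (ι := Fin 3 ⊕ Fin m) (by omega : 1 ≤ d) c v hsum L hlen (Sum.inl i)
    (by simpa [hvdef] using hP0 i) ?_ ?_
  · simp only [hc, Sum.elim_inl] at hext
    exact hlam i hext
  · -- hnk
    intro q hq
    simp only [hvdef, Sum.elim_inl]
    rw [hLdef, List.mem_append] at hq
    rcases hq with hq | hq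
    · rcases List.mem_cons.mp hq with rfl | hq
      · exact hPnp (i+1) i hi1
      · rcases List.mem_cons.mp hq with rfl | hq
        · exact hPnp (i+2) i hi2
        · simp at hq
    · rw [List.mem_ofFn] at hq
      obtain ⟨j, hj⟩ := hq
      have hj' : (if w j = 0 then P (i+1) else w j) = q := hj
      by_cases h0 : w j = 0
      · rw [if_pos h0] at hj'
        rw [← hj']
        exact hPnp (i+1) i hi1
      · rw [if_neg h0] at hj'
        rw [← hj']
        exact hcon j h0
  · -- hoth
    rintro (k | j) hx
    · left
      have hk : k ≠ i := fun h => hx (by rw [h])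
      have hk' : k = i + 1 ∨ k = i + 2 := (fin3_facts i).2.2 k hk
      refine ⟨P k, ?_, by simp [hvdef]; ring⟩
      rw [hLdef, List.mem_append]
      left
      rcases hk' with rfl | rfl
      · exact List.mem_cons_self
      · exact List.mem_cons_of_mem _ List.mem_cons_self
    · by_cases h0 : w j = 0
      · right; right
        simpa [hvdef] using h0
      · left
        refine ⟨w j, ?_, by simp [hvdef]; ring⟩
        rw [hLdef, List.mem_append]
        right
        rw [List.mem_ofFn]
        exact ⟨j, by simp [h0]⟩

lemma match_inj {d : ℕ} (hd : 5 ≤ d) (lam : Fin 3 → ℂ) (hlam : ∀ i, lam i ≠ 0)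
    (P : Fin 3 → ℂ × ℂ) (hP0 : ∀ i, P i ≠ 0)
    (hPnp : ∀ i i', i ≠ i' → (P i).2 * (P i').1 - (P i).1 * (P i').2 ≠ 0)
    {m : ℕ} (hm : m ≤ 3) (μ : Fin m → ℂ) (w : Fin m → ℂ × ℂ)
    (hrep : ∑ i, C (lam i) * lform (P i).1 (P i).2 ^ d
          = ∑ j, C (μ j) * lform (w j).1 (w j).2 ^ d) :
    ∃ g : Fin 3 → Fin m, Function.Injective g ∧
      ∀ i, w (g i) ≠ 0 ∧ (w (g i)).2 * (P i).1 - (w (g i)).1 * (P i).2 = 0 := by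
  have h := match_aux hd lam hlam P hP0 hPnp hm μ w hrep
  choose g hg1 hg2 using h
  refine ⟨g, ?_, fun i => ⟨hg1 i, hg2 i⟩⟩
  intro i i' hgi
  by_contra hne
  have h1 := hg2 i
  have h2 := hg2 i'
  rw [hgi] at h1
  exact hPnp i i' hne (cross_trans (hg1 i') h1 h2)

lemma fin2_single_add_eq {m n m' n' : ℕ} :
    (Finsupp.single (0 : Fin 2) m + Finsupp.single 1 n
      = Finsupp.single 0 m' + Finsupp.single 1 n') ↔ (m = m' ∧ n = n') := by
  constructor
  · intro h
    have h0 := DFunLike.congr_fun h 0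
    have h1 := DFunLike.congr_fun h 1
    simp only [Finsupp.add_apply, Finsupp.single_eq_same,
      Finsupp.single_eq_of_ne (show (1 : Fin 2) ≠ 0 by decide),
      Finsupp.single_eq_of_ne (show (0 : Fin 2) ≠ 1 by decide), add_zero, zero_add] at h0 h1
    exact ⟨h0, h1⟩
  · rintro ⟨rfl, rfl⟩; rfl

lemma lform_pow_expand (a b : ℂ) (d : ℕ) :
    lform a b ^ d = ∑ j ∈ range (d + 1),
      monomial (Finsupp.single 0 j + Finsupp.single 1 (d - j))
        (a ^ j * b ^ (d - j) * (d.choose j : ℂ)) := by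
  rw [lform, add_pow]
  refine Finset.sum_congr rfl fun j hj => ?_
  have h1 : (C a * X 0 : MvPolynomial (Fin 2) ℂ) ^ j
      = monomial (Finsupp.single 0 j) (a ^ j) := by
    rw [mul_pow, ← map_pow, C_mul_X_pow_eq_monomial]
  have h2 : (C b * X 1 : MvPolynomial (Fin 2) ℂ) ^ (d - j)
      = monomial (Finsupp.single 1 (d - j)) (b ^ (d - j)) := by
    rw [mul_pow, ← map_pow, C_mul_X_pow_eq_monomial]
  have h3 : ((d.choose j : ℕ) : MvPolynomial (Fin 2) ℂ)
      = monomial 0 ((d.choose j : ℕ) : ℂ) := by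
    rw [← C_apply]; simp
  rw [h1, h2, h3, monomial_mul, monomial_mul, add_zero]

lemma lform_pow_coeff (a b : ℂ) (d k : ℕ) (hk : k ≤ d) :
    coeff (Finsupp.single 0 (d - k) + Finsupp.single 1 k) (lform a b ^ d)
      = (d.choose k : ℂ) * a ^ (d - k) * b ^ k := by
  rw [lform_pow_expand, coeff_sum]
  rw [Finset.sum_eq_single (d - k)]
  · have e : d - (d - k) = k := by omega
    rw [coeff_monomial, if_pos (by rw [e]), e, Nat.choose_symm hk]
    ring
  · intro j hj hne
    rw [coeff_monomial, if_neg]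
    intro hEq
    rw [fin2_single_add_eq] at hEq
    exact hne hEq.1
  · intro h
    exact absurd (Finset.mem_range.2 (by omega)) h

/-- If `f = λ₁(α₁x + β₁y)^d + λ₂x^d + λ₃y^d ∈ K[x,y]` with all of `λᵢ, α₁, β₁` nonzero
and `d ≥ 5`, then `L_K(f) = 3` and this representation of length 3 is projectively
unique: any `K`-linear combination of three `d`-th powers of linear forms over `K`
equal to `f` uses the same three linear forms up to scaling. -/
theorem rank_three_unique (K : Subfield ℂ) (d : ℕ) (hd : 5 ≤ d)
    (l₁ l₂ l₃ a₁ b₁ : ℂ) (hl₁ : l₁ ≠ 0) (hl₂ : l₂ ≠ 0) (hl₃ : l₃ ≠ 0)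
    (ha₁ : a₁ ≠ 0) (hb₁ : b₁ ≠ 0)
    (f : MvPolynomial (Fin 2) ℂ)
    (hf : f = C l₁ * lform a₁ b₁ ^ d + C l₂ * X 0 ^ d + C l₃ * X 1 ^ d)
    (hfK : ∀ m, f.coeff m ∈ K) :
    rankIn K d f = 3 ∧
    ∀ mu a b : Fin 3 → ℂ, (∀ j, mu j ∈ K ∧ a j ∈ K ∧ b j ∈ K) →
      f = ∑ j, C (mu j) * lform (a j) (b j) ^ d →
      ∃ σ : Equiv.Perm (Fin 3), ∀ j, ∃ c : ℂ, c ≠ 0 ∧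
        a j = c * ![a₁, 1, 0] (σ j) ∧ b j = c * ![b₁, 0, 1] (σ j) := by
  classical
  set P : Fin 3 → ℂ × ℂ := fun i => (![a₁, 1, 0] i, ![b₁, 0, 1] i) with hPdef
  set lamv : Fin 3 → ℂ := ![l₁, l₂, l₃] with hlamdef
  have hlam : ∀ i, lamv i ≠ 0 := by
    intro i; fin_cases i <;> simpa [hlamdef]
  have hP0 : ∀ i, P i ≠ 0 := by
    intro i
    fin_cases i <;> simp [hPdef, Prod.ext_iff] <;> tauto
  have hPnp : ∀ i i', i ≠ i' → (P i).2 * (P i').1 - (P i).1 * (P i').2 ≠ 0 := by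
    intro i i' hne
    fin_cases i <;> fin_cases i' <;> simp_all [hPdef, sub_eq_zero]
  have hfP : f = ∑ i, C (lamv i) * lform (P i).1 (P i).2 ^ d := by
    rw [Fin.sum_univ_three, hf]
    simp [hPdef, hlamdef, lform]
  -- coefficients of f
  have hco : ∀ k, k ≤ d → coeff (Finsupp.single 0 (d - k) + Finsupp.single 1 k) f =
      l₁ * ((d.choose k : ℂ) * a₁ ^ (d - k) * b₁ ^ k)
      + (if k = 0 then l₂ else 0) + (if k = d then l₃ else 0) := by
    intro k hk
    have e1 : (Finsupp.single (0 : Fin 2) d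
        = Finsupp.single 0 (d - k) + Finsupp.single 1 k) ↔ (k = 0) := by
      rw [show (Finsupp.single (0 : Fin 2) d)
          = Finsupp.single (0 : Fin 2) d + Finsupp.single 1 0 by simp,
        fin2_single_add_eq]
      omega
    have e2 : (Finsupp.single (1 : Fin 2) d
        = Finsupp.single 0 (d - k) + Finsupp.single 1 k) ↔ (k = d) := by
      rw [show (Finsupp.single (1 : Fin 2) d)
          = Finsupp.single (0 : Fin 2) 0 + Finsupp.single 1 d by simp,
        fin2_single_add_eq]
      omega
    rw [hf, coeff_add, coeff_add, coeff_C_mul, coeff_C_mul, coeff_C_mul,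
      lform_pow_coeff _ _ _ _ hk, X_pow_eq_monomial, X_pow_eq_monomial,
      coeff_monomial, coeff_monomial]
    rw [if_congr e1 rfl rfl, if_congr e2 rfl rfl, mul_ite, mul_ite, mul_one, mul_zero,
      mul_one, mul_zero]
    try ring
  have hd0 : (d : ℂ) ≠ 0 := Nat.cast_ne_zero.2 (by omega)
  have hch2 : ((d.choose 2 : ℕ) : ℂ) ≠ 0 :=
    Nat.cast_ne_zero.2 (Nat.choose_pos (by omega)).ne'
  have hdK : ((d : ℕ) : ℂ) ∈ K := natCast_mem K d
  have hch2K : ((d.choose 2 : ℕ) : ℂ) ∈ K := natCast_mem K (d.choose 2)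
  -- u = l₁ a₁^{d-1} b₁ ∈ K
  have hc1 := hfK (Finsupp.single 0 (d - 1) + Finsupp.single 1 1)
  rw [hco 1 (by omega), if_neg one_ne_zero, if_neg (by omega), add_zero, add_zero,
    Nat.choose_one_right] at hc1
  have hu : l₁ * a₁ ^ (d - 1) * b₁ ∈ K := by
    have heq : l₁ * a₁ ^ (d - 1) * b₁ = (l₁ * ((d : ℂ) * a₁ ^ (d - 1) * b₁ ^ 1)) / (d : ℂ) := by
      field_simp
    rw [heq]; exact div_mem hc1 hdK
  have hune : l₁ * a₁ ^ (d - 1) * b₁ ≠ 0 :=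
    mul_ne_zero (mul_ne_zero hl₁ (pow_ne_zero _ ha₁)) hb₁
  -- t = l₁ a₁^{d-2} b₁² ∈ K
  have hc2 := hfK (Finsupp.single 0 (d - 2) + Finsupp.single 1 2)
  rw [hco 2 (by omega), if_neg (by omega), if_neg (by omega), add_zero, add_zero] at hc2
  have ht : l₁ * a₁ ^ (d - 2) * b₁ ^ 2 ∈ K := by
    have heq : l₁ * a₁ ^ (d - 2) * b₁ ^ 2
        = (l₁ * ((d.choose 2 : ℂ) * a₁ ^ (d - 2) * b₁ ^ 2)) / (d.choose 2 : ℂ) := by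
      field_simp
    rw [heq]; exact div_mem hc2 hch2K
  have htne : l₁ * a₁ ^ (d - 2) * b₁ ^ 2 ≠ 0 :=
    mul_ne_zero (mul_ne_zero hl₁ (pow_ne_zero _ ha₁)) (pow_ne_zero _ hb₁)
  -- A = a₁ / b₁ ∈ K
  have hpa : a₁ ^ (d - 1) = a₁ ^ (d - 2) * a₁ := by
    rw [← pow_succ]; congr 1; omega
  have hAeq : a₁ / b₁ = (l₁ * a₁ ^ (d - 1) * b₁) / (l₁ * a₁ ^ (d - 2) * b₁ ^ 2) := by
    rw [hpa]; field_simp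
  have hA : a₁ / b₁ ∈ K := by rw [hAeq]; exact div_mem hu ht
  have hAne : a₁ / b₁ ≠ 0 := div_ne_zero ha₁ hb₁
  -- lamK = l₁ b₁^d ∈ K
  have hpb : b₁ ^ d = b₁ ^ (d - 1) * b₁ := by
    rw [← pow_succ]; congr 1; omega
  have hlamKeq : l₁ * b₁ ^ d = (l₁ * a₁ ^ (d - 1) * b₁) / ((a₁ / b₁) ^ (d - 1)) := by
    rw [div_pow, hpb, div_div_eq_mul_div, eq_div_iff (pow_ne_zero _ ha₁)]
    ring
  have hlamK : l₁ * b₁ ^ d ∈ K := by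
    rw [hlamKeq]; exact div_mem hu (pow_mem hA _)
  -- l₂ ∈ K
  have hc0 := hfK (Finsupp.single 0 (d - 0) + Finsupp.single 1 0)
  rw [hco 0 (by omega), if_pos rfl, if_neg (by omega), add_zero, Nat.choose_zero_right,
    Nat.cast_one, one_mul, pow_zero, mul_one] at hc0
  have hfirst : l₁ * a₁ ^ (d - 0) = (l₁ * b₁ ^ d) * (a₁ / b₁) ^ d := by
    rw [Nat.sub_zero, div_pow]; field_simp
  have hl₂K : l₂ ∈ K := by
    have : l₂ = (l₁ * a₁ ^ (d - 0) + l₂) - (l₁ * b₁ ^ d) * (a₁ / b₁) ^ d := by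
      rw [← hfirst]; ring
    rw [this]
    exact sub_mem hc0 (mul_mem hlamK (pow_mem hA d))
  -- l₃ ∈ K
  have hcd := hfK (Finsupp.single 0 (d - d) + Finsupp.single 1 d)
  rw [hco d (le_refl d), if_neg (by omega), if_pos rfl, add_zero, Nat.choose_self,
    Nat.cast_one, one_mul, Nat.sub_self, pow_zero, one_mul] at hcd
  have hl₃K : l₃ ∈ K := by
    have : l₃ = (l₁ * b₁ ^ d + l₃) - l₁ * b₁ ^ d := by ring
    rw [this]
    exact sub_mem hcd hlamK
  -- upper bound: 3 is in the set
  have h3mem : 3 ∈ {r : ℕ | ∃ lam a b : Fin r → ℂ,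
      (∀ j, lam j ∈ K ∧ a j ∈ K ∧ b j ∈ K) ∧
      f = ∑ j, C (lam j) * lform (a j) (b j) ^ d} := by
    refine ⟨![l₁ * b₁ ^ d, l₂, l₃], ![a₁ / b₁, 1, 0], ![1, 0, 1], ?_, ?_⟩
    · intro j
      fin_cases j <;>
        exact ⟨by assumption, by first | exact hA | exact K.one_mem | exact K.zero_mem,
          by first | exact K.one_mem | exact K.zero_mem⟩
    · rw [Fin.sum_univ_three, hf]
      simp only [Matrix.cons_val_zero, Matrix.cons_val_one, Matrix.head_cons,
        Matrix.cons_val_two, Matrix.tail_cons]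
      have hlf : lform a₁ b₁ = C b₁ * lform (a₁ / b₁) 1 := by
        rw [lform, lform, mul_add, ← mul_assoc, ← C_mul]
        rw [mul_div_cancel₀ _ hb₁]
        rw [map_one, one_mul]
      have h10 : lform 1 0 = (X 0 : MvPolynomial (Fin 2) ℂ) := by simp [lform]
      have h01 : lform 0 1 = (X 1 : MvPolynomial (Fin 2) ℂ) := by simp [lform]
      rw [h10, h01, hlf, mul_pow, ← map_pow, ← mul_assoc, ← C_mul]
  -- the set and lower bound
  have hlow : ∀ r ∈ {r : ℕ | ∃ lam a b : Fin r → ℂ,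
      (∀ j, lam j ∈ K ∧ a j ∈ K ∧ b j ∈ K) ∧
      f = ∑ j, C (lam j) * lform (a j) (b j) ^ d}, 3 ≤ r := by
    intro r hr
    by_contra hlt
    push_neg at hlt
    obtain ⟨lam', av, bv, _, hEq⟩ := hr
    obtain ⟨g, hginj, hg⟩ := match_inj hd lamv hlam P hP0 hPnp
      (show r ≤ 3 by omega) lam' (fun j => (av j, bv j)) (hfP.symm.trans hEq)
    have hcard := Fintype.card_le_of_injective g hginj
    simp only [Fintype.card_fin] at hcard
    omega
  constructor
  · exact le_antisymm (Nat.sInf_le h3mem) (le_csInf ⟨3, h3mem⟩ hlow)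
  · intro mu av bv hKmem hEq
    obtain ⟨g, hginj, hg⟩ := match_inj hd lamv hlam P hP0 hPnp (le_refl 3) mu
      (fun j => (av j, bv j)) (hfP.symm.trans hEq)
    have hgbij : Function.Bijective g := Finite.injective_iff_bijective.mp hginj
    set e := Equiv.ofBijective g hgbij with hedef
    refine ⟨e.symm, ?_⟩
    intro j
    have hj : g (e.symm j) = j := e.apply_symm_apply j
    obtain ⟨hw0, hcross⟩ := hg (e.symm j)
    rw [hj] at hw0 hcross
    obtain ⟨cc, hcc, h1, h2⟩ := prop_scalar (av j, bv j) (P (e.symm j)) hw0 (hP0 _) hcross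
    exact ⟨cc, hcc, h1, h2⟩
end
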